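/- arXiv:2403.16109 — 8 statements merged into one kernel-verified Lean document; each statement's English description precedes it below -/
import Mathlib

section
/- Let L be a monomial ideal of the polynomial ring S = K[x_1,…,x_n] over a field K. Then the integral closure of L is the monomial ideal generated by all monomials x^α such that α lies in conv(log L) ∩ ℤ_{≥0}^n, where log L ⊆ ℤ_{≥0}^n is the set of exponent vectors of all monomials belonging to L and conv(log L) denotes its convex hull (taken with nonnegative rational coefficients). -/
open MvPolynomial

/-- `f` is integral over the ideal `I`: it satisfies an equation
`f^k + c₁ f^(k-1) + ⋯ + c_k = 0` with `c_j ∈ I^j`. -/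
def Ideal.IsIntegralElemOver {R : Type*} [CommRing R] (I : Ideal R) (f : R) : Prop :=
  ∃ k : ℕ, 0 < k ∧ ∃ c : ℕ → R, (∀ j, 1 ≤ j → j ≤ k → c j ∈ I ^ j) ∧
    f ^ k + ∑ j ∈ Finset.Icc 1 k, c j * f ^ (k - j) = 0

/-- The integral closure of an ideal `I`, the ideal of all elements integral over `I`. -/
def Ideal.intClosure {R : Type*} [CommRing R] (I : Ideal R) : Ideal R :=
  Ideal.span {f | I.IsIntegralElemOver f}

section Farkas

variable {ι : Type}

/-- Index type for the Fourier-Motzkin eliminated system. -/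
def ElimIdx (ι : Type) (al : ι → ℚ) : Type :=
  {i : ι // al i = 0} ⊕ {pq : ι × ι // 0 < al pq.1 ∧ al pq.2 < 0}

noncomputable instance (al : ι → ℚ) [Fintype ι] : Fintype (ElimIdx ι al) := by
  unfold ElimIdx
  classical
  infer_instance

open scoped Classical in
/-- Row-combination coefficients for Fourier-Motzkin elimination. -/
noncomputable def Tmat (al : ι → ℚ) : ElimIdx ι al → ι → ℚ
  | Sum.inl z => fun i => if z.1 = i then 1 else 0
  | Sum.inr pq => fun i =>
      (if pq.1.1 = i then -al pq.1.2 else 0) + (if pq.1.2 = i then al pq.1.1 else 0)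

lemma Tmat_nonneg (al : ι → ℚ) (z : ElimIdx ι al) (i : ι) : 0 ≤ Tmat al z i := by
  rcases z with z | pq
  · simp only [Tmat]; split <;> norm_num
  · simp only [Tmat]
    have h1 := pq.2.1
    have h2 := pq.2.2
    apply add_nonneg
    · split <;> linarith
    · split <;> linarith

lemma Tmat_comb_inl [Fintype ι] (al : ι → ℚ) (z : {i : ι // al i = 0}) (g : ι → ℚ) :
    ∑ i, Tmat al (Sum.inl z) i * g i = g z.1 := by
  classical
  have h2 : ∀ i ∈ Finset.univ, Tmat al (Sum.inl z) i * g i = if z.1 = i then g i else 0 := by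
    intro i _
    simp only [Tmat]
    rw [ite_mul, zero_mul, one_mul]
  rw [Finset.sum_congr rfl h2, Finset.sum_ite_eq Finset.univ z.1 g]
  simp

lemma Tmat_comb_inr [Fintype ι] (al : ι → ℚ)
    (pq : {pq : ι × ι // 0 < al pq.1 ∧ al pq.2 < 0}) (g : ι → ℚ) :
    ∑ i, Tmat al (Sum.inr pq) i * g i = -al pq.1.2 * g pq.1.1 + al pq.1.1 * g pq.1.2 := by
  classical
  have h2 : ∀ i ∈ Finset.univ,
      Tmat al (Sum.inr pq) i * g i
      = (if pq.1.1 = i then -al pq.1.2 * g i else 0) + (if pq.1.2 = i then al pq.1.1 * g i else 0) := by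
    intro i _
    simp only [Tmat]
    rw [add_mul, ite_mul, zero_mul, ite_mul, zero_mul]
  rw [Finset.sum_congr rfl h2, Finset.sum_add_distrib,
    Finset.sum_ite_eq Finset.univ pq.1.1 (fun i => -al pq.1.2 * g i),
    Finset.sum_ite_eq Finset.univ pq.1.2 (fun i => al pq.1.1 * g i)]
  simp

lemma Tmat_comb_none [Fintype ι] (al : ι → ℚ) (z : ElimIdx ι al) :
    ∑ i, Tmat al z i * al i = 0 := by
  rcases z with z | pq
  · rw [Tmat_comb_inl]; exact z.2
  · rw [Tmat_comb_inr]; ring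

/-- Farkas property for a finite variable type. -/
def FarkasP (μ : Type) : Prop :=
  ∀ (_ : Fintype μ) (ι : Type) (_ : Fintype ι) (Am : ι → μ → ℚ) (bv : ι → ℚ),
    (¬ ∃ x : μ → ℚ, ∀ i, ∑ j, Am i j * x j ≤ bv i) →
    ∃ y : ι → ℚ, (∀ i, 0 ≤ y i) ∧ (∀ j, ∑ i, y i * Am i j = 0) ∧ ∑ i, y i * bv i < 0

lemma farkasP_pempty : FarkasP PEmpty := by
  classical
  intro _ ι _ Am bv hinf
  have h1 : ∃ i, bv i < 0 := by
    by_contra hall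
    push_neg at hall
    exact hinf ⟨fun j => 0, fun i => by simpa using hall i⟩
  obtain ⟨i0, hi0⟩ := h1
  refine ⟨fun i => if i = i0 then 1 else 0, fun i => ?_, fun j => j.elim, ?_⟩
  · dsimp only; split <;> norm_num
  · have h2 : ∀ i ∈ Finset.univ, (if i = i0 then (1:ℚ) else 0) * bv i
        = if i = i0 then bv i else 0 := by
      intro i _; split <;> simp
    rw [Finset.sum_congr rfl h2, Finset.sum_ite_eq' Finset.univ i0 bv]
    simpa using hi0

lemma farkasP_equiv {α β : Type} (e : α ≃ β) (hP : FarkasP α) : FarkasP β := by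
  classical
  intro instβ ι instι Am bv hinf
  haveI instα : Fintype α := Fintype.ofEquiv β e.symm
  have hinf2 : ¬ ∃ x : α → ℚ, ∀ i, ∑ a, Am i (e a) * x a ≤ bv i := by
    rintro ⟨x, hx⟩
    apply hinf
    refine ⟨fun j => x (e.symm j), fun i => ?_⟩
    have h := hx i
    calc ∑ j, Am i j * x (e.symm j)
        = ∑ a, Am i (e a) * x (e.symm (e a)) := (Fintype.sum_equiv e _ _ (fun a => rfl)).symm
      _ = ∑ a, Am i (e a) * x a := by simp
      _ ≤ bv i := h
  obtain ⟨y, hy1, hy2, hy3⟩ := hP instα ι instι (fun i a => Am i (e a)) bv hinf2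
  refine ⟨y, hy1, ?_, hy3⟩
  intro j
  have h := hy2 (e.symm j)
  simpa using h

lemma farkasP_option (α : Type) [instα : Fintype α] (hP : FarkasP α) : FarkasP (Option α) := by
  classical
  intro instO ι instι Am bv hinf
  have hinstO : instO = instFintypeOption := Subsingleton.elim _ _
  subst hinstO
  set al : ι → ℚ := fun i => Am i none with hal
  set A' : ElimIdx ι al → α → ℚ := fun z j => ∑ i, Tmat al z i * Am i (some j) with hA'
  set b' : ElimIdx ι al → ℚ := fun z => ∑ i, Tmat al z i * bv i with hb'
  -- the eliminated system is infeasible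
  have hinf' : ¬ ∃ x : α → ℚ, ∀ z, ∑ j, A' z j * x j ≤ b' z := by
    rintro ⟨x', hx'⟩
    apply hinf
    set Rv : ι → ℚ := fun i => ∑ j, Am i (some j) * x' j with hRv
    have hx'' : ∀ z : ElimIdx ι al, ∑ i, Tmat al z i * Rv i ≤ b' z := by
      intro z
      have h := hx' z
      calc ∑ i, Tmat al z i * Rv i = ∑ i, ∑ j, Tmat al z i * (Am i (some j) * x' j) := by
            apply Finset.sum_congr rfl; intro i _
            rw [hRv]; dsimp only; rw [Finset.mul_sum]
        _ = ∑ j, ∑ i, Tmat al z i * (Am i (some j) * x' j) := Finset.sum_comm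
        _ = ∑ j, A' z j * x' j := by
            apply Finset.sum_congr rfl; intro j _
            rw [hA']; dsimp only; rw [Finset.sum_mul]
            apply Finset.sum_congr rfl; intro i _; ring
        _ ≤ b' z := h
    set UB : ι → ℚ := fun i => (bv i - Rv i) / al i with hUB
    have hcomb : ∀ (p q : ι), 0 < al p → al q < 0 → UB q ≤ UB p := by
      intro p q hp hq
      have h1 := hx'' (Sum.inr ⟨(p, q), hp, hq⟩)
      rw [Tmat_comb_inr] at h1
      have hb2 : b' (Sum.inr ⟨(p, q), hp, hq⟩ : ElimIdx ι al)
          = -al q * bv p + al p * bv q := Tmat_comb_inr al ⟨(p, q), hp, hq⟩ bv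
      rw [hb2] at h1
      dsimp only at h1
      -- h1 : -al q * Rv p + al p * Rv q ≤ -al q * bv p + al p * bv q
      rw [hUB]
      dsimp only
      rw [div_le_iff_of_neg hq, div_mul_eq_mul_div, div_le_iff₀ hp]
      nlinarith [h1]
    -- choose a value for the eliminated variable
    set Ne' : Finset ι := Finset.univ.filter (fun i => al i < 0) with hNe'
    set Po : Finset ι := Finset.univ.filter (fun i => 0 < al i) with hPo
    set t : ℚ := if hN : Ne'.Nonempty then (Ne'.image UB).max' (hN.image _)
      else (if hPp : Po.Nonempty then (Po.image UB).min' (hPp.image _) else 0) with ht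
    have hub : ∀ p ∈ Po, t ≤ UB p := by
      intro p hp
      have hp' : 0 < al p := (Finset.mem_filter.1 hp).2
      rw [ht]
      split
      · next hN =>
          apply Finset.max'_le
          intro y hy
          obtain ⟨q, hq, rfl⟩ := Finset.mem_image.1 hy
          exact hcomb p q hp' (Finset.mem_filter.1 hq).2
      · next hN =>
          rw [dif_pos ⟨p, hp⟩]
          exact Finset.min'_le _ _ (Finset.mem_image_of_mem UB hp)
    have hlb : ∀ q ∈ Ne', UB q ≤ t := by
      intro q hq
      rw [ht, dif_pos ⟨q, hq⟩]
      exact Finset.le_max' _ _ (Finset.mem_image_of_mem UB hq)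
    refine ⟨fun o => Option.rec t x' o, fun i => ?_⟩
    have hdec : ∑ j : Option α, Am i j * Option.rec t x' j = al i * t + Rv i := by
      rw [Fintype.sum_option]
    rw [hdec]
    rcases lt_trichotomy (al i) 0 with h | h | h
    · have h2 := hlb i (Finset.mem_filter.2 ⟨Finset.mem_univ i, h⟩)
      rw [hUB] at h2
      dsimp only at h2
      rw [div_le_iff_of_neg h] at h2
      linarith
    · have h2 := hx'' (Sum.inl ⟨i, h⟩)
      rw [Tmat_comb_inl] at h2
      have hb2 : b' (Sum.inl ⟨i, h⟩ : ElimIdx ι al) = bv i := Tmat_comb_inl al ⟨i, h⟩ bv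
      rw [hb2] at h2
      dsimp only at h2
      rw [h]
      linarith
    · have h2 := hub i (Finset.mem_filter.2 ⟨Finset.mem_univ i, h⟩)
      rw [hUB] at h2
      dsimp only at h2
      rw [le_div_iff₀ h] at h2
      linarith
  -- apply the inductive hypothesis and transport the multipliers
  obtain ⟨y', hy1, hy2, hy3⟩ := hP instα (ElimIdx ι al) inferInstance A' b' hinf'
  have hswap : ∀ g : ι → ℚ, ∑ i, (∑ z, y' z * Tmat al z i) * g i
      = ∑ z, y' z * (∑ i, Tmat al z i * g i) := by
    intro g
    calc ∑ i, (∑ z, y' z * Tmat al z i) * g i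
        = ∑ i, ∑ z, y' z * (Tmat al z i * g i) := by
          apply Finset.sum_congr rfl; intro i _
          rw [Finset.sum_mul]; apply Finset.sum_congr rfl; intro z _; ring
      _ = ∑ z, ∑ i, y' z * (Tmat al z i * g i) := Finset.sum_comm
      _ = ∑ z, y' z * (∑ i, Tmat al z i * g i) := by
          apply Finset.sum_congr rfl; intro z _; rw [Finset.mul_sum]
  refine ⟨fun i => ∑ z, y' z * Tmat al z i, fun i => ?_, ?_, ?_⟩
  · exact Finset.sum_nonneg fun z _ => mul_nonneg (hy1 z) (Tmat_nonneg al z i)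
  · intro jo
    rw [hswap (fun i => Am i jo)]
    rcases jo with _ | j
    · calc ∑ z, y' z * (∑ i, Tmat al z i * Am i none)
          = ∑ z : ElimIdx ι al, y' z * 0 := by
            apply Finset.sum_congr rfl; intro z _
            rw [Tmat_comb_none al z]
        _ = 0 := by simp
    · exact hy2 j
  · rw [hswap bv]
    exact hy3

theorem farkas {μ ι : Type} [Fintype μ] [Fintype ι] (Am : ι → μ → ℚ) (bv : ι → ℚ)
    (hinf : ¬ ∃ x : μ → ℚ, ∀ i, ∑ j, Am i j * x j ≤ bv i) :
    ∃ y : ι → ℚ, (∀ i, 0 ≤ y i) ∧ (∀ j, ∑ i, y i * Am i j = 0) ∧ ∑ i, y i * bv i < 0 := by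
  have h := Finite.induction_empty_option (P := FarkasP)
    (fun {a b} e => farkasP_equiv e) farkasP_pempty (fun {a} _ hp => farkasP_option a hp) μ
  exact h ‹_› ι ‹_› Am bv hinf

end Farkas

noncomputable section IntCl
namespace IntClAux

open Finset Pointwise

variable {K : Type*} [Field K] {n : ℕ}

/-- weight of an exponent vector -/
def wt (lam : Fin n → ℚ) (b : Fin n →₀ ℕ) : ℚ := ∑ i, lam i * (b i : ℚ)

lemma wt_add (lam : Fin n → ℚ) (b c : Fin n →₀ ℕ) : wt lam (b + c) = wt lam b + wt lam c := by
  simp [wt, Finsupp.add_apply, Nat.cast_add, mul_add, Finset.sum_add_distrib]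

lemma wt_zero (lam : Fin n → ℚ) : wt lam 0 = 0 := by simp [wt]

lemma wt_nonneg {lam : Fin n → ℚ} (hlam : ∀ i, 0 ≤ lam i) (b : Fin n →₀ ℕ) : 0 ≤ wt lam b :=
  Finset.sum_nonneg fun i _ => mul_nonneg (hlam i) (Nat.cast_nonneg _)

lemma wt_mono {lam : Fin n → ℚ} (hlam : ∀ i, 0 ≤ lam i) {b c : Fin n →₀ ℕ} (h : b ≤ c) :
    wt lam b ≤ wt lam c := by
  apply Finset.sum_le_sum
  intro i _
  exact mul_le_mul_of_nonneg_left (Nat.cast_le.2 (Finsupp.le_def.1 h i)) (hlam i)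

/-- upward closure -/
def upcl (A : Set (Fin n →₀ ℕ)) : Set (Fin n →₀ ℕ) := {b | ∃ a ∈ A, a ≤ b}

lemma subset_upcl (A : Set (Fin n →₀ ℕ)) : A ⊆ upcl A := fun a ha => ⟨a, ha, le_rfl⟩

lemma upcl_mem {A : Set (Fin n →₀ ℕ)} {a b : Fin n →₀ ℕ} (ha : a ∈ upcl A) (h : a ≤ b) :
    b ∈ upcl A := by
  obtain ⟨a0, h0, h1⟩ := ha
  exact ⟨a0, h0, h1.trans h⟩

lemma monomial_mem_span {U : Set (Fin n →₀ ℕ)} {b : Fin n →₀ ℕ} (hb : b ∈ U) :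
    monomial b (1 : K) ∈ Ideal.span ((fun a => monomial a (1 : K)) '' U) :=
  Ideal.subset_span ⟨b, hb, rfl⟩

lemma mem_span_monomials_of_support {U : Set (Fin n →₀ ℕ)} {f : MvPolynomial (Fin n) K}
    (hf : ∀ β ∈ f.support, β ∈ U) :
    f ∈ Ideal.span ((fun a => monomial a (1 : K)) '' U) := by
  rw [← support_sum_monomial_coeff f]
  refine Ideal.sum_mem _ fun β hβ => ?_
  have h1 : monomial β (coeff β f) = C (coeff β f) * monomial β (1 : K) := by
    rw [C_mul_monomial, mul_one]
  rw [h1]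
  exact Ideal.mul_mem_left _ _ (monomial_mem_span (hf β hβ))

lemma support_subset_of_mem_span {U : Set (Fin n →₀ ℕ)}
    (hU : ∀ ⦃a b : Fin n →₀ ℕ⦄, a ∈ U → a ≤ b → b ∈ U) {f : MvPolynomial (Fin n) K}
    (hf : f ∈ Ideal.span ((fun a => monomial a (1 : K)) '' U)) :
    ∀ β ∈ f.support, β ∈ U := by
  classical
  refine Submodule.span_induction (p := fun g _ => ∀ β ∈ g.support, β ∈ U)
    ?_ ?_ ?_ ?_ hf
  · rintro x ⟨a, ha, rfl⟩ β hβ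
    have := MvPolynomial.support_monomial (s := a) (a := (1:K)) ▸ hβ
    simp only [one_ne_zero, if_false, Finset.mem_singleton] at this
    exact this ▸ ha
  · simp
  · intro x y _ _ hx hy β hβ
    rcases Finset.mem_union.1 (MvPolynomial.support_add hβ) with h | h
    · exact hx β h
    · exact hy β h
  · intro a x _ hx β hβ
    have h2 : (a • x).support ⊆ a.support + x.support := by
      rw [smul_eq_mul]; exact MvPolynomial.support_mul a x
    obtain ⟨γ, hγ, δ, hδ, rfl⟩ := Finset.mem_add.1 (h2 hβ)
    exact hU (hx δ hδ) le_add_self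

lemma span_upcl (A : Set (Fin n →₀ ℕ)) :
    Ideal.span ((fun a => monomial a (1 : K)) '' A) =
      Ideal.span ((fun a => monomial a (1 : K)) '' upcl A) := by
  apply le_antisymm
  · exact Ideal.span_mono (Set.image_mono (subset_upcl A))
  · rw [Ideal.span_le]
    rintro x ⟨b, ⟨a, ha, hab⟩, rfl⟩
    show monomial b (1 : K) ∈ _
    have h3 : monomial b (1 : K) = monomial (b - a) (1 : K) * monomial a (1 : K) := by
      rw [monomial_mul, one_mul, tsub_add_cancel_of_le hab]
    rw [h3]
    exact Ideal.mul_mem_left _ _ (monomial_mem_span ha)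

variable {L : Ideal (MvPolynomial (Fin n) K)} {A : Set (Fin n →₀ ℕ)}

lemma mem_L_iff (hL : L = Ideal.span ((fun a => monomial a (1 : K)) '' A))
    {g : MvPolynomial (Fin n) K} :
    g ∈ L ↔ ∀ β ∈ g.support, β ∈ upcl A := by
  rw [hL, span_upcl]
  constructor
  · exact fun h => support_subset_of_mem_span (fun a b ha hab => upcl_mem ha hab) h
  · exact mem_span_monomials_of_support

lemma monomial_mem_L (hL : L = Ideal.span ((fun a => monomial a (1 : K)) '' A))
    {b : Fin n →₀ ℕ} (hb : b ∈ upcl A) : monomial b (1 : K) ∈ L := by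
  rw [hL, span_upcl]; exact monomial_mem_span hb


section Vmin

variable (lam : Fin n → ℚ)

/-- minimal weight of the support -/
def vmin (g : MvPolynomial (Fin n) K) (hg : g ≠ 0) : ℚ :=
  (g.support.image (wt lam)).min' ((support_nonempty.2 hg).image _)

lemma vmin_le {g : MvPolynomial (Fin n) K} (hg : g ≠ 0) {β : Fin n →₀ ℕ} (hβ : β ∈ g.support) :
    vmin lam g hg ≤ wt lam β :=
  Finset.min'_le _ _ (Finset.mem_image_of_mem _ hβ)

lemma le_vmin {g : MvPolynomial (Fin n) K} (hg : g ≠ 0) {c : ℚ}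
    (H : ∀ β ∈ g.support, c ≤ wt lam β) : c ≤ vmin lam g hg := by
  apply Finset.le_min'
  intro y hy
  obtain ⟨β, hβ, rfl⟩ := Finset.mem_image.1 hy
  exact H β hβ

lemma exists_vmin {g : MvPolynomial (Fin n) K} (hg : g ≠ 0) :
    ∃ β ∈ g.support, wt lam β = vmin lam g hg := by
  have h := Finset.min'_mem (g.support.image (wt lam)) ((support_nonempty.2 hg).image _)
  obtain ⟨β, hβ, h⟩ := Finset.mem_image.1 h
  exact ⟨β, hβ, h⟩

/-- leading form with respect to the weight -/
def lead (g : MvPolynomial (Fin n) K) (hg : g ≠ 0) : MvPolynomial (Fin n) K :=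
  ∑ β ∈ g.support.filter (fun β => wt lam β = vmin lam g hg), monomial β (coeff β g)

lemma coeff_lead {g : MvPolynomial (Fin n) K} (hg : g ≠ 0) (γ : Fin n →₀ ℕ) :
    coeff γ (lead lam g hg) = if wt lam γ = vmin lam g hg then coeff γ g else 0 := by
  classical
  rw [lead, MvPolynomial.coeff_sum]
  have h1 : ∀ β ∈ g.support.filter (fun β => wt lam β = vmin lam g hg),
      coeff γ (monomial β (coeff β g)) = if β = γ then coeff β g else 0 := by
    intro β _
    rw [MvPolynomial.coeff_monomial]
  rw [Finset.sum_congr rfl h1, Finset.sum_ite_eq' _ γ (fun β => coeff β g)]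
  by_cases h2 : wt lam γ = vmin lam g hg
  · by_cases h3 : γ ∈ g.support
    · simp [h2, Finset.mem_filter, h3]
    · simp only [Finset.mem_filter, h3, false_and, if_false, h2, if_true]
      exact (MvPolynomial.notMem_support_iff.1 h3).symm
  · simp [Finset.mem_filter, h2]

lemma lead_ne_zero {g : MvPolynomial (Fin n) K} (hg : g ≠ 0) : lead lam g hg ≠ 0 := by
  obtain ⟨β, hβ, hwt⟩ := exists_vmin lam hg
  rw [MvPolynomial.ne_zero_iff]
  refine ⟨β, ?_⟩
  rw [coeff_lead, if_pos hwt]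
  exact MvPolynomial.mem_support_iff.1 hβ

lemma support_lead {g : MvPolynomial (Fin n) K} (hg : g ≠ 0) {γ : Fin n →₀ ℕ}
    (hγ : γ ∈ (lead lam g hg).support) :
    γ ∈ g.support ∧ wt lam γ = vmin lam g hg := by
  have h := MvPolynomial.mem_support_iff.1 hγ
  rw [coeff_lead] at h
  by_cases h2 : wt lam γ = vmin lam g hg
  · rw [if_pos h2] at h
    exact ⟨MvPolynomial.mem_support_iff.2 h, h2⟩
  · rw [if_neg h2] at h
    exact absurd rfl h

lemma vmin_mul {g h : MvPolynomial (Fin n) K} (hg : g ≠ 0) (hh : h ≠ 0) :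
    vmin lam (g * h) (mul_ne_zero hg hh) = vmin lam g hg + vmin lam h hh := by
  classical
  have hlg := lead_ne_zero lam hg
  have hlh := lead_ne_zero lam hh
  have hlm : lead lam g hg * lead lam h hh ≠ 0 := mul_ne_zero hlg hlh
  obtain ⟨β₀, hβ₀⟩ := support_nonempty.2 hlm
  obtain ⟨γ₀, hγ₀, δ₀, hδ₀, hsum⟩ := Finset.mem_add.1 (MvPolynomial.support_mul _ _ hβ₀)
  obtain ⟨hγ₀g, hγ₀v⟩ := support_lead lam hg hγ₀
  obtain ⟨hδ₀h, hδ₀v⟩ := support_lead lam hh hδ₀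
  have hwtβ₀ : wt lam β₀ = vmin lam g hg + vmin lam h hh := by
    rw [← hsum, wt_add, hγ₀v, hδ₀v]
  have key : coeff β₀ (g * h) = coeff β₀ (lead lam g hg * lead lam h hh) := by
    rw [MvPolynomial.coeff_mul, MvPolynomial.coeff_mul]
    refine Finset.sum_congr rfl ?_
    rintro ⟨γ, δ⟩ hx
    have hγδ : γ + δ = β₀ := Finset.HasAntidiagonal.mem_antidiagonal.1 hx
    simp only
    rcases eq_or_ne (coeff γ g) 0 with h1 | h1
    · rw [h1, coeff_lead]
      simp [h1]
    rcases eq_or_ne (coeff δ h) 0 with h2 | h2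
    · rw [h2, coeff_lead lam hh]
      simp [h2]
    have hγs : γ ∈ g.support := MvPolynomial.mem_support_iff.2 h1
    have hδs : δ ∈ h.support := MvPolynomial.mem_support_iff.2 h2
    have l1 : vmin lam g hg ≤ wt lam γ := vmin_le lam hg hγs
    have l2 : vmin lam h hh ≤ wt lam δ := vmin_le lam hh hδs
    have l3 : wt lam γ + wt lam δ = vmin lam g hg + vmin lam h hh := by
      rw [← wt_add, hγδ, hwtβ₀]
    have e1 : wt lam γ = vmin lam g hg := by linarith
    have e2 : wt lam δ = vmin lam h hh := by linarith
    rw [coeff_lead, coeff_lead, if_pos e1, if_pos e2]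
  have hβ₀gh : β₀ ∈ (g * h).support := by
    rw [MvPolynomial.mem_support_iff, key]
    exact MvPolynomial.mem_support_iff.1 hβ₀
  apply le_antisymm
  · calc vmin lam (g * h) (mul_ne_zero hg hh) ≤ wt lam β₀ := vmin_le lam _ hβ₀gh
    _ = _ := hwtβ₀
  · apply le_vmin
    intro β hβ
    obtain ⟨γ, hγ, δ, hδ, rfl⟩ := Finset.mem_add.1 (MvPolynomial.support_mul _ _ hβ)
    rw [wt_add]
    exact add_le_add (vmin_le lam hg hγ) (vmin_le lam hh hδ)

lemma vmin_one : vmin lam (1 : MvPolynomial (Fin n) K) one_ne_zero = 0 := by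
  classical
  have h1 : (1 : MvPolynomial (Fin n) K).support = {0} := by
    have : (1 : MvPolynomial (Fin n) K) = monomial 0 1 := by
      rw [monomial_zero', C_1]
    rw [this, support_monomial]
    simp
  rw [vmin, ]
  simp [h1, wt_zero]

lemma vmin_pow {g : MvPolynomial (Fin n) K} (hg : g ≠ 0) (k : ℕ) :
    vmin lam (g ^ k) (pow_ne_zero k hg) = k * vmin lam g hg := by
  induction k with
  | zero => simpa using vmin_one lam
  | succ k ih =>
      have h1 : g ^ (k + 1) = g ^ k * g := pow_succ g k
      have h2 : vmin lam (g ^ (k+1)) (pow_ne_zero (k+1) hg) =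
          vmin lam (g ^ k * g) (mul_ne_zero (pow_ne_zero k hg) hg) := by
        congr 1
      rw [h2, vmin_mul lam (pow_ne_zero k hg) hg, ih]
      push_cast
      ring

end Vmin

lemma wt_multiset_sum (lam : Fin n → ℚ) (b : Multiset (Fin n →₀ ℕ)) :
    wt lam b.sum = (b.map (wt lam)).sum := by
  induction b using Multiset.induction with
  | empty => simp [wt_zero]
  | cons x s ih => simp [wt_add, ih]

lemma pow_support (hL : L = Ideal.span ((fun a => monomial a (1 : K)) '' A))
    {j : ℕ} (hj : 1 ≤ j) {g : MvPolynomial (Fin n) K} (hg : g ∈ L ^ j) :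
    ∀ β ∈ g.support, ∃ b : Multiset (Fin n →₀ ℕ),
      Multiset.card b = j ∧ (∀ x ∈ b, x ∈ upcl A) ∧ β = b.sum := by
  classical
  induction j, hj using Nat.le_induction generalizing g with
  | base =>
      rw [pow_one] at hg
      intro β hβ
      exact ⟨{β}, by simp, by
        intro x hx
        rw [Multiset.mem_singleton] at hx
        exact hx ▸ (mem_L_iff hL).1 hg β hβ, by simp⟩
  | succ j hj ih =>
      rw [pow_succ] at hg
      refine Submodule.mul_induction_on hg ?_ ?_
      · intro m hm p hp β hβ
        obtain ⟨γ, hγ, δ, hδ, rfl⟩ := Finset.mem_add.1 (MvPolynomial.support_mul _ _ hβ)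
        obtain ⟨b, hcard, hmem, hsum⟩ := ih hm γ hγ
        refine ⟨δ ::ₘ b, by simp [hcard], ?_, ?_⟩
        · intro x hx
          rcases Multiset.mem_cons.1 hx with h | h
          · exact h ▸ (mem_L_iff hL).1 hp δ hδ
          · exact hmem x h
        · rw [Multiset.sum_cons, ← hsum, add_comm]
      · intro x y hx hy β hβ
        rcases Finset.mem_union.1 (MvPolynomial.support_add hβ) with h | h
        · exact hx β h
        · exact hy β h

/-- Key lemma: from an equation of integral dependence, produce a finite subset `S` of
`upcl A` such that every exponent of `f` dominates, in every nonnegative weight,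
some element of `S`. -/
lemma exists_S (hL : L = Ideal.span ((fun a => monomial a (1 : K)) '' A))
    {f : MvPolynomial (Fin n) K} (hf : f ≠ 0) {k : ℕ} (hk : 0 < k)
    {c : ℕ → MvPolynomial (Fin n) K} (hc : ∀ j, 1 ≤ j → j ≤ k → c j ∈ L ^ j)
    (heq : f ^ k + ∑ j ∈ Finset.Icc 1 k, c j * f ^ (k - j) = 0) :
    ∃ S : Finset (Fin n →₀ ℕ), S.Nonempty ∧ (∀ b ∈ S, b ∈ upcl A) ∧
      ∀ lam : Fin n → ℚ, (∀ i, 0 ≤ lam i) →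
        ∀ α ∈ f.support, ∃ b ∈ S, wt lam b ≤ wt lam α := by
  classical
  have hdecomp : ∀ j β, ∃ b : Multiset (Fin n →₀ ℕ),
      j ∈ Finset.Icc 1 k → β ∈ (c j).support →
      Multiset.card b = j ∧ (∀ x ∈ b, x ∈ upcl A) ∧ β = b.sum := by
    intro j β
    by_cases h : j ∈ Finset.Icc 1 k ∧ β ∈ (c j).support
    · obtain ⟨h1, h2⟩ := h
      rw [Finset.mem_Icc] at h1
      obtain ⟨b, hb⟩ := pow_support hL h1.1 (hc j h1.1 h1.2) β h2
      exact ⟨b, fun _ _ => hb⟩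
    · exact ⟨0, fun h1 h2 => absurd ⟨h1, h2⟩ h⟩
  choose D hD using hdecomp
  set S := (Finset.Icc 1 k).biUnion (fun j => (c j).support.biUnion
      (fun β => (D j β).toFinset)) with hS
  have hsub : ∀ b ∈ S, b ∈ upcl A := by
    intro b hb
    obtain ⟨j, hj, hb2⟩ := Finset.mem_biUnion.1 hb
    obtain ⟨β, hβ, hb3⟩ := Finset.mem_biUnion.1 hb2
    exact (hD j β hj hβ).2.1 b (Multiset.mem_toFinset.1 hb3)
  have hfk : f ^ k ≠ 0 := pow_ne_zero k hf
  have heq' : f ^ k = -∑ j ∈ Finset.Icc 1 k, c j * f ^ (k - j) :=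
    eq_neg_of_add_eq_zero_left heq
  have hne : S.Nonempty := by
    have hsum0 : ∑ j ∈ Finset.Icc 1 k, c j * f ^ (k - j) ≠ 0 := by
      intro h0
      rw [h0, add_zero] at heq
      exact hfk heq
    have h5 : ∃ j ∈ Finset.Icc 1 k, c j * f ^ (k - j) ≠ 0 := by
      by_contra hall
      push_neg at hall
      exact hsum0 (Finset.sum_eq_zero hall)
    obtain ⟨j, hj, hcj⟩ := h5
    have hcj' : c j ≠ 0 := left_ne_zero_of_mul hcj
    obtain ⟨β, hβ⟩ := support_nonempty.2 hcj'
    have hcard := (hD j β hj hβ).1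
    have hone : 1 ≤ j := (Finset.mem_Icc.1 hj).1
    have h6 : (D j β).toFinset.Nonempty := by
      rw [Multiset.toFinset_nonempty, ← Multiset.card_pos, hcard]
      omega
    obtain ⟨b, hb⟩ := h6
    exact ⟨b, Finset.mem_biUnion.2 ⟨j, hj, Finset.mem_biUnion.2 ⟨β, hβ, hb⟩⟩⟩
  refine ⟨S, hne, hsub, ?_⟩
  intro lam hlam α hα
  have hneim : (S.image (wt lam)).Nonempty := hne.image _
  set m := (S.image (wt lam)).min' hneim with hm
  -- it suffices to show m ≤ wt lam α
  suffices hsuff : m ≤ wt lam α by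
    obtain ⟨b, hb, hbm⟩ := Finset.mem_image.1 ((S.image (wt lam)).min'_mem hneim)
    exact ⟨b, hb, by rw [hbm, ← hm]; exact hsuff⟩
  have hmS : ∀ b ∈ S, m ≤ wt lam b := fun b hb =>
    Finset.min'_le _ _ (Finset.mem_image_of_mem _ hb)
  -- every exponent of c j weighs at least j * m
  have hcwt : ∀ j ∈ Finset.Icc 1 k, ∀ β ∈ (c j).support, (j : ℚ) * m ≤ wt lam β := by
    intro j hj β hβ
    obtain ⟨hcard, hmem, hsum⟩ := hD j β hj hβ
    have h1 : ∀ x ∈ (D j β).map (wt lam), m ≤ x := by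
      intro x hx
      obtain ⟨b, hb, rfl⟩ := Multiset.mem_map.1 hx
      refine hmS b (Finset.mem_biUnion.2 ⟨j, hj, Finset.mem_biUnion.2
        ⟨β, hβ, Multiset.mem_toFinset.2 hb⟩⟩)
    have h2 := Multiset.card_nsmul_le_sum h1
    rw [Multiset.card_map, hcard] at h2
    rw [hsum, wt_multiset_sum]
    calc (j : ℚ) * m = j • m := (nsmul_eq_mul j m).symm
    _ ≤ _ := h2
  set vf := vmin lam f hf with hvf
  -- the minimal exponent of f^k
  obtain ⟨βs, hβs, hwtβs⟩ := exists_vmin lam hfk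
  have hwtβs' : wt lam βs = (k : ℚ) * vf := by rw [hwtβs, vmin_pow]
  -- decompose βs via the right-hand side
  have hβs2 : βs ∈ (∑ j ∈ Finset.Icc 1 k, c j * f ^ (k - j)).support := by
    have := heq' ▸ hβs
    rwa [MvPolynomial.support_neg] at this
  obtain ⟨j, hj, hβs3⟩ := Finset.mem_biUnion.1 (MvPolynomial.support_sum hβs2)
  obtain ⟨β, hβ, γ, hγ, hβγ⟩ := Finset.mem_add.1 (MvPolynomial.support_mul _ _ hβs3)
  obtain ⟨hj1, hj2⟩ := Finset.mem_Icc.1 hj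
  have hb1 : (j : ℚ) * m ≤ wt lam β := hcwt j hj β hβ
  have hb2 : ((k - j : ℕ) : ℚ) * vf ≤ wt lam γ := by
    rw [← vmin_pow lam hf (k - j)]
    exact vmin_le lam _ hγ
  have hcast : ((k - j : ℕ) : ℚ) = (k : ℚ) - (j : ℚ) := by
    rw [Nat.cast_sub hj2]
  have hsum : wt lam β + wt lam γ = (k : ℚ) * vf := by
    rw [← wt_add, hβγ, hwtβs']
  have hjQ : (0 : ℚ) < (j : ℚ) := by exact_mod_cast hj1
  have hmvf : m ≤ vf := by
    have h7 : (j : ℚ) * m + ((k : ℚ) - (j : ℚ)) * vf ≤ (k : ℚ) * vf := by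
      rw [← hcast]
      linarith [hb1, hb2, hsum]
    have h8 : (j : ℚ) * m ≤ (j : ℚ) * vf := by linarith
    exact le_of_mul_le_mul_left h8 hjQ
  exact hmvf.trans (vmin_le lam hf hα)

/-- From the family of weight inequalities, rational weights exist (LP duality). -/
lemma exists_weights {S : Finset (Fin n →₀ ℕ)} (hne : S.Nonempty) (α : Fin n →₀ ℕ)
    (H : ∀ lam : Fin n → ℚ, (∀ i, 0 ≤ lam i) → ∃ b ∈ S, wt lam b ≤ wt lam α) :
    ∃ w : (Fin n →₀ ℕ) → ℚ, (∀ b ∈ S, 0 ≤ w b) ∧ (∑ b ∈ S, w b) = 1 ∧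
      (∀ i, ∑ b ∈ S, w b * (b i : ℚ) ≤ (α i : ℚ)) := by
  classical
  set μ := {x // x ∈ S} with hμ
  set ι := (μ ⊕ ((Fin n) ⊕ Bool)) with hι
  set Am : ι → μ → ℚ := fun i => match i with
    | Sum.inl a => fun j => if j = a then -1 else 0
    | Sum.inr (Sum.inl i) => fun j => ((j : Fin n →₀ ℕ) i : ℚ)
    | Sum.inr (Sum.inr true) => fun _ => 1
    | Sum.inr (Sum.inr false) => fun _ => -1
    with hAm
  set bv : ι → ℚ := fun i => match i with
    | Sum.inl _ => 0
    | Sum.inr (Sum.inl i) => (α i : ℚ)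
    | Sum.inr (Sum.inr true) => 1
    | Sum.inr (Sum.inr false) => -1
    with hbv
  have hcol : ∀ (y : ι → ℚ) (j : μ), ∑ i, y i * Am i j
      = -(y (Sum.inl j)) + (∑ i : Fin n, y (Sum.inr (Sum.inl i)) * ((j : Fin n →₀ ℕ) i : ℚ))
        + y (Sum.inr (Sum.inr true)) - y (Sum.inr (Sum.inr false)) := by
    intro y j
    rw [Fintype.sum_sum_type]
    have h1 : ∑ a : μ, y (Sum.inl a) * Am (Sum.inl a) j = -(y (Sum.inl j)) := by
      have h2 : ∀ a ∈ Finset.univ, y (Sum.inl a) * Am (Sum.inl a) j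
          = if a = j then -(y (Sum.inl a)) else 0 := by
        intro a _
        simp only [hAm]
        by_cases h : j = a
        · subst h; simp
        · rw [if_neg h, if_neg (fun h' => h h'.symm), mul_zero]
      rw [Finset.sum_congr rfl h2, Finset.sum_ite_eq' Finset.univ j (fun a => -(y (Sum.inl a)))]
      simp
    rw [h1, Fintype.sum_sum_type, Fintype.sum_bool]
    simp only [hAm]
    ring
  have hrow : ∀ y : ι → ℚ, ∑ i, y i * bv i
      = (∑ i : Fin n, y (Sum.inr (Sum.inl i)) * (α i : ℚ))
        + y (Sum.inr (Sum.inr true)) - y (Sum.inr (Sum.inr false)) := by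
    intro y
    rw [Fintype.sum_sum_type, Fintype.sum_sum_type, Fintype.sum_bool]
    simp only [hbv]
    simp
    ring
  have hfeas : ∃ x : μ → ℚ, ∀ i, ∑ j, Am i j * x j ≤ bv i := by
    by_contra hinf
    obtain ⟨y, hy0, hyA, hyb⟩ := farkas Am bv hinf
    set lam : Fin n → ℚ := fun i => y (Sum.inr (Sum.inl i)) with hlamdef
    obtain ⟨b, hb, hwtb⟩ := H lam (fun i => hy0 _)
    have h3 := hcol y ⟨b, hb⟩
    rw [hyA ⟨b, hb⟩] at h3
    have h4 := hrow y
    rw [h4] at hyb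
    have h5 : wt lam b = ∑ i : Fin n, y (Sum.inr (Sum.inl i)) * (b i : ℚ) := rfl
    have h6 : wt lam α = ∑ i : Fin n, y (Sum.inr (Sum.inl i)) * (α i : ℚ) := rfl
    have h7 : 0 ≤ y (Sum.inl (⟨b, hb⟩ : μ)) := hy0 _
    rw [← h5] at h3
    rw [← h6] at hyb
    linarith
  obtain ⟨x, hx⟩ := hfeas
  have hxnn : ∀ j : μ, 0 ≤ x j := by
    intro j
    have h1 := hx (Sum.inl j)
    have h2 : ∑ j', Am (Sum.inl j) j' * x j' = -(x j) := by
      have h3 : ∀ j' ∈ Finset.univ, Am (Sum.inl j) j' * x j' = if j' = j then -(x j') else 0 := by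
        intro j' _
        simp only [hAm]
        by_cases h : j' = j
        · subst h; simp
        · rw [if_neg h, if_neg h, zero_mul]
      rw [Finset.sum_congr rfl h3, Finset.sum_ite_eq' Finset.univ j (fun a => -(x a))]
      simp
    rw [h2] at h1
    simp only [hbv] at h1
    linarith
  have hsum1 : ∑ j : μ, x j = 1 := by
    have h1 := hx (Sum.inr (Sum.inr true))
    have h2 := hx (Sum.inr (Sum.inr false))
    simp only [hAm, hbv, one_mul, neg_one_mul] at h1 h2
    rw [Finset.sum_neg_distrib] at h2
    linarith
  set w : (Fin n →₀ ℕ) → ℚ := fun b => if h : b ∈ S then x ⟨b, h⟩ else 0 with hw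
  have hwS : ∀ (g : (Fin n →₀ ℕ) → ℚ), ∑ b ∈ S, w b * g b = ∑ j : μ, x j * g j.1 := by
    intro g
    rw [← Finset.sum_coe_sort S (fun b => w b * g b)]
    apply Finset.sum_congr rfl
    intro j _
    rw [hw]
    simp only
    rw [dif_pos j.2]
  refine ⟨w, ?_, ?_, ?_⟩
  · intro b hb
    rw [hw]; simp only; rw [dif_pos hb]; exact hxnn _
  · have := hwS (fun _ => 1)
    simp only [mul_one] at this
    rw [this, hsum1]
  · intro i
    have h1 := hx (Sum.inr (Sum.inl i))
    simp only [hAm, hbv] at h1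
    have h2 := hwS (fun b => (b i : ℚ))
    rw [h2]
    calc ∑ j : μ, x j * (j.1 i : ℚ) = ∑ j : μ, ((j : Fin n →₀ ℕ) i : ℚ) * x j := by
          apply Finset.sum_congr rfl; intro j _; ring
      _ ≤ (α i : ℚ) := h1

lemma rat_clear (q : ℚ) (h : 0 ≤ q) (N : ℕ) (hd : q.den ∣ N) : ∃ p : ℕ, (p : ℚ) = q * N := by
  obtain ⟨c, hc⟩ := hd
  refine ⟨(q.num.toNat) * c, ?_⟩
  have hqd : q * (q.den : ℚ) = (q.num : ℚ) := by
    calc q * (q.den : ℚ) = ((q.num : ℚ) / q.den) * q.den := by rw [Rat.num_div_den]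
    _ = (q.num : ℚ) := div_mul_cancel₀ _ (Nat.cast_ne_zero.2 q.den_nz)
  have h1 : q * N = ((q.num : ℚ)) * c := by
    rw [hc]; push_cast; rw [← mul_assoc, hqd]
  rw [h1]
  have h2 : (0:ℤ) ≤ q.num := Rat.num_nonneg.2 h
  have h3 : ((q.num.toNat : ℕ) : ℚ) = (q.num : ℚ) := by
    exact_mod_cast congrArg (Int.cast : ℤ → ℚ) (Int.toNat_of_nonneg h2)
  push_cast
  rw [h3]

lemma exists_nat_weights (s : Finset (Fin n →₀ ℕ)) (w : (Fin n →₀ ℕ) → ℚ)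
    (hw : ∀ b ∈ s, 0 ≤ w b) (hw1 : ∑ b ∈ s, w b = 1) :
    ∃ (N : ℕ) (p : (Fin n →₀ ℕ) → ℕ), 0 < N ∧ (∀ b ∈ s, (p b : ℚ) = w b * N) ∧
      ∑ b ∈ s, p b = N := by
  classical
  have key : ∀ b, ∃ pb : ℕ, b ∈ s → (pb : ℚ) = w b * (∏ b' ∈ s, (w b').den) := by
    intro b
    by_cases h : b ∈ s
    · obtain ⟨pb, hpb⟩ := rat_clear (w b) (hw b h) (∏ b' ∈ s, (w b').den)
        (Finset.dvd_prod_of_mem _ h)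
      exact ⟨pb, fun _ => hpb⟩
    · exact ⟨0, fun h' => absurd h' h⟩
  choose p hp using key
  set N : ℕ := ∏ b' ∈ s, (w b').den with hN
  have hNpos : 0 < N := Finset.prod_pos (fun b _ => (w b).pos)
  refine ⟨N, p, hNpos, fun b hb => hp b hb, ?_⟩
  have h1 : ((∑ b ∈ s, p b : ℕ) : ℚ) = ((N : ℕ) : ℚ) := by
    push_cast
    rw [Finset.sum_congr rfl (fun b hb => hp b hb), ← Finset.sum_mul, hw1, one_mul]
  exact_mod_cast h1

lemma prod_pow_mem {R : Type*} [CommRing R] (I : Ideal R) (s : Finset (Fin n →₀ ℕ))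
    (y : (Fin n →₀ ℕ) → R) (p : (Fin n →₀ ℕ) → ℕ) (hy : ∀ b ∈ s, y b ∈ I) :
    (∏ b ∈ s, y b ^ p b) ∈ I ^ (∑ b ∈ s, p b) := by
  classical
  induction s using Finset.induction with
  | empty => simp [Ideal.one_eq_top]
  | @insert x t hx ih =>
      rw [Finset.prod_insert hx, Finset.sum_insert hx, pow_add]
      exact Ideal.mul_mem_mul (Ideal.pow_mem_pow (hy _ (Finset.mem_insert_self x t)) _)
        (ih fun b hb => hy b (Finset.mem_insert_of_mem hb))

lemma monomial_prod (s : Finset (Fin n →₀ ℕ)) (m : (Fin n →₀ ℕ) → (Fin n →₀ ℕ)) :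
    (∏ b ∈ s, monomial (m b) (1 : K)) = monomial (∑ b ∈ s, m b) 1 := by
  classical
  induction s using Finset.induction with
  | empty => simp [monomial_zero']
  | @insert x t hx ih =>
      rw [Finset.prod_insert hx, Finset.sum_insert hx, ih, monomial_mul, one_mul]

/-- the easy direction: a lattice point of the Newton polyhedron gives an integral monomial -/
lemma integral_of_convex {a : Fin n →₀ ℕ}
    (s : Finset (Fin n →₀ ℕ)) (w : (Fin n →₀ ℕ) → ℚ)
    (h1 : ∀ b ∈ s, monomial b (1 : K) ∈ L) (h2 : ∀ b ∈ s, 0 ≤ w b)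
    (h3 : ∑ b ∈ s, w b = 1) (h4 : ∀ i, (a i : ℚ) = ∑ b ∈ s, w b * (b i : ℚ)) :
    L.IsIntegralElemOver (monomial a (1 : K)) := by
  classical
  obtain ⟨N, p, hN, hp, hpsum⟩ := exists_nat_weights s w h2 h3
  have hexp : N • a = ∑ b ∈ s, p b • b := by
    ext i
    have hq : (N : ℚ) * (a i : ℚ) = ∑ b ∈ s, (p b : ℚ) * (b i : ℚ) := by
      rw [h4 i, Finset.mul_sum]
      exact Finset.sum_congr rfl fun b hb => by rw [hp b hb]; ring
    have h6 : (((N • a) : Fin n →₀ ℕ) i : ℚ) = (((∑ b ∈ s, p b • b) : Fin n →₀ ℕ) i : ℚ) := by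
      simp only [Finsupp.smul_apply, smul_eq_mul, Finsupp.finset_sum_apply, Nat.cast_sum,
        Nat.cast_mul]
      exact hq
    exact_mod_cast h6
  have hmono : (monomial a (1:K)) ^ N = ∏ b ∈ s, (monomial b (1:K)) ^ (p b) := by
    rw [monomial_pow, one_pow]
    have h5 : ∀ b ∈ s, (monomial b (1:K)) ^ (p b) = monomial (p b • b) (1:K) := by
      intro b _
      rw [monomial_pow, one_pow]
    rw [Finset.prod_congr rfl h5, monomial_prod, hexp]
  have hmem : (monomial a (1:K)) ^ N ∈ L ^ N := by
    rw [hmono, ← hpsum]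
    exact prod_pow_mem L s _ p h1
  refine ⟨N, hN, fun j => if j = N then -((monomial a (1:K)) ^ N) else 0, ?_, ?_⟩
  · intro j hj1 hj2
    dsimp only
    by_cases h : j = N
    · rw [if_pos h, h]
      exact neg_mem hmem
    · rw [if_neg h]
      exact zero_mem _
  · dsimp only
    have h5 : ∀ j ∈ Finset.Icc 1 N,
        (if j = N then -((monomial a (1:K)) ^ N) else 0) * (monomial a (1:K)) ^ (N - j)
        = if j = N then -((monomial a (1:K)) ^ N) else 0 := by
      intro j _
      by_cases h : j = N
      · rw [if_pos h, h, Nat.sub_self, pow_zero, mul_one]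
      · rw [if_neg h, zero_mul]
    rw [Finset.sum_congr rfl h5,
      Finset.sum_ite_eq' (Finset.Icc 1 N) N (fun _ => -((monomial a (1:K)) ^ N)),
      if_pos (Finset.mem_Icc.2 ⟨hN, le_refl N⟩)]
    ring

/-- indicator sums -/
lemma sum_indicator (s : Finset (Fin n →₀ ℕ)) {x : Fin n →₀ ℕ} (hx : x ∈ s)
    (g : (Fin n →₀ ℕ) → ℚ) :
    ∑ b ∈ s, (if b = x then (1:ℚ) else 0) * g b = g x := by
  classical
  have h1 : ∀ b ∈ s, (if b = x then (1:ℚ) else 0) * g b = if b = x then g b else 0 := by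
    intro b _
    rw [ite_mul, one_mul, zero_mul]
  rw [Finset.sum_congr rfl h1, Finset.sum_ite_eq' s x g, if_pos hx]

/-- removing the slack: an exact rational convex combination -/
lemma mem_CSet (hL : L = Ideal.span ((fun a => monomial a (1 : K)) '' A))
    {α : Fin n →₀ ℕ} {S : Finset (Fin n →₀ ℕ)}
    (hSsub : ∀ b ∈ S, b ∈ upcl A) (w : (Fin n →₀ ℕ) → ℚ)
    (hw0 : ∀ b ∈ S, 0 ≤ w b) (hw1 : ∑ b ∈ S, w b = 1)
    (hwle : ∀ i, ∑ b ∈ S, w b * (b i : ℚ) ≤ (α i : ℚ)) :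
    ∃ (s : Finset (Fin n →₀ ℕ)) (w' : (Fin n →₀ ℕ) → ℚ),
      (∀ b ∈ s, monomial b (1 : K) ∈ L) ∧ (∀ b ∈ s, 0 ≤ w' b) ∧
      (∑ b ∈ s, w' b) = 1 ∧ (∀ i : Fin n, (α i : ℚ) = ∑ b ∈ s, w' b * (b i : ℚ)) := by
  classical
  obtain ⟨N, p, hN, hp, hpsum⟩ := exists_nat_weights S w hw0 hw1
  have hNQ : (0:ℚ) < N := by exact_mod_cast hN
  have hsum_apply : ∀ i, (((∑ b ∈ S, p b • b) : Fin n →₀ ℕ) i : ℚ)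
      = ∑ b ∈ S, (p b : ℚ) * (b i : ℚ) := by
    intro i
    simp only [Finsupp.finset_sum_apply, Finsupp.smul_apply, smul_eq_mul, Nat.cast_sum,
      Nat.cast_mul]
  have hwle' : ∀ i, ∑ b ∈ S, (p b : ℚ) * (b i : ℚ) ≤ (N : ℚ) * (α i : ℚ) := by
    intro i
    calc ∑ b ∈ S, (p b : ℚ) * (b i : ℚ) = (N:ℚ) * ∑ b ∈ S, w b * (b i : ℚ) := by
          rw [Finset.mul_sum]
          apply Finset.sum_congr rfl
          intro b hb
          rw [hp b hb]
          ring
      _ ≤ (N : ℚ) * (α i : ℚ) := by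
          exact mul_le_mul_of_nonneg_left (hwle i) (le_of_lt hNQ)
  have hle : (∑ b ∈ S, p b • b) ≤ N • α := by
    rw [Finsupp.le_def]
    intro i
    have h6 : (((∑ b ∈ S, p b • b) : Fin n →₀ ℕ) i : ℚ) ≤ (((N • α) : Fin n →₀ ℕ) i : ℚ) := by
      rw [hsum_apply]
      simp only [Finsupp.smul_apply, smul_eq_mul, Nat.cast_mul]
      exact hwle' i
    exact_mod_cast h6
  set ρ : Fin n →₀ ℕ := N • α - ∑ b ∈ S, p b • b with hρ
  have hρap : ∀ i, (ρ i : ℚ) = (N : ℚ) * (α i : ℚ) - ∑ b ∈ S, (p b : ℚ) * (b i : ℚ) := by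
    intro i
    rw [hρ, Finsupp.tsub_apply]
    have h7 := Finsupp.le_def.1 hle i
    rw [Nat.cast_sub h7, hsum_apply]
    simp only [Finsupp.smul_apply, smul_eq_mul, Nat.cast_mul]
  have hb0 : ∃ b0 ∈ S, 1 ≤ p b0 := by
    by_contra hcon
    push_neg at hcon
    have h8 : ∑ b ∈ S, p b = 0 := Finset.sum_eq_zero (fun b hb => by
      have := hcon b hb; omega)
    omega
  obtain ⟨b0, hb0S, hb01⟩ := hb0
  set s' : Finset (Fin n →₀ ℕ) := insert (b0 + ρ) S with hs'
  have hb0s' : b0 ∈ s' := Finset.mem_insert_of_mem hb0S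
  have hb0ρs' : b0 + ρ ∈ s' := Finset.mem_insert_self _ _
  set w' : (Fin n →₀ ℕ) → ℚ := fun b =>
    ((if b ∈ S then (p b : ℚ) else 0) - (if b = b0 then 1 else 0)
      + (if b = b0 + ρ then 1 else 0)) / N with hw'
  have hSpart : ∀ g : (Fin n →₀ ℕ) → ℚ,
      ∑ b ∈ s', (if b ∈ S then (p b : ℚ) else 0) * g b = ∑ b ∈ S, (p b : ℚ) * g b := by
    intro g
    by_cases hin : b0 + ρ ∈ S
    · rw [hs', Finset.insert_eq_self.2 hin]
      apply Finset.sum_congr rfl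
      intro b hb
      rw [if_pos hb]
    · rw [hs', Finset.sum_insert hin, if_neg hin, zero_mul, zero_add]
      apply Finset.sum_congr rfl
      intro b hb
      rw [if_pos hb]
  have hw'g : ∀ g : (Fin n →₀ ℕ) → ℚ, ∑ b ∈ s', w' b * g b
      = ((∑ b ∈ S, (p b : ℚ) * g b) - g b0 + g (b0 + ρ)) / N := by
    intro g
    have h9 : ∀ b ∈ s', w' b * g b =
        ((if b ∈ S then (p b : ℚ) else 0) * g b - (if b = b0 then 1 else 0) * g b
          + (if b = b0 + ρ then 1 else 0) * g b) / N := by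
      intro b _
      rw [hw']
      dsimp only
      rw [div_mul_eq_mul_div]
      congr 1
      ring
    rw [Finset.sum_congr rfl h9, ← Finset.sum_div]
    rw [Finset.sum_add_distrib, Finset.sum_sub_distrib]
    rw [hSpart g, sum_indicator s' hb0s' g, sum_indicator s' hb0ρs' g]
  refine ⟨s', w', ?_, ?_, ?_, ?_⟩
  · intro b hb
    rcases Finset.mem_insert.1 hb with h | h
    · subst h
      exact monomial_mem_L hL (upcl_mem (hSsub b0 hb0S) le_self_add)
    · exact monomial_mem_L hL (hSsub b h)
  · intro b hb
    rw [hw']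
    apply div_nonneg _ (le_of_lt hNQ)
    by_cases h1 : b = b0 <;> by_cases h2 : b = b0 + ρ
    · rw [if_pos h1, if_pos h2, if_pos (h1 ▸ hb0S)]
      have : (1:ℚ) ≤ (p b : ℚ) := by
        rw [h1]; exact_mod_cast hb01
      linarith
    · rw [if_pos h1, if_neg h2, if_pos (h1 ▸ hb0S)]
      have : (1:ℚ) ≤ (p b : ℚ) := by
        rw [h1]; exact_mod_cast hb01
      linarith
    · rw [if_neg h1, if_pos h2]
      have : (0:ℚ) ≤ (if b ∈ S then (p b : ℚ) else 0) := by
        split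
        · positivity
        · exact le_rfl
      linarith
    · have hbS : b ∈ S := by
        rcases Finset.mem_insert.1 hb with h | h
        · exact absurd h h2
        · exact h
      rw [if_neg h1, if_neg h2, if_pos hbS]
      have : (0:ℚ) ≤ (p b : ℚ) := by positivity
      linarith
  · have h10 := hw'g (fun _ => 1)
    simp only [mul_one] at h10
    rw [h10]
    have h11 : ∑ b ∈ S, (p b : ℚ) = (N : ℚ) := by
      exact_mod_cast congrArg (Nat.cast : ℕ → ℚ) hpsum
    rw [h11]
    field_simp
    ring
  · intro i
    have h10 := hw'g (fun b => (b i : ℚ))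
    rw [h10]
    have h12 : ((b0 + ρ : Fin n →₀ ℕ) i : ℚ) = (b0 i : ℚ) + (ρ i : ℚ) := by
      rw [Finsupp.add_apply]
      push_cast
      ring
    rw [h12, hρap i]
    field_simp
    ring

end IntClAux

end IntCl

/-- For a monomial ideal `L ⊆ K[x_1, …, x_n]`, the integral closure of `L`
is the monomial ideal generated by all monomials `x^α` with
`α ∈ conv(log L) ∩ ℤ_{≥0}^n`, where `log L` is the set of exponent vectors of monomials
lying in `L` and the convex hull is taken with nonnegative rational coefficients. -/
theorem stmt0 {K : Type*} [Field K] {n : ℕ} (L : Ideal (MvPolynomial (Fin n) K))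
    (A : Set (Fin n →₀ ℕ))
    (hL : L = Ideal.span ((fun a => monomial a (1 : K)) '' A)) :
    L.intClosure =
      Ideal.span ((fun a => monomial a (1 : K)) ''
        {a : Fin n →₀ ℕ |
          ∃ (s : Finset (Fin n →₀ ℕ)) (w : (Fin n →₀ ℕ) → ℚ),
            (∀ b ∈ s, monomial b (1 : K) ∈ L) ∧
            (∀ b ∈ s, 0 ≤ w b) ∧
            (∑ b ∈ s, w b) = 1 ∧
            (∀ i : Fin n, (a i : ℚ) = ∑ b ∈ s, w b * (b i : ℚ))}) := by
  classical
  apply le_antisymm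
  · rw [Ideal.intClosure, Ideal.span_le]
    intro f hf
    obtain ⟨k, hk, c, hc, heq⟩ := hf
    by_cases hf0 : f = 0
    · rw [hf0]
      exact SetLike.mem_coe.2 (Ideal.zero_mem _)
    · rw [SetLike.mem_coe]
      apply IntClAux.mem_span_monomials_of_support
      intro α hα
      obtain ⟨S, hSne, hSsub, hkey⟩ := IntClAux.exists_S hL hf0 hk hc heq
      obtain ⟨w, hw0, hw1, hwle⟩ := IntClAux.exists_weights hSne α
        (fun lam hlam => hkey lam hlam α hα)
      obtain ⟨s, w', hs1, hs2, hs3, hs4⟩ := IntClAux.mem_CSet hL hSsub w hw0 hw1 hwle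
      exact ⟨s, w', hs1, hs2, hs3, hs4⟩
  · rw [Ideal.span_le]
    rintro x ⟨a, ⟨s, w, h1, h2, h3, h4⟩, rfl⟩
    rw [SetLike.mem_coe]
    show monomial a (1:K) ∈ L.intClosure
    rw [Ideal.intClosure]
    exact Ideal.subset_span (IntClAux.integral_of_convex s w h1 h2 h3 h4)
end

section
/- Let G be a strong quasi-n-partite graph and I(G) its edge ideal in T. Then the integral closure I(G)̄ is generated by monomials of degree 2. -/
open MvPolynomial

/-- The edge ideal of the strong quasi-`n`-partite graph: the complete `n`-partite graph
on `V₁ ∪ ⋯ ∪ Vₙ`, `Vᵢ = {x_{i1}, …, x_{im_i}}`, with a loop at every vertex; it is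
generated by the `x_{ih} x_{i'h'}` with `i ≠ i'` and the `x_{ih}²`. -/
noncomputable def edgeIdealSQ (K : Type*) [Field K] (n : ℕ) (m : Fin n → ℕ) :
    Ideal (MvPolynomial (Σ i : Fin n, Fin (m i)) K) :=
  Ideal.span
    ({f | ∃ (i i' : Fin n) (h : Fin (m i)) (h' : Fin (m i')),
        i ≠ i' ∧ f = X ⟨i, h⟩ * X ⟨i', h'⟩} ∪
     {f | ∃ (i : Fin n) (h : Fin (m i)), f = X ⟨i, h⟩ ^ 2})

section Aux

variable {σ : Type*} {R : Type*}

lemma degree_single' (u : σ) (n : ℕ) : (Finsupp.single u n).degree = n := by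
  classical
  rcases eq_or_ne n 0 with rfl | h
  · simp [Finsupp.degree]
  · simp [Finsupp.degree_apply, Finsupp.support_single_ne_zero _ h]

lemma degree_add' (a b : σ →₀ ℕ) : (a + b).degree = a.degree + b.degree := by
  simp [Finsupp.degree_eq_weight_one, map_add]

/-- All monomials of `f` have degree at least `k`. -/
def LB [CommSemiring R] (k : ℕ) (f : MvPolynomial σ R) : Prop :=
  ∀ d ∈ f.support, k ≤ d.degree

variable [CommRing R]

lemma LB_mono {k l : ℕ} (h : k ≤ l) {f : MvPolynomial σ R} (hf : LB l f) : LB k f :=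
  fun d hd => h.trans (hf d hd)

lemma LB_zero (k : ℕ) : LB k (0 : MvPolynomial σ R) := by simp [LB]

lemma LB_add {k : ℕ} {f g : MvPolynomial σ R} (hf : LB k f) (hg : LB k g) :
    LB k (f + g) := by
  classical
  intro d hd
  rcases Finset.mem_union.mp (MvPolynomial.support_add hd) with h | h
  exacts [hf d h, hg d h]

lemma LB_neg {k : ℕ} {f : MvPolynomial σ R} (hf : LB k f) : LB k (-f) := by
  intro d hd
  exact hf d (by rwa [MvPolynomial.support_neg] at hd)

lemma LB_sum {k : ℕ} {A : Type*} {s : Finset A} {g : A → MvPolynomial σ R}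
    (h : ∀ a ∈ s, LB k (g a)) : LB k (∑ a ∈ s, g a) := by
  classical
  induction s using Finset.induction_on with
  | empty => simpa using LB_zero k
  | insert _ _ hx ih =>
    rw [Finset.sum_insert hx]
    exact LB_add (h _ (Finset.mem_insert_self _ _))
      (ih fun a ha => h a (Finset.mem_insert_of_mem ha))

lemma LB_mul {k l : ℕ} {f g : MvPolynomial σ R} (hf : LB k f) (hg : LB l g) :
    LB (k + l) (f * g) := by
  classical
  intro d hd
  obtain ⟨d1, h1, d2, h2, rfl⟩ := Finset.mem_add.mp (MvPolynomial.support_mul f g hd)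
  rw [degree_add']
  exact Nat.add_le_add (hf d1 h1) (hg d2 h2)

lemma LB_pow {k : ℕ} {f : MvPolynomial σ R} (hf : LB k f) (j : ℕ) :
    LB (j * k) (f ^ j) := by
  induction j with
  | zero => intro d hd; simp
  | succ j ih =>
    rw [pow_succ, Nat.succ_mul]
    exact LB_mul ih hf

/-- The ideal of polynomials all of whose monomials have degree at least `k`. -/
def lbIdeal (σ R : Type*) [CommRing R] (k : ℕ) : Ideal (MvPolynomial σ R) where
  carrier := {f | LB k f}
  zero_mem' := LB_zero k
  add_mem' := fun hf hg => LB_add hf hg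
  smul_mem' := fun r f hf => by
    have h0 : LB 0 r := fun d hd => Nat.zero_le _
    have := LB_mul h0 hf
    rw [Nat.zero_add] at this
    simpa using this

lemma mem_lbIdeal {k : ℕ} {f : MvPolynomial σ R} : f ∈ lbIdeal σ R k ↔ LB k f := Iff.rfl

lemma pow_le_lbIdeal {I : Ideal (MvPolynomial σ R)} (hI : I ≤ lbIdeal σ R 2) :
    ∀ j, I ^ j ≤ lbIdeal σ R (2 * j) := by
  intro j
  induction j with
  | zero => exact fun f _ => (fun d _ => Nat.zero_le _ : LB (2 * 0) f)
  | succ j ih =>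
    rw [pow_succ]
    refine Ideal.mul_le.mpr fun a ha b hb => ?_
    have := LB_mul (ih ha) (hI hb)
    rw [mem_lbIdeal]
    exact LB_mono (by omega) this

lemma LB_X_mul_X [Nontrivial R] (u w : σ) : LB 2 ((X u * X w : MvPolynomial σ R)) := by
  classical
  intro d hd
  have hX : (X u * X w : MvPolynomial σ R) =
      monomial (Finsupp.single u 1 + Finsupp.single w 1) 1 := by
    rw [X, X, monomial_mul, mul_one]
  rw [hX] at hd
  have := MvPolynomial.support_monomial_subset hd
  rw [Finset.mem_singleton] at this
  subst this
  rw [degree_add', degree_single', degree_single']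

lemma LB_X_sq [Nontrivial R] (u : σ) : LB 2 ((X u ^ 2 : MvPolynomial σ R)) := by
  classical
  intro d hd
  rw [X_pow_eq_monomial] at hd
  have := MvPolynomial.support_monomial_subset hd
  rw [Finset.mem_singleton] at this
  subst this
  rw [degree_single']

end Aux

section Main

variable {σ : Type*} {K : Type*} [Field K]

/-- Any element integral over an ideal contained in `lbIdeal 2`
has all monomials of degree at least 2. -/
lemma integral_LB2 {I : Ideal (MvPolynomial σ K)} (hI : I ≤ lbIdeal σ K 2)
    {f : MvPolynomial σ K} (hf : I.IsIntegralElemOver f) : LB 2 f := by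
  classical
  obtain ⟨k, hk, c, hc, heq⟩ := hf
  have hcLB : ∀ j, 1 ≤ j → j ≤ k → LB (2 * j) (c j) :=
    fun j h1 h2 => pow_le_lbIdeal hI j (hc j h1 h2)
  -- Step 1: constant term vanishes, so LB 1 f.
  have hf1 : LB 1 f := by
    have h0 : constantCoeff f = 0 := by
      have h := congrArg constantCoeff heq
      simp only [map_add, map_pow, map_sum, map_mul, map_zero] at h
      have hcc : ∀ j ∈ Finset.Icc 1 k, constantCoeff (c j) = 0 := by
        intro j hj
        rw [Finset.mem_Icc] at hj
        by_contra hne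
        have h0s : (0 : σ →₀ ℕ) ∈ (c j).support := by
          rw [MvPolynomial.mem_support_iff]
          rwa [MvPolynomial.constantCoeff_eq] at hne
        have := hcLB j hj.1 hj.2 0 h0s
        rw [map_zero] at this
        omega
      rw [Finset.sum_congr rfl (fun j hj => by rw [hcc j hj, zero_mul])] at h
      rw [Finset.sum_const_zero, add_zero] at h
      exact pow_eq_zero_iff (by omega) |>.mp h
    intro d hd
    rcases Nat.eq_zero_or_pos d.degree with h | h
    · exfalso
      have hd0 : d = 0 := (Finsupp.degree_eq_zero_iff d).mp h
      subst hd0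
      apply MvPolynomial.mem_support_iff.mp hd
      rwa [← MvPolynomial.constantCoeff_eq]
    · exact h
  -- Step 2: by contradiction, there is a monomial of degree exactly 1.
  by_contra hnot
  rw [LB] at hnot
  push_neg at hnot
  obtain ⟨d, hd, hdlt⟩ := hnot
  have hdeg1 : d.degree = 1 := by have := hf1 d hd; omega
  set l := homogeneousComponent 1 f with hl
  have hlne : l ≠ 0 := by
    intro h
    have hco : coeff d l = coeff d f := by
      rw [hl, coeff_homogeneousComponent, if_pos hdeg1]
    rw [h, MvPolynomial.coeff_zero] at hco
    exact MvPolynomial.mem_support_iff.mp hd hco.symm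
  have hlhom : l.IsHomogeneous 1 := homogeneousComponent_isHomogeneous 1 f
  have hdeg_of_hom : ∀ {p : MvPolynomial σ K} {n : ℕ}, p.IsHomogeneous n →
      ∀ e ∈ p.support, e.degree = n := by
    intro p n hp e he
    have := hp (MvPolynomial.mem_support_iff.mp he)
    rw [Finsupp.degree_eq_weight_one]; exact this
  have hlLB : LB 1 l := fun e he => le_of_eq (hdeg_of_hom hlhom e he).symm
  have hgLB : LB 2 (f - l) := by
    intro e he
    have hne := MvPolynomial.mem_support_iff.mp he
    rw [MvPolynomial.coeff_sub, hl, coeff_homogeneousComponent] at hne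
    by_cases h1 : e.degree = 1
    · rw [if_pos h1, sub_self] at hne
      exact absurd rfl hne
    · rw [if_neg h1, sub_zero] at hne
      have := hf1 e (MvPolynomial.mem_support_iff.mpr hne)
      omega
  -- binomial expansion of f^k
  have hfk : f ^ k = (∑ i ∈ Finset.range k,
      l ^ i * (f - l) ^ (k - i) * ((k.choose i : ℕ) : MvPolynomial σ K)) + l ^ k := by
    have hsum : l + (f - l) = f := by ring
    have h := add_pow l (f - l) k
    rw [hsum, Finset.sum_range_succ] at h
    rw [h, Nat.sub_self, pow_zero, mul_one, Nat.choose_self, Nat.cast_one, mul_one]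
  have hHLB : LB (k + 1) (∑ i ∈ Finset.range k,
      l ^ i * (f - l) ^ (k - i) * ((k.choose i : ℕ) : MvPolynomial σ K)) := by
    refine LB_sum fun i hi => ?_
    have hik := Finset.mem_range.mp hi
    have h1 : LB (i * 1) (l ^ i) := LB_pow hlLB i
    have h2 : LB ((k - i) * 2) ((f - l) ^ (k - i)) := LB_pow hgLB (k - i)
    have h3 : LB 0 (((k.choose i : ℕ) : MvPolynomial σ K)) := fun _ _ => Nat.zero_le _
    have := LB_mul (LB_mul h1 h2) h3
    exact LB_mono (by omega) this
  have heq2 : l ^ k = -((∑ i ∈ Finset.range k,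
      l ^ i * (f - l) ^ (k - i) * ((k.choose i : ℕ) : MvPolynomial σ K)) +
      ∑ j ∈ Finset.Icc 1 k, c j * f ^ (k - j)) := by
    rw [hfk] at heq
    linear_combination heq
  have hrhs : LB (k + 1) (l ^ k) := by
    rw [heq2]
    refine LB_neg (LB_add hHLB (LB_sum fun j hj => ?_))
    obtain ⟨hj1, hj2⟩ := Finset.mem_Icc.mp hj
    have h1 := hcLB j hj1 hj2
    have h2 : LB ((k - j) * 1) (f ^ (k - j)) := LB_pow hf1 (k - j)
    exact LB_mono (by omega) (LB_mul h1 h2)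
  have hlkne : l ^ k ≠ 0 := pow_ne_zero k hlne
  obtain ⟨e, he⟩ : (l ^ k).support.Nonempty :=
    Finset.nonempty_iff_ne_empty.mpr fun h => hlkne (MvPolynomial.support_eq_empty.mp h)
  have h1 := hrhs e he
  have h2 : e.degree = k := by
    have := hdeg_of_hom (hlhom.pow k) e he
    omega
  omega

/-- Splitting off one variable from a positive-degree exponent vector. -/
lemma exists_split (v : σ →₀ ℕ) (hv : 1 ≤ v.degree) :
    ∃ (u : σ) (v' : σ →₀ ℕ), v = v' + Finsupp.single u 1 ∧ v'.degree + 1 = v.degree := by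
  classical
  have hv0 : v ≠ 0 := by
    intro h
    rw [h, map_zero] at hv
    omega
  obtain ⟨u, hu⟩ := Finsupp.ne_iff.mp hv0
  rw [Finsupp.coe_zero, Pi.zero_apply] at hu
  refine ⟨u, v - Finsupp.single u 1, ?_, ?_⟩
  · ext x
    rw [Finsupp.add_apply, Finsupp.tsub_apply, Finsupp.single_apply]
    rcases eq_or_ne u x with rfl | h
    · rw [if_pos rfl]; omega
    · rw [if_neg h]; omega
  · have h2 : v = (v - Finsupp.single u 1) + Finsupp.single u 1 := by
      ext x
      rw [Finsupp.add_apply, Finsupp.tsub_apply, Finsupp.single_apply]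
      rcases eq_or_ne u x with rfl | h
      · rw [if_pos rfl]; omega
      · rw [if_neg h]; omega
    conv_rhs => rw [h2]
    rw [degree_add', degree_single']

/-- Degree-two monomials belong to the span of the products of two variables. -/
lemma monomial_mem_spanS (v : σ →₀ ℕ) (cf : K) (hv : 2 ≤ v.degree) :
    monomial v cf ∈ Ideal.span {f : MvPolynomial σ K | ∃ u w : σ, f = X u * X w} := by
  classical
  obtain ⟨u, v1, hvv1, hd1⟩ := exists_split v (by omega)
  obtain ⟨w, v2, hvv2, hd2⟩ := exists_split v1 (by omega)
  have key : monomial v cf = monomial v2 cf * (X w * X u) := by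
    rw [show (X w * X u : MvPolynomial σ K) =
        monomial (Finsupp.single w 1 + Finsupp.single u 1) 1 by
      rw [X, X, monomial_mul, mul_one]]
    rw [monomial_mul, mul_one, hvv1, hvv2, add_assoc]
  rw [key]
  exact Ideal.mul_mem_left _ _ (Ideal.subset_span ⟨w, u, rfl⟩)

end Main

/-- The integral closure of the edge ideal of a strong quasi-`n`-partite
graph is generated by monomials of degree 2. -/
theorem stmt3 {K : Type*} [Field K] (n : ℕ) (hn : 1 ≤ n) (m : Fin n → ℕ)
    (hm : ∀ i, 1 ≤ m i) :
    ∃ S : Set (MvPolynomial (Σ i : Fin n, Fin (m i)) K),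
      (edgeIdealSQ K n m).intClosure = Ideal.span S ∧
      ∀ f ∈ S, ∃ a : (Σ i : Fin n, Fin (m i)) →₀ ℕ,
        (a.sum fun _ e => e) = 2 ∧ f = monomial a (1 : K) := by
  classical
  set σ := (Σ i : Fin n, Fin (m i))
  set I := edgeIdealSQ K n m with hIdef
  refine ⟨{f : MvPolynomial σ K | ∃ u w : σ, f = X u * X w}, ?_, ?_⟩
  · -- edgeIdealSQ ≤ lbIdeal 2
    have hI2 : I ≤ lbIdeal σ K 2 := by
      rw [hIdef, edgeIdealSQ, Ideal.span_le]
      rintro f (⟨i, i', h, h', hne, rfl⟩ | ⟨i, h, rfl⟩)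
      · exact LB_X_mul_X _ _
      · exact LB_X_sq _
    have hXsq : ∀ u : σ, (X u ^ 2 : MvPolynomial σ K) ∈ I := by
      intro u
      rw [hIdef, edgeIdealSQ]
      exact Ideal.subset_span (Or.inr ⟨u.1, u.2, by rw [Sigma.eta]⟩)
    apply le_antisymm
    · -- intClosure ≤ span S
      rw [Ideal.intClosure, Ideal.span_le]
      intro f hf
      have hf2 : LB 2 f := integral_LB2 hI2 hf
      rw [SetLike.mem_coe, f.as_sum]
      exact Ideal.sum_mem _ fun v hv => monomial_mem_spanS v _ (hf2 v hv)
    · -- span S ≤ intClosure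
      rw [Ideal.span_le]
      rintro f ⟨u, w, rfl⟩
      rw [Ideal.intClosure]
      apply Ideal.subset_span
      refine ⟨2, by omega, fun j => if j = 2 then -((X u * X w) ^ 2) else 0, ?_, ?_⟩
      · intro j h1 h2
        interval_cases j
        · show (if (1:ℕ) = 2 then -((X u * X w) ^ 2) else (0 : MvPolynomial σ K)) ∈ I ^ 1
          rw [if_neg (by norm_num)]
          exact Submodule.zero_mem _
        · show (if (2:ℕ) = 2 then -((X u * X w) ^ 2) else (0 : MvPolynomial σ K)) ∈ I ^ 2
          rw [if_pos rfl]
          apply neg_mem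
          rw [show ((X u * X w : MvPolynomial σ K)) ^ 2 = (X u ^ 2) * (X w ^ 2) by ring,
            sq I]
          exact Ideal.mul_mem_mul (hXsq u) (hXsq w)
      · have hIcc : Finset.Icc 1 2 = ({1, 2} : Finset ℕ) := rfl
        rw [hIcc, Finset.sum_insert (by decide), Finset.sum_singleton]
        show (X u * X w) ^ 2 +
          ((if (1:ℕ) = 2 then -((X u * X w) ^ 2) else 0) * (X u * X w) ^ (2 - 1) +
           (if (2:ℕ) = 2 then -((X u * X w) ^ 2) else 0) * (X u * X w) ^ (2 - 2)) = 0
        rw [if_neg (by norm_num), if_pos rfl]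
        ring
  · rintro f ⟨u, w, rfl⟩
    refine ⟨Finsupp.single u 1 + Finsupp.single w 1, ?_, ?_⟩
    · have : ((Finsupp.single u 1 + Finsupp.single w 1 : σ →₀ ℕ).sum fun _ e => e) =
          (Finsupp.single u 1 + Finsupp.single w 1 : σ →₀ ℕ).degree := by
        simp only [Finsupp.degree_apply, Finsupp.sum]
      rw [this, degree_add', degree_single', degree_single']
    · rw [X, X, monomial_mul, mul_one]
end

section
/- Let G be a strong quasi-n-partite graph such that m_i ≥ 2 for at least one index i, and let I(G) ⊂ T be its edge ideal. Then I(G) is not integrally closed, i.e., I(G) ≠ I(G)̄; in fact, for any part V_i containing two distinct vertices x_{ir}, x_{ir'}, the monomial x_{ir}x_{ir'} belongs to I(G)̄ but not to I(G). -/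
open MvPolynomial

/-- If some part `Vᵢ` of a strong quasi-`n`-partite graph `G` contains two
distinct vertices `x_{ir}, x_{ir'}`, then the monomial `x_{ir} x_{ir'}` lies in the
integral closure of `I(G)` but not in `I(G)`; in particular `I(G)` is not integrally
closed. -/
theorem stmt4 {K : Type*} [Field K] (n : ℕ) (hn : 1 ≤ n) (m : Fin n → ℕ)
    (hm : ∀ i, 1 ≤ m i) (i : Fin n) (r r' : Fin (m i)) (hrr' : r ≠ r') :
    (X ⟨i, r⟩ * X ⟨i, r'⟩ ∈ (edgeIdealSQ K n m).intClosure ∧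
      X ⟨i, r⟩ * X ⟨i, r'⟩ ∉ edgeIdealSQ K n m) ∧
    edgeIdealSQ K n m ≠ (edgeIdealSQ K n m).intClosure := by
  classical
  set σ := (Σ i : Fin n, Fin (m i)) with hσ
  set a : σ := ⟨i, r⟩
  set b : σ := ⟨i, r'⟩
  have hab : a ≠ b := by
    intro h
    obtain ⟨-, h2⟩ := Sigma.mk.inj_iff.mp h
    exact hrr' (eq_of_heq h2)
  -- rewrite the edge ideal as span of monomials
  set S : Set (σ →₀ ℕ) :=
    {e | ∃ u v : σ, u.1 ≠ v.1 ∧ e = Finsupp.single u 1 + Finsupp.single v 1} ∪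
    {e | ∃ u : σ, e = Finsupp.single u 2} with hS
  have hXX : ∀ u v : σ, (X u * X v : MvPolynomial σ K)
      = monomial (Finsupp.single u 1 + Finsupp.single v 1) 1 := by
    intro u v
    rw [X, X, monomial_mul, one_mul]
  have hspan : edgeIdealSQ K n m = Ideal.span ((fun e => monomial e 1) '' S) := by
    unfold edgeIdealSQ
    congr 1
    ext f
    constructor
    · rintro (⟨i1, i2, h1, h2, hne, rfl⟩ | ⟨i1, h1, rfl⟩)
      · refine ⟨Finsupp.single ⟨i1, h1⟩ 1 + Finsupp.single ⟨i2, h2⟩ 1,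
          Or.inl ⟨⟨i1, h1⟩, ⟨i2, h2⟩, hne, rfl⟩, ?_⟩
        exact (hXX ⟨i1, h1⟩ ⟨i2, h2⟩).symm
      · exact ⟨Finsupp.single ⟨i1, h1⟩ 2, Or.inr ⟨⟨i1, h1⟩, rfl⟩,
          (X_pow_eq_monomial).symm⟩
    · rintro ⟨e, (⟨u, v, hne, rfl⟩ | ⟨u, rfl⟩), rfl⟩
      · exact Or.inl ⟨u.1, v.1, u.2, v.2, hne, (hXX u v).symm⟩
      · exact Or.inr ⟨u.1, u.2, (X_pow_eq_monomial).symm⟩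
  have hnotmem : X a * X b ∉ edgeIdealSQ K n m := by
    rw [hspan, MvPolynomial.mem_ideal_span_monomial_image]
    intro H
    have hsupp : (X a * X b : MvPolynomial σ K).support
        = {Finsupp.single a 1 + Finsupp.single b 1} := by
      rw [hXX, support_monomial, if_neg one_ne_zero]
    obtain ⟨si, hsi, hle⟩ := H (Finsupp.single a 1 + Finsupp.single b 1)
      (by rw [hsupp]; exact Finset.mem_singleton_self _)
    have hle' : ∀ w : σ, si w ≤ (Finsupp.single a 1 : σ →₀ ℕ) w
        + (Finsupp.single b 1 : σ →₀ ℕ) w := by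
      intro w
      have := Finsupp.le_def.mp hle w
      simpa [Finsupp.add_apply] using this
    have hval : ∀ w : σ, (Finsupp.single a 1 : σ →₀ ℕ) w
        + (Finsupp.single b 1 : σ →₀ ℕ) w ≤ 1 := by
      intro w
      simp only [Finsupp.single_apply]
      rcases eq_or_ne a w with h1 | h1
      · rcases eq_or_ne b w with h2 | h2
        · exact absurd (h1.trans h2.symm) hab
        · simp [h1, h2]
      · rcases eq_or_ne b w with h2 | h2 <;> simp [h1, h2]
    rcases hsi with ⟨u, v, hne, rfl⟩ | ⟨u, rfl⟩
    · have key : ∀ w : σ, 1 ≤ (Finsupp.single a 1 : σ →₀ ℕ) w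
          + (Finsupp.single b 1 : σ →₀ ℕ) w → w = a ∨ w = b := by
        intro w h1
        simp only [Finsupp.single_apply] at h1
        by_contra hc
        push_neg at hc
        rw [if_neg (fun h => hc.1 h.symm), if_neg (fun h => hc.2 h.symm)] at h1
        omega
      have hu : u = a ∨ u = b := by
        apply key
        refine le_trans ?_ (hle' u)
        simp [Finsupp.add_apply, Finsupp.single_apply]
      have hv : v = a ∨ v = b := by
        apply key
        refine le_trans ?_ (hle' v)
        simp [Finsupp.add_apply, Finsupp.single_apply]
      have hu1 : u.1 = i := by rcases hu with rfl | rfl <;> rfl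
      have hv1 : v.1 = i := by rcases hv with rfl | rfl <;> rfl
      exact hne (hu1.trans hv1.symm)
    · have h2 : (2 : ℕ) ≤ (Finsupp.single a 1 : σ →₀ ℕ) u
          + (Finsupp.single b 1 : σ →₀ ℕ) u := by
        have := hle' u
        simpa [Finsupp.single_apply] using this
      exact absurd (le_trans h2 (hval u)) (by norm_num)
  have hgen_a : (X a : MvPolynomial σ K) ^ 2 ∈ edgeIdealSQ K n m :=
    Ideal.subset_span (Or.inr ⟨i, r, rfl⟩)
  have hgen_b : (X b : MvPolynomial σ K) ^ 2 ∈ edgeIdealSQ K n m :=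
    Ideal.subset_span (Or.inr ⟨i, r', rfl⟩)
  have hmem : X a * X b ∈ (edgeIdealSQ K n m).intClosure := by
    apply Ideal.subset_span
    refine ⟨2, by norm_num, fun j => if j = 2 then -((X a * X b) ^ 2) else 0, ?_, ?_⟩
    · intro j hj1 hj2
      interval_cases j
      · simp
      · simp only [if_pos rfl]
        apply neg_mem
        have : ((X a * X b : MvPolynomial σ K)) ^ 2 = (X a ^ 2) * (X b ^ 2) := by ring
        rw [this, pow_two]
        exact Ideal.mul_mem_mul hgen_a hgen_b
    · rw [show Finset.Icc 1 2 = {1, 2} from rfl]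
      simp
  refine ⟨⟨hmem, hnotmem⟩, ?_⟩
  intro h
  rw [← h] at hmem
  exact hnotmem hmem
end

section
/- Let G be a strong quasi-n-partite graph and I(G) ⊂ T its edge ideal. Then I(G)̄ = Σ I_{1l_1} I_{2l_2} ⋯ I_{nl_n}, where the sum is over all tuples (l_1,…,l_n) of nonnegative integers with l_1 + … + l_n = 2, and I_{il} = (x_{i1},…,x_{im_i})^l is the l-th power of the ideal generated by the variables of the i-th block. Equivalently, I(G)̄ is the ideal generated by all monomials of degree 2 in the variables of T, i.e., the square of the maximal graded ideal (x_{11},…,x_{nm_n}). -/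
open MvPolynomial Pointwise

lemma key_dvd {R : Type*} [CommRing R] [IsDomain R] {p : R} (hp : Prime p)
    {g : R} {k : ℕ} (hk : 0 < k) {c : ℕ → R}
    (hc : ∀ j, 1 ≤ j → j ≤ k → p ^ (2 * j) ∣ c j)
    (heq : g ^ k + ∑ j ∈ Finset.Icc 1 k, c j * g ^ (k - j) = 0) : p ^ 2 ∣ g := by
  have hgk : g ^ k = -∑ j ∈ Finset.Icc 1 k, c j * g ^ (k - j) :=
    eq_neg_of_add_eq_zero_left heq
  have hpg : p ∣ g := by
    refine hp.dvd_of_dvd_pow (n := k) ?_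
    rw [hgk, dvd_neg]
    refine Finset.dvd_sum fun j hj => ?_
    rw [Finset.mem_Icc] at hj
    exact dvd_mul_of_dvd_left
      ((dvd_pow_self p (by omega : 2 * j ≠ 0)).trans (hc j hj.1 hj.2)) _
  obtain ⟨u, hu⟩ := hpg
  have hpu : p ∣ u := by
    have h1 : p ^ (k + 1) ∣ ∑ j ∈ Finset.Icc 1 k, c j * g ^ (k - j) := by
      refine Finset.dvd_sum fun j hj => ?_
      rw [Finset.mem_Icc] at hj
      have h2 : p ^ (2 * j) * p ^ (k - j) ∣ c j * g ^ (k - j) :=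
        mul_dvd_mul (hc j hj.1 hj.2) (pow_dvd_pow_of_dvd ⟨u, hu⟩ _)
      refine dvd_trans (pow_dvd_pow p ?_) (by rwa [← pow_add] at h2)
      omega
    rw [← dvd_neg, ← hgk, hu, mul_pow] at h1
    rw [pow_succ] at h1
    have h4 : p ∣ u ^ k :=
      (mul_dvd_mul_iff_left (pow_ne_zero k hp.ne_zero)).mp h1
    exact hp.dvd_of_dvd_pow h4
  obtain ⟨v, hv⟩ := hpu
  exact ⟨v, by rw [hu, hv, pow_two, mul_assoc]⟩

lemma psi_coeff {K : Type*} [CommRing K] {σ : Type*} [DecidableEq σ] (a : σ)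
    (f : MvPolynomial σ K) (e : ℕ) :
    Polynomial.coeff
      (aeval (fun b => if b = a then (Polynomial.X : Polynomial K) else 0) f) e
      = MvPolynomial.coeff (Finsupp.single a e) f := by
  conv_lhs => rw [← support_sum_monomial_coeff f]
  rw [map_sum, Polynomial.finset_sum_coeff]
  have key : ∀ d ∈ f.support,
      Polynomial.coeff
        (aeval (fun b => if b = a then (Polynomial.X : Polynomial K) else 0)
          (monomial d (coeff d f))) e
      = if d = Finsupp.single a e then coeff d f else 0 := by
    intro d _
    rw [aeval_monomial]
    by_cases hsub : d.support ⊆ {a}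
    · obtain ⟨t, hd⟩ := Finsupp.support_subset_singleton'.mp hsub
      subst hd
      have hprod : ((Finsupp.single a t).prod fun b k =>
          (if b = a then (Polynomial.X : Polynomial K) else 0) ^ k)
          = Polynomial.X ^ t := by
        rw [Finsupp.prod_single_index (by rw [pow_zero])]
        rw [if_pos rfl]
      rw [hprod, Polynomial.algebraMap_eq, Polynomial.coeff_C_mul,
        Polynomial.coeff_X_pow]
      have hiff : t = e ↔ Finsupp.single a t = Finsupp.single a e :=
        ⟨fun h => by rw [h], fun h => Finsupp.single_injective a h⟩
      rcases eq_or_ne t e with h | h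
      · rw [if_pos h.symm, if_pos (hiff.mp h), mul_one]
      · rw [if_neg (Ne.symm h), if_neg (fun hh => h (hiff.mpr hh)), mul_zero]
    · obtain ⟨b, hb, hba⟩ : ∃ b ∈ d.support, b ≠ a := by
        by_contra h; push_neg at h
        exact hsub fun x hx => Finset.mem_singleton.mpr (h x hx)
      have hprod : (d.prod fun b k =>
          (if b = a then (Polynomial.X : Polynomial K) else 0) ^ k) = 0 := by
        refine Finset.prod_eq_zero hb ?_
        show ((if b = a then (Polynomial.X : Polynomial K) else 0) ^ (d b)) = 0
        rw [if_neg hba, zero_pow (Finsupp.mem_support_iff.mp hb)]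
      have hne : d ≠ Finsupp.single a e := by
        intro h
        apply hba
        have := Finsupp.mem_support_iff.mp hb
        rw [h, Finsupp.single_apply] at this
        by_contra hne'
        exact this (if_neg (Ne.symm hne'))
      rw [hprod, mul_zero, Polynomial.coeff_zero, if_neg hne]
  rw [Finset.sum_congr rfl key, Finset.sum_ite_eq' f.support (Finsupp.single a e)]
  split_ifs with h
  · rfl
  · exact (MvPolynomial.notMem_support_iff.mp h).symm

lemma mem_sq_of_coeff {K : Type*} [CommRing K] {σ : Type*} [DecidableEq σ]
    (f : MvPolynomial σ K) (h0 : coeff 0 f = 0)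
    (h1 : ∀ a : σ, coeff (Finsupp.single a 1) f = 0) :
    f ∈ (Ideal.span (Set.range (X : σ → MvPolynomial σ K))) ^ 2 := by
  rw [← support_sum_monomial_coeff f]
  refine Ideal.sum_mem _ fun d hd => ?_
  obtain ⟨a, b, hab⟩ : ∃ a b, Finsupp.single a 1 + Finsupp.single b 1 ≤ d := by
    have hdne : d ≠ 0 := by
      rintro rfl; exact MvPolynomial.mem_support_iff.mp hd h0
    obtain ⟨a, ha⟩ := Finsupp.ne_iff.mp hdne
    rw [Finsupp.coe_zero, Pi.zero_apply] at ha
    by_cases h2 : 2 ≤ d a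
    · refine ⟨a, a, Finsupp.le_def.mpr fun x => ?_⟩
      simp only [Finsupp.add_apply, Finsupp.single_apply]
      split_ifs with hax
      · subst hax; omega
      · omega
    · have hda : d a = 1 := by omega
      have hne : d ≠ Finsupp.single a 1 := by
        rintro rfl
        exact MvPolynomial.mem_support_iff.mp hd (h1 a)
      obtain ⟨b, hb⟩ := Finsupp.ne_iff.mp hne
      have hba : b ≠ a := by
        rintro rfl; rw [Finsupp.single_eq_same] at hb; exact hb hda
      rw [Finsupp.single_apply, if_neg (Ne.symm hba)] at hb
      refine ⟨a, b, Finsupp.le_def.mpr fun x => ?_⟩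
      simp only [Finsupp.add_apply, Finsupp.single_apply]
      split_ifs with hax hbx hbx
      · exact absurd (hbx.trans hax.symm) hba
      · subst hax; omega
      · subst hbx; omega
      · omega
  have hdec : d = Finsupp.single a 1 + Finsupp.single b 1
      + (d - (Finsupp.single a 1 + Finsupp.single b 1)) :=
    (add_tsub_cancel_of_le hab).symm
  have hmon : (monomial d (coeff d f) : MvPolynomial σ K)
      = X a * X b * monomial (d - (Finsupp.single a 1 + Finsupp.single b 1)) (coeff d f) := by
    rw [X, X, monomial_mul, monomial_mul, one_mul, one_mul, ← hdec]
  rw [hmon]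
  refine Ideal.mul_mem_right _ _ ?_
  rw [pow_two]
  exact Ideal.mul_mem_mul (Ideal.subset_span ⟨a, rfl⟩) (Ideal.subset_span ⟨b, rfl⟩)

lemma prod_ideal_le_prod {R : Type*} [CommRing R] {ι : Type*} (s : Finset ι)
    (f g : ι → Ideal R) (h : ∀ i ∈ s, f i ≤ g i) :
    ∏ i ∈ s, f i ≤ ∏ i ∈ s, g i := by
  classical
  induction s using Finset.induction_on with
  | empty => simp
  | @insert x s hx ih =>
    rw [Finset.prod_insert hx, Finset.prod_insert hx]
    exact Ideal.mul_mono (h _ (Finset.mem_insert_self _ _))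
      (ih fun i hi => h i (Finset.mem_insert_of_mem hi))

/-- For a strong quasi-`n`-partite graph `G`,
`I(G)̄ = Σ_{l₁+⋯+lₙ=2} I_{1l₁} ⋯ I_{nlₙ}` where `I_{il} = (x_{i1}, …, x_{im_i})^l`;
equivalently, `I(G)̄` is the square of the maximal graded ideal `(x_{11}, …, x_{nm_n})`. -/
theorem stmt5 {K : Type*} [Field K] (n : ℕ) (hn : 1 ≤ n) (m : Fin n → ℕ)
    (hm : ∀ i, 1 ≤ m i) :
    (edgeIdealSQ K n m).intClosure =
      (⨆ l : {l : Fin n → ℕ // ∑ i, l i = 2},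
        ∏ i : Fin n,
          (Ideal.span {f : MvPolynomial (Σ i : Fin n, Fin (m i)) K |
            ∃ h : Fin (m i), f = X ⟨i, h⟩}) ^ (l.1 i)) ∧
    (edgeIdealSQ K n m).intClosure =
      (Ideal.span (Set.range (X : (Σ i : Fin n, Fin (m i)) →
        MvPolynomial (Σ i : Fin n, Fin (m i)) K))) ^ 2 := by
  classical
  set M : Ideal (MvPolynomial (Σ i : Fin n, Fin (m i)) K) :=
    Ideal.span (Set.range X) with hM
  set I := edgeIdealSQ K n m with hIdef
  have hMsq : M ^ 2 = Ideal.span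
      (Set.range (X : (Σ i : Fin n, Fin (m i)) → MvPolynomial (Σ i : Fin n, Fin (m i)) K) *
       Set.range (X : (Σ i : Fin n, Fin (m i)) → MvPolynomial (Σ i : Fin n, Fin (m i)) K)) := by
    rw [pow_two, hM, Ideal.span_mul_span']
  -- main equality: intClosure I = M ^ 2
  have hmain : I.intClosure = M ^ 2 := by
    apply le_antisymm
    · -- closure ≤ M^2
      rw [Ideal.intClosure]
      refine Ideal.span_le.mpr fun f hf => ?_
      obtain ⟨k, hk, c, hc, heq⟩ := hf
      -- coefficient vanishing via ψ_a
      have hcoeff : ∀ (a : Σ i : Fin n, Fin (m i)) (e : ℕ), e ≤ 1 →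
          coeff (Finsupp.single a e) f = 0 := by
        intro a e he
        set ψ : MvPolynomial (Σ i : Fin n, Fin (m i)) K →ₐ[K] Polynomial K :=
          aeval (fun b => if b = a then (Polynomial.X : Polynomial K) else 0) with hψ
        have hgen : I ≤ Ideal.comap ψ (Ideal.span {(Polynomial.X : Polynomial K) ^ 2}) := by
          rw [hIdef, edgeIdealSQ]
          refine Ideal.span_le.mpr fun g hg => ?_
          rw [SetLike.mem_coe, Ideal.mem_comap]
          rcases hg with ⟨i, i', h, h', _, rfl⟩ | ⟨i, h, rfl⟩
          · rw [map_mul, hψ, aeval_X, aeval_X]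
            rw [Ideal.mem_span_singleton]
            split_ifs <;> simp [pow_two]
          · rw [map_pow, hψ, aeval_X, Ideal.mem_span_singleton]
            split_ifs <;> simp
        have hdvd : ∀ j, 1 ≤ j → j ≤ k →
            (Polynomial.X : Polynomial K) ^ (2 * j) ∣ ψ (c j) := by
          intro j hj1 hj2
          have h1 : Ideal.map ψ (I ^ j) ≤ Ideal.span {(Polynomial.X : Polynomial K) ^ 2} ^ j := by
            rw [Ideal.map_pow]
            exact Ideal.pow_right_mono (Ideal.map_le_iff_le_comap.mpr hgen) j
          have h2 : ψ (c j) ∈ Ideal.span {(Polynomial.X : Polynomial K) ^ 2} ^ j :=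
            h1 (Ideal.mem_map_of_mem _ (hc j hj1 hj2))
          rw [Ideal.span_singleton_pow, ← pow_mul] at h2
          exact Ideal.mem_span_singleton.mp h2
        have heq' : ψ f ^ k + ∑ j ∈ Finset.Icc 1 k, ψ (c j) * ψ f ^ (k - j) = 0 := by
          have h3 := congrArg ψ heq
          rw [map_add, map_pow, map_sum, map_zero] at h3
          simpa only [map_mul, map_pow] using h3
        have hX2 : (Polynomial.X : Polynomial K) ^ 2 ∣ ψ f :=
          key_dvd Polynomial.prime_X hk hdvd heq'
        obtain ⟨g, hg⟩ := hX2
        have : Polynomial.coeff (ψ f) e = 0 := by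
          rw [hg, mul_comm, Polynomial.coeff_mul_X_pow', if_neg (by omega)]
        rwa [hψ, psi_coeff] at this
      have h0 : coeff 0 f = 0 := by
        have a0 : Σ i : Fin n, Fin (m i) := ⟨⟨0, hn⟩, ⟨0, hm ⟨0, hn⟩⟩⟩
        have := hcoeff a0 0 (by omega)
        rwa [Finsupp.single_zero] at this
      exact mem_sq_of_coeff f h0 fun a => hcoeff a 1 le_rfl
    · -- M^2 ≤ closure
      rw [hMsq, Ideal.intClosure]
      refine Ideal.span_le.mpr ?_
      rintro _ ⟨_, ⟨a, rfl⟩, _, ⟨b, rfl⟩, rfl⟩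
      apply Ideal.subset_span
      refine ⟨2, two_pos, fun j => if j = 2 then -(X a ^ 2 * X b ^ 2) else 0, ?_, ?_⟩
      · intro j hj1 hj2
        interval_cases j
        · show (if (1:ℕ) = 2 then -(X a ^ 2 * X b ^ 2) else 0) ∈ I ^ 1
          rw [if_neg (by omega)]; exact Ideal.zero_mem _
        · show (if (2:ℕ) = 2 then -(X a ^ 2 * X b ^ 2) else 0) ∈ I ^ 2
          rw [if_pos rfl]
          refine neg_mem ?_
          rw [pow_two]
          refine Ideal.mul_mem_mul ?_ ?_ <;>
            [exact Ideal.subset_span (Set.mem_union_right _ ⟨a.1, a.2, by rw [Sigma.eta]⟩);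
             exact Ideal.subset_span (Set.mem_union_right _ ⟨b.1, b.2, by rw [Sigma.eta]⟩)]
      · have hIcc : Finset.Icc 1 2 = {1, 2} := rfl
        rw [hIcc, Finset.sum_insert (by decide), Finset.sum_singleton]
        norm_num
        ring
  -- sup identity
  have hsup : (⨆ l : {l : Fin n → ℕ // ∑ i, l i = 2},
        ∏ i : Fin n,
          (Ideal.span {f : MvPolynomial (Σ i : Fin n, Fin (m i)) K |
            ∃ h : Fin (m i), f = X ⟨i, h⟩}) ^ (l.1 i)) = M ^ 2 := by
    set J : Fin n → Ideal (MvPolynomial (Σ i : Fin n, Fin (m i)) K) :=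
      fun i => Ideal.span {f | ∃ h : Fin (m i), f = X ⟨i, h⟩} with hJ
    have hJM : ∀ i, J i ≤ M := by
      intro i
      rw [hJ]
      refine Ideal.span_le.mpr ?_
      rintro _ ⟨h, rfl⟩
      exact Ideal.subset_span ⟨⟨i, h⟩, rfl⟩
    apply le_antisymm
    · refine iSup_le fun l => ?_
      calc ∏ i, J i ^ l.1 i ≤ ∏ i, M ^ l.1 i :=
            prod_ideal_le_prod _ _ _ fun i _ => Ideal.pow_right_mono (hJM i) _
        _ = M ^ ∑ i, l.1 i := Finset.prod_pow_eq_pow_sum _ _ _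
        _ = M ^ 2 := by rw [l.2]
    · rw [hMsq]
      refine Ideal.span_le.mpr ?_
      rintro _ ⟨_, ⟨a, rfl⟩, _, ⟨b, rfl⟩, rfl⟩
      set l : Fin n → ℕ := fun j => (if j = a.1 then 1 else 0) + (if j = b.1 then 1 else 0)
        with hl
      have hlsum : ∑ i, l i = 2 := by
        rw [hl]
        rw [Finset.sum_add_distrib, Finset.sum_ite_eq' Finset.univ a.1 (fun _ => 1),
          Finset.sum_ite_eq' Finset.univ b.1 (fun _ => 1)]
        simp
      refine le_iSup (fun l : {l : Fin n → ℕ // ∑ i, l i = 2} =>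
          ∏ i : Fin n, J i ^ (l.1 i)) ⟨l, hlsum⟩ ?_
      have hprod : (X a : MvPolynomial (Σ i : Fin n, Fin (m i)) K) * X b = ∏ i : Fin n,
          ((if i = a.1 then X a else 1) * (if i = b.1 then X b else 1)) := by
        rw [Finset.prod_mul_distrib,
          Finset.prod_ite_eq' Finset.univ a.1 (fun _ => X (σ := Σ i : Fin n, Fin (m i)) a),
          Finset.prod_ite_eq' Finset.univ b.1 (fun _ => X (σ := Σ i : Fin n, Fin (m i)) b)]
        simp
      show (X a : MvPolynomial (Σ i : Fin n, Fin (m i)) K) * X b ∈ ∏ i : Fin n, J i ^ l i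
      rw [hprod]
      refine Ideal.prod_mem_prod fun i _ => ?_
      show _ ∈ J i ^ ((if i = a.1 then 1 else 0) + (if i = b.1 then 1 else 0))
      rw [pow_add]
      refine Ideal.mul_mem_mul ?_ ?_
      · split_ifs with h
        · subst h; rw [pow_one]; exact Ideal.subset_span ⟨a.2, by rw [Sigma.eta]⟩
        · rw [pow_zero, Ideal.one_eq_top]; exact Submodule.mem_top
      · split_ifs with h
        · subst h; rw [pow_one]; exact Ideal.subset_span ⟨b.2, by rw [Sigma.eta]⟩
        · rw [pow_zero, Ideal.one_eq_top]; exact Submodule.mem_top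
  exact ⟨hmain.trans hsup.symm, hmain⟩
end

section
/- Let G be a strong quasi-n-partite graph and I(G) ⊂ T its edge ideal, with monomial generators u_1,…,u_q whose exponent vectors decompose blockwise as u_j = X_1^{a_{j,1}} ⋯ X_n^{a_{j,n}}, where a_{j,i} ∈ ℤ_{≥0}^{m_i} records the exponents of u_j in the variables x_{i1},…,x_{im_i}. Then I(G)̄ ⊆ Ĩ(G), where Ĩ(G) is the monomial ideal generated by all products X_1^{⌈α_1⌉} ⋯ X_n^{⌈α_n⌉} in which, for each i, α_i ∈ ℚ_{≥0}^{m_i} is a convex combination of a_{1,i},…,a_{q,i} and ⌈α_i⌉ denotes its componentwise ceiling. -/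
open MvPolynomial

section Aux

variable {K : Type*} [Field K] {σ : Type*}

/-- the grading map `X s ↦ X s ⬝ t`. -/
noncomputable def psiHom (K σ : Type*) [CommSemiring K] :
    MvPolynomial σ K →+* Polynomial (MvPolynomial σ K) :=
  eval₂Hom (Polynomial.C.comp MvPolynomial.C) fun s => Polynomial.C (X s) * Polynomial.X

lemma psi_monomial (d : σ →₀ ℕ) (c : K) :
    psiHom K σ (monomial d c) =
      Polynomial.C (monomial d c) * Polynomial.X ^ (d.sum fun _ e => e) := by
  rw [psiHom, coe_eval₂Hom, eval₂_monomial]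
  simp_rw [mul_pow, ← Polynomial.C_pow]
  rw [Finsupp.prod, Finset.prod_mul_distrib, ← map_prod, Finset.prod_pow_eq_pow_sum,
    RingHom.comp_apply, ← mul_assoc, ← map_mul, monomial_eq, Finsupp.prod, Finsupp.sum]

lemma psi_injective : Function.Injective (psiHom K σ) := by
  have h : (Polynomial.evalRingHom (1 : MvPolynomial σ K)).comp (psiHom K σ) = RingHom.id _ := by
    apply MvPolynomial.ringHom_ext <;> intro s <;>
      simp [psiHom]
  intro f g hfg
  have := congrArg (Polynomial.evalRingHom (1 : MvPolynomial σ K)) hfg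
  rwa [← RingHom.comp_apply, ← RingHom.comp_apply, h, RingHom.id_apply, RingHom.id_apply] at this

lemma coeff_psi (f : MvPolynomial σ K) (d : σ →₀ ℕ) :
    MvPolynomial.coeff d ((psiHom K σ f).coeff (d.sum fun _ e => e)) = coeff d f := by
  conv_lhs => rw [f.as_sum]
  rw [map_sum, Polynomial.finset_sum_coeff, MvPolynomial.coeff_sum]
  conv_rhs => rw [f.as_sum]
  rw [MvPolynomial.coeff_sum]
  apply Finset.sum_congr rfl
  intro e _
  rw [psi_monomial, Polynomial.coeff_C_mul, Polynomial.coeff_X_pow]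
  by_cases he : e = d
  · subst he; simp
  · classical
    rw [MvPolynomial.coeff_monomial, if_neg he]
    split_ifs <;> simp [MvPolynomial.coeff_monomial, if_neg he]

lemma integral_dvd {I : Ideal (MvPolynomial σ K)}
    (hI : Ideal.map (psiHom K σ) I ≤ Ideal.span {Polynomial.X ^ 2})
    {f : MvPolynomial σ K} (hf : I.IsIntegralElemOver f) :
    Polynomial.X ^ 2 ∣ psiHom K σ f := by
  by_cases hf0 : f = 0
  · simp [hf0]
  obtain ⟨k, hk, c, hc, heq⟩ := hf
  set F := psiHom K σ f with hF
  have hF0 : F ≠ 0 := fun h => hf0 (psi_injective (by simpa using h))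
  set nd := F.natTrailingDegree with hnd
  have hpow : ∀ p : ℕ, (F ^ p).natTrailingDegree = p * nd := by
    intro p
    induction p with
    | zero => simp
    | succ p ih =>
      rw [pow_succ, Polynomial.natTrailingDegree_mul (pow_ne_zero _ hF0) hF0, ih]
      ring
  have htc : ∀ p : ℕ, (F ^ p).trailingCoeff = F.trailingCoeff ^ p := by
    intro p
    induction p with
    | zero => simp [Polynomial.trailingCoeff]
    | succ p ih => rw [pow_succ, Polynomial.trailingCoeff_mul, ih, pow_succ]
  suffices h2 : 2 ≤ nd by
    rw [Polynomial.X_pow_dvd_iff]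
    intro e he
    exact Polynomial.coeff_eq_zero_of_lt_natTrailingDegree (lt_of_lt_of_le he h2)
  by_contra hnd2
  push_neg at hnd2
  have key := congrArg (fun g => Polynomial.coeff g (k * nd)) (congrArg (psiHom K σ) heq)
  simp only [map_add, map_pow, map_sum, map_mul, map_zero, Polynomial.coeff_zero,
    Polynomial.coeff_add, Polynomial.finset_sum_coeff] at key
  have h1 : (F ^ k).coeff (k * nd) = F.trailingCoeff ^ k := by
    rw [← htc k, ← hpow k]; rfl
  have h2 : ∀ j ∈ Finset.Icc 1 k, (psiHom K σ (c j) * F ^ (k - j)).coeff (k * nd) = 0 := by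
    intro j hj
    obtain ⟨hj1, hjk⟩ := Finset.mem_Icc.mp hj
    by_cases hc0 : psiHom K σ (c j) = 0
    · simp [hc0]
    have hmem : psiHom K σ (c j) ∈ Ideal.span {Polynomial.X ^ 2} ^ j := by
      have h3 : psiHom K σ (c j) ∈ Ideal.map (psiHom K σ) (I ^ j) :=
        Ideal.mem_map_of_mem _ (hc j hj1 hjk)
      rw [Ideal.map_pow] at h3
      exact Ideal.pow_right_mono hI j h3
    rw [Ideal.span_singleton_pow, Ideal.mem_span_singleton, ← pow_mul] at hmem
    obtain ⟨g, hg⟩ := hmem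
    have hg0 : g ≠ 0 := by rintro rfl; exact hc0 (by simp [hg])
    apply Polynomial.coeff_eq_zero_of_lt_natTrailingDegree
    rw [Polynomial.natTrailingDegree_mul hc0 (pow_ne_zero _ hF0), hpow, hg,
      Polynomial.natTrailingDegree_mul (pow_ne_zero _ Polynomial.X_ne_zero) hg0, Polynomial.natTrailingDegree_X_pow]
    have e1 : j + (k - j) = k := by omega
    have e2 : j * nd ≤ j * 1 := Nat.mul_le_mul_left j (by omega)
    calc k * nd = j * nd + (k - j) * nd := by rw [← add_mul, e1]
      _ < 2 * j + g.natTrailingDegree + (k - j) * nd := by omega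
  rw [Finset.sum_congr rfl h2, Finset.sum_const_zero, h1, add_zero] at key
  exact (fun h => hF0 (Polynomial.trailingCoeff_eq_zero.mp h)) (pow_eq_zero_iff (by omega) |>.mp key)

lemma X_mul_X' (u v : σ) :
    (X u : MvPolynomial σ K) * X v =
      monomial (Finsupp.single u 1 + Finsupp.single v 1) 1 := by
  rw [X, X, monomial_mul, one_mul]

variable {n : ℕ} {m : Fin n → ℕ}

/-- The set of exponents of the generators of the edge ideal. -/
def Eset (n : ℕ) (m : Fin n → ℕ) : Set ((Σ i : Fin n, Fin (m i)) →₀ ℕ) :=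
  {e | (∃ u v : (Σ i : Fin n, Fin (m i)), u.1 ≠ v.1 ∧
      e = Finsupp.single u 1 + Finsupp.single v 1) ∨
    ∃ u : (Σ i : Fin n, Fin (m i)), e = Finsupp.single u 2}

lemma edge_eq (K : Type*) [Field K] (n : ℕ) (m : Fin n → ℕ) :
    edgeIdealSQ K n m =
      Ideal.span ((fun e => monomial e (1 : K)) '' Eset n m) := by
  rw [edgeIdealSQ]
  congr 1
  ext g
  constructor
  · rintro (⟨i, i', h, h', hne, rfl⟩ | ⟨i, h, rfl⟩)
    · exact ⟨_, Or.inl ⟨⟨i, h⟩, ⟨i', h'⟩, hne, rfl⟩, (X_mul_X' _ _).symm⟩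
    · exact ⟨_, Or.inr ⟨⟨i, h⟩, rfl⟩, X_pow_eq_monomial.symm⟩
  · rintro ⟨e, (⟨u, v, huv, rfl⟩ | ⟨u, rfl⟩), rfl⟩
    · exact Or.inl ⟨u.1, v.1, u.2, v.2, huv, (X_mul_X' _ _).symm⟩
    · exact Or.inr ⟨u.1, u.2, X_pow_eq_monomial.symm⟩

lemma loops_mem {K : Type*} [Field K] {n : ℕ} {m : Fin n → ℕ} {q : ℕ}
    {a : Fin q → ((Σ i : Fin n, Fin (m i)) →₀ ℕ)}
    (hgen : edgeIdealSQ K n m =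
      Ideal.span (Set.range fun j : Fin q => monomial (a j) (1 : K)))
    (s : Σ i : Fin n, Fin (m i)) : ∃ j, a j = Finsupp.single s 2 := by
  classical
  have h1 : (monomial (Finsupp.single s 2) (1:K)) ∈
      Ideal.span (Set.range fun j : Fin q => monomial (a j) (1:K)) := by
    rw [← hgen, edgeIdealSQ]
    exact Ideal.subset_span (Or.inr ⟨s.1, s.2, X_pow_eq_monomial.symm⟩)
  have h2 : (Set.range fun j : Fin q => monomial (a j) (1:K)) =
      (fun e => monomial e (1:K)) '' (Set.range a) := by
    rw [← Set.range_comp]; rfl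
  rw [h2, mem_ideal_span_monomial_image] at h1
  obtain ⟨e, ⟨j, rfl⟩, hle⟩ := h1 (Finsupp.single s 2) (by simp [support_monomial])
  refine ⟨j, le_antisymm hle ?_⟩
  have h3 : monomial (a j) (1:K) ∈
      Ideal.span ((fun e => monomial e (1:K)) '' Eset n m) := by
    rw [← edge_eq, hgen]
    exact Ideal.subset_span (Set.mem_range_self j)
  rw [mem_ideal_span_monomial_image] at h3
  obtain ⟨e', he'E, hle'⟩ := h3 (a j) (by simp [support_monomial])
  rcases he'E with ⟨u, v, huv, rfl⟩ | ⟨u, rfl⟩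
  · exfalso
    have hu := le_trans ((Finsupp.le_def.mp hle') u) ((Finsupp.le_def.mp hle) u)
    have hv := le_trans ((Finsupp.le_def.mp hle') v) ((Finsupp.le_def.mp hle) v)
    simp only [Finsupp.add_apply, Finsupp.single_apply, eq_self_iff_true, if_true] at hu hv
    have hus : s = u := by by_contra hnot; rw [if_neg hnot] at hu; omega
    have hvs : s = v := by by_contra hnot; rw [if_neg hnot] at hv; omega
    exact huv (by rw [← hus, ← hvs])
  · have hus : s = u := by
      have hu := le_trans ((Finsupp.le_def.mp hle') u) ((Finsupp.le_def.mp hle) u)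
      simp only [Finsupp.single_apply, eq_self_iff_true, if_true] at hu
      by_contra hnot; rw [if_neg hnot] at hu; omega
    subst hus
    exact hle'

lemma quad_mem {K : Type*} [Field K] {n : ℕ} {m : Fin n → ℕ} {q : ℕ}
    {a : Fin q → ((Σ i : Fin n, Fin (m i)) →₀ ℕ)}
    (hgen : edgeIdealSQ K n m =
      Ideal.span (Set.range fun j : Fin q => monomial (a j) (1 : K)))
    (s t : Σ i : Fin n, Fin (m i)) :
    (monomial (Finsupp.single s 1 + Finsupp.single t 1) (1:K)) ∈
      Ideal.span {f : MvPolynomial (Σ i : Fin n, Fin (m i)) K |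
        ∃ b : (Σ i : Fin n, Fin (m i)) →₀ ℕ,
          (∀ i : Fin n, ∃ w : Fin q → ℚ,
            (∀ j, 0 ≤ w j) ∧ (∑ j, w j) = 1 ∧
            ∀ h : Fin (m i),
              (b ⟨i, h⟩ : ℤ) = ⌈∑ j, w j * ((a j) ⟨i, h⟩ : ℚ)⌉) ∧
          f = monomial b (1 : K)} := by
  classical
  obtain ⟨j0, hj0⟩ := loops_mem hgen s
  obtain ⟨j1, hj1⟩ := loops_mem hgen t
  apply Ideal.subset_span
  refine ⟨Finsupp.single s 1 + Finsupp.single t 1, fun i => ?_, rfl⟩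
  refine ⟨fun j => (if j = j0 then (1:ℚ)/2 else 0) + (if j = j1 then (1:ℚ)/2 else 0),
    ?_, ?_, fun h => ?_⟩
  · intro j
    dsimp only; positivity
  · rw [Finset.sum_add_distrib, Finset.sum_ite_eq' Finset.univ, Finset.sum_ite_eq' Finset.univ]
    simp only [Finset.mem_univ, if_true]
    norm_num
  · have hsum : (∑ j, ((if j = j0 then (1:ℚ)/2 else 0) + (if j = j1 then (1:ℚ)/2 else 0)) *
        ((a j) ⟨i, h⟩ : ℚ)) =
        (((Finsupp.single s 1 + Finsupp.single t 1 :
            (Σ i : Fin n, Fin (m i)) →₀ ℕ) ⟨i, h⟩ : ℕ) : ℚ) := by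
      simp_rw [add_mul, ite_mul, zero_mul, Finset.sum_add_distrib,
        Finset.sum_ite_eq' Finset.univ]
      simp only [Finset.mem_univ, if_true, hj0, hj1, Finsupp.add_apply,
        Finsupp.single_apply]
      push_cast
      split_ifs <;> norm_num
    rw [hsum, Int.ceil_natCast]

end Aux

/-- Let `u_j = monomial (a j) 1`, `j = 1, …, q`, be monomial generators of the
edge ideal `I(G)` of a strong quasi-`n`-partite graph.  Then `I(G)̄ ⊆ Ĩ(G)`, where `Ĩ(G)`
is generated by the monomials whose `i`-th block of exponents is the componentwise ceiling
`⌈αᵢ⌉` of some rational convex combination `αᵢ` of the `i`-th blocks of the `a j`. -/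
theorem stmt6 {K : Type*} [Field K] (n : ℕ) (hn : 1 ≤ n) (m : Fin n → ℕ)
    (hm : ∀ i, 1 ≤ m i) (q : ℕ) (a : Fin q → ((Σ i : Fin n, Fin (m i)) →₀ ℕ))
    (hgen : edgeIdealSQ K n m =
      Ideal.span (Set.range fun j : Fin q => monomial (a j) (1 : K))) :
    (edgeIdealSQ K n m).intClosure ≤
      Ideal.span {f : MvPolynomial (Σ i : Fin n, Fin (m i)) K |
        ∃ b : (Σ i : Fin n, Fin (m i)) →₀ ℕ,
          (∀ i : Fin n, ∃ w : Fin q → ℚ,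
            (∀ j, 0 ≤ w j) ∧ (∑ j, w j) = 1 ∧
            ∀ h : Fin (m i),
              (b ⟨i, h⟩ : ℤ) = ⌈∑ j, w j * ((a j) ⟨i, h⟩ : ℚ)⌉) ∧
          f = monomial b (1 : K)} := by
  classical
  have hC : Ideal.map (psiHom K (Σ i : Fin n, Fin (m i))) (edgeIdealSQ K n m) ≤
      Ideal.span {Polynomial.X ^ 2} := by
    rw [edgeIdealSQ, Ideal.map_span]
    apply Ideal.span_le.2
    rintro g ⟨p, hp, rfl⟩
    rw [SetLike.mem_coe, Ideal.mem_span_singleton]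
    have hX : ∀ u : (Σ i : Fin n, Fin (m i)),
        psiHom K _ (X u) = Polynomial.C (X u) * Polynomial.X := fun u => by
      simp [psiHom]
    rcases hp with ⟨i, i', h, h', hne, rfl⟩ | ⟨i, h, rfl⟩
    · exact ⟨Polynomial.C (X ⟨i, h⟩) * Polynomial.C (X ⟨i', h'⟩), by
        rw [map_mul, hX, hX]; ring⟩
    · exact ⟨Polynomial.C (X ⟨i, h⟩) * Polynomial.C (X ⟨i, h⟩), by
        rw [map_pow, hX]; ring⟩
  rw [Ideal.intClosure]
  apply Ideal.span_le.2
  intro f hf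
  have hdvd : Polynomial.X ^ 2 ∣ psiHom K _ f := integral_dvd hC hf
  have hcoeff : ∀ d : (Σ i : Fin n, Fin (m i)) →₀ ℕ,
      (d.sum fun _ e => e) < 2 → coeff d f = 0 := by
    intro d hd
    rw [← coeff_psi f d, Polynomial.X_pow_dvd_iff.mp hdvd _ hd]
    simp
  rw [SetLike.mem_coe, ← support_sum_monomial_coeff f]
  apply Ideal.sum_mem
  intro d hd
  have hdeg : 2 ≤ d.sum fun _ e => e := by
    by_contra hlt
    push_neg at hlt
    exact (mem_support_iff.mp hd) (hcoeff d hlt)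
  have hd0 : d ≠ 0 := by rintro rfl; simp at hdeg
  obtain ⟨s, hs⟩ := Finsupp.support_nonempty_iff.mpr hd0
  have hs' : d s ≠ 0 := Finsupp.mem_support_iff.mp hs
  have hds : Finsupp.single s 1 ≤ d := Finsupp.single_le_iff.2 (by omega)
  have hrec : d - Finsupp.single s 1 + Finsupp.single s 1 = d := tsub_add_cancel_of_le hds
  have hd'0 : d - Finsupp.single s 1 ≠ 0 := by
    intro h0
    rw [h0, zero_add] at hrec
    rw [← hrec, Finsupp.sum_single_index] at hdeg
    · omega
    · rfl
  obtain ⟨t, ht⟩ := Finsupp.support_nonempty_iff.mpr hd'0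
  have ht' := Finsupp.mem_support_iff.mp ht
  have hdt : Finsupp.single t 1 ≤ d - Finsupp.single s 1 :=
    Finsupp.single_le_iff.2 (Nat.one_le_iff_ne_zero.mpr ht')
  have hrec2 : d - Finsupp.single s 1 - Finsupp.single t 1 + Finsupp.single t 1 =
      d - Finsupp.single s 1 := tsub_add_cancel_of_le hdt
  have hdec : d = (d - Finsupp.single s 1 - Finsupp.single t 1) +
      (Finsupp.single s 1 + Finsupp.single t 1) := by
    conv_lhs => rw [← hrec, ← hrec2]
    rw [add_assoc, add_comm (Finsupp.single t 1) (Finsupp.single s 1)]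
  have hmono : monomial d (coeff d f) =
      monomial (d - Finsupp.single s 1 - Finsupp.single t 1) (coeff d f) *
        monomial (Finsupp.single s 1 + Finsupp.single t 1) (1:K) := by
    rw [monomial_mul, mul_one, ← hdec]
  rw [hmono]
  exact Ideal.mul_mem_left _ _ (quad_mem hgen s t)
end

section
/- Let G be a strong quasi-n-partite graph and I(G) ⊂ T its edge ideal. Then the integral closure I(G)̄ has linear quotients: there is an ordering f_1,…,f_q of the minimal monomial generators of I(G)̄ such that for each 2 ≤ j ≤ q the colon ideal (f_1,…,f_{j-1}) : (f_j) is generated by a subset of the variables of T. -/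
open MvPolynomial

section Low
variable {K : Type*} [CommRing K] {σ : Type*}

/-- The ideal of polynomials all of whose monomials have degree at least `t`. -/
def lowI (K : Type*) [CommRing K] (σ : Type*) (t : ℕ) : Ideal (MvPolynomial σ K) where
  carrier := {p | ∀ d ∈ p.support, t ≤ Finsupp.degree d}
  zero_mem' := by intro d hd; simp at hd
  add_mem' := by
    classical
    intro p q hp hq d hd
    have := MvPolynomial.support_add (p := p) (q := q) hd
    rcases Finset.mem_union.1 this with h | h
    · exact hp d h
    · exact hq d h
  smul_mem' := by
    classical
    intro c p hp d hd
    rw [smul_eq_mul] at hd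
    have := MvPolynomial.support_mul c p hd
    rcases Finset.mem_add.1 this with ⟨d1, hd1, d2, hd2, rfl⟩
    have : Finsupp.degree d2 ≤ Finsupp.degree (d1 + d2) := by
      simp [Finsupp.degree_eq_weight_one, map_add]
    exact le_trans (hp d2 hd2) this

lemma mem_lowI {t : ℕ} {p : MvPolynomial σ K} :
    p ∈ lowI K σ t ↔ ∀ d ∈ p.support, t ≤ Finsupp.degree d := Iff.rfl

lemma lowI_anti {s t : ℕ} (h : s ≤ t) : lowI K σ t ≤ lowI K σ s :=
  fun _p hp d hd => le_trans h (hp d hd)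

lemma mul_mem_lowI {s t : ℕ} {p q : MvPolynomial σ K}
    (hp : p ∈ lowI K σ s) (hq : q ∈ lowI K σ t) : p * q ∈ lowI K σ (s + t) := by
  classical
  intro d hd
  rcases Finset.mem_add.1 (MvPolynomial.support_mul p q hd) with ⟨d1, hd1, d2, hd2, rfl⟩
  have : Finsupp.degree (d1 + d2) = Finsupp.degree d1 + Finsupp.degree d2 := by
    simp [Finsupp.degree_eq_weight_one, map_add]
  rw [this]
  exact add_le_add (hp d1 hd1) (hq d2 hd2)

lemma pow_mem_lowI {t : ℕ} {p : MvPolynomial σ K} (hp : p ∈ lowI K σ t) (k : ℕ) :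
    p ^ k ∈ lowI K σ (t * k) := by
  induction k with
  | zero => exact fun d hd => by simpa using Nat.zero_le _
  | succ k ih =>
      rw [pow_succ, Nat.mul_succ]
      exact mul_mem_lowI ih hp

lemma pow_le_lowI {I : Ideal (MvPolynomial σ K)} {t : ℕ} (hI : I ≤ lowI K σ t) (j : ℕ) :
    I ^ j ≤ lowI K σ (t * j) := by
  induction j with
  | zero => exact fun p _ d hd => by simpa using Nat.zero_le _
  | succ j ih =>
      rw [pow_succ]
      intro p hp
      refine Submodule.mul_induction_on hp (fun a ha b hb => ?_) (fun x y hx hy => ?_)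
      · rw [Nat.mul_succ]
        exact mul_mem_lowI (ih ha) (hI hb)
      · exact Ideal.add_mem _ hx hy

end Low

section M2
variable {K : Type*} [CommRing K] {σ : Type*}

lemma exists_le_of_two_le_degree {d : σ →₀ ℕ} (hd : 2 ≤ Finsupp.degree d) :
    ∃ u v : σ, Finsupp.single u 1 + Finsupp.single v 1 ≤ d := by
  classical
  have hne : d.support.Nonempty := by
    rcases Finset.eq_empty_or_nonempty d.support with h | h
    · exfalso; have : d = 0 := by simpa using h
      rw [this] at hd; simp [Finsupp.degree] at hd
    · exact h
  obtain ⟨u, hu⟩ := hne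
  have hu1 : 1 ≤ d u := Nat.one_le_iff_ne_zero.2 (Finsupp.mem_support_iff.1 hu)
  by_cases h2 : 2 ≤ d u
  · refine ⟨u, u, ?_⟩
    intro w
    by_cases hw : w = u
    · subst hw; simpa using h2
    · simp [Finsupp.single_apply, Ne.symm hw]
  · -- d u = 1; find another v
    have hdu : d u = 1 := le_antisymm (by omega) hu1
    have : ∃ v ∈ d.support, v ≠ u := by
      by_contra hc
      push_neg at hc
      have : d.support ⊆ {u} := fun w hw => Finset.mem_singleton.2 (hc w hw)
      have : Finsupp.degree d ≤ d u := by
        unfold Finsupp.degree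
        calc ∑ i ∈ d.support, d i ≤ ∑ i ∈ {u}, d i :=
              Finset.sum_le_sum_of_subset_of_nonneg this (by intros; exact Nat.zero_le _)
          _ = d u := Finset.sum_singleton _ _
      omega
    obtain ⟨v, hv, hvu⟩ := this
    have hv1 : 1 ≤ d v := Nat.one_le_iff_ne_zero.2 (Finsupp.mem_support_iff.1 hv)
    refine ⟨u, v, ?_⟩
    intro w
    simp only [Finsupp.coe_add, Pi.add_apply, Finsupp.single_apply]
    by_cases hwu : u = w
    · subst hwu
      simp [hvu, hdu]
    · by_cases hwv : v = w
      · subst hwv; simpa [hwu] using hv1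
      · simp [hwu, hwv]

lemma X_mul_X_eq_monomial (u v : σ) :
    (X u * X v : MvPolynomial σ K) =
      monomial (Finsupp.single u 1 + Finsupp.single v 1) 1 := by
  rw [MvPolynomial.X, MvPolynomial.X, MvPolynomial.monomial_mul, one_mul]

lemma degree_pair (u v : σ) :
    Finsupp.degree (Finsupp.single u 1 + Finsupp.single v 1) = 2 := by
  classical
  have h : ∀ w : σ, Finsupp.degree (Finsupp.single w (1:ℕ)) = 1 := by
    intro w; exact Finsupp.degree_single w 1
  simp [Finsupp.degree_eq_weight_one, map_add] at h ⊢
  rw [h u, h v]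

/-- The ideal generated by all products of two variables. -/
noncomputable def M2 (K : Type*) [CommRing K] (σ : Type*) : Ideal (MvPolynomial σ K) :=
  Ideal.span {g | ∃ u v : σ, g = X u * X v}

lemma M2_le_lowI : M2 K σ ≤ lowI K σ 2 := by
  rw [M2, Ideal.span_le]
  rintro g ⟨u, v, rfl⟩
  intro d hd
  rw [X_mul_X_eq_monomial] at hd
  have := MvPolynomial.support_monomial_subset hd
  rw [Finset.mem_singleton] at this
  subst this
  rw [degree_pair]

lemma lowI_le_M2 : lowI K σ 2 ≤ M2 K σ := by
  classical
  intro p hp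
  rw [show p = ∑ d ∈ p.support, monomial d (coeff d p) from
    (MvPolynomial.support_sum_monomial_coeff p).symm]
  refine Ideal.sum_mem _ (fun d hd => ?_)
  obtain ⟨u, v, huv⟩ := exists_le_of_two_le_degree (hp d hd)
  have : monomial d (coeff d p) =
      (X u * X v) * monomial (d - (Finsupp.single u 1 + Finsupp.single v 1)) (coeff d p) := by
    rw [X_mul_X_eq_monomial, MvPolynomial.monomial_mul, one_mul,
      add_tsub_cancel_of_le huv]
  rw [this]
  exact Ideal.mul_mem_right _ _ (Ideal.subset_span ⟨u, v, rfl⟩)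

end M2

section Closure
variable {K : Type*} [Field K] {σ : Type*}

lemma homogeneousComponent_eq_zero_of_lowI {n : ℕ} {p : MvPolynomial σ K}
    (hp : p ∈ lowI K σ (n + 1)) : homogeneousComponent n p = 0 :=
  homogeneousComponent_eq_zero' n p (fun d hd => by
    have := hp d hd; omega)

lemma homogeneousComponent_mem_lowI (t : ℕ) (p : MvPolynomial σ K) :
    homogeneousComponent t p ∈ lowI K σ t := by
  intro d hd
  rw [MvPolynomial.mem_support_iff, coeff_homogeneousComponent] at hd
  by_cases h : Finsupp.degree d = t
  · omega
  · simp [h] at hd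

lemma sub_homogeneousComponent_mem_lowI {t : ℕ} {p : MvPolynomial σ K}
    (hp : p ∈ lowI K σ t) : p - homogeneousComponent t p ∈ lowI K σ (t + 1) := by
  intro d hd
  rw [MvPolynomial.mem_support_iff, MvPolynomial.coeff_sub, coeff_homogeneousComponent] at hd
  by_cases h : Finsupp.degree d = t
  · simp [h] at hd
  · simp only [h, if_false, sub_zero] at hd
    have := hp d (MvPolynomial.mem_support_iff.2 hd)
    omega

lemma pow_decomp {t : ℕ} {p : MvPolynomial σ K} (hp : p ∈ lowI K σ t) (k : ℕ) :
    p ^ k - (homogeneousComponent t p) ^ k ∈ lowI K σ (t * k + 1) := by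
  set h := homogeneousComponent t p with hh
  induction k with
  | zero => simp
  | succ k ih =>
      have key : p ^ (k+1) - h ^ (k+1)
          = (p ^ k - h ^ k) * p + h ^ k * (p - h) := by ring
      rw [key]
      refine Ideal.add_mem _ ?_ ?_
      · have := mul_mem_lowI ih hp
        exact lowI_anti (by ring_nf; omega) this
      · have hl : h ∈ lowI K σ t := homogeneousComponent_mem_lowI t p
        have := mul_mem_lowI (pow_mem_lowI hl k) (sub_homogeneousComponent_mem_lowI hp)
        exact lowI_anti (by ring_nf; omega) this

lemma homogeneousComponent_pow_self {t k : ℕ} (p : MvPolynomial σ K) :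
    homogeneousComponent (t * k) ((homogeneousComponent t p) ^ k)
      = (homogeneousComponent t p) ^ k := by
  have h1 : ((homogeneousComponent t p) ^ k).IsHomogeneous (t * k) :=
    (homogeneousComponent_isHomogeneous t p).pow k
  rw [homogeneousComponent_of_mem ((mem_homogeneousSubmodule _ _).2 h1), if_pos rfl]

/-- Key lemma: every element integral over an ideal contained in `lowI 2` lies in `lowI 2`. -/
lemma integral_mem_lowI {I : Ideal (MvPolynomial σ K)} (hI : I ≤ lowI K σ 2)
    {p : MvPolynomial σ K} (hp : I.IsIntegralElemOver p) : p ∈ lowI K σ 2 := by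
  classical
  by_contra hcon
  rw [mem_lowI] at hcon
  push_neg at hcon
  obtain ⟨d0, hd0, hd0lt⟩ := hcon
  -- minimal degree t of p
  set Dset := p.support.image Finsupp.degree with hD
  have hDne : Dset.Nonempty := ⟨_, Finset.mem_image_of_mem _ hd0⟩
  set t := Dset.min' hDne with ht
  have ht1 : t ≤ 1 := by
    have : t ≤ Finsupp.degree d0 := Finset.min'_le _ _ (Finset.mem_image_of_mem _ hd0)
    omega
  have hpt : p ∈ lowI K σ t := by
    intro d hd
    exact Finset.min'_le _ _ (Finset.mem_image_of_mem _ hd)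
  have hcne : homogeneousComponent t p ≠ 0 := by
    obtain ⟨d1, hd1, hd1t⟩ := Finset.mem_image.1 (Finset.min'_mem _ hDne)
    intro hzero
    have := coeff_homogeneousComponent t p d1
    rw [hzero, hd1t] at this
    simp at this
    exact MvPolynomial.mem_support_iff.1 hd1 (this ht.symm).symm
  obtain ⟨k, hk, c, hc, heq⟩ := hp
  -- apply homogeneousComponent (t*k) to the equation
  set h := homogeneousComponent t p with hh
  have hterm : ∀ j ∈ Finset.Icc 1 k, c j * p ^ (k - j) ∈ lowI K σ (t * k + 1) := by
    intro j hj
    rw [Finset.mem_Icc] at hj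
    have h1 : c j ∈ lowI K σ (2 * j) := pow_le_lowI hI j (hc j hj.1 hj.2)
    have h2 : p ^ (k - j) ∈ lowI K σ (t * (k - j)) := pow_mem_lowI hpt _
    have := mul_mem_lowI h1 h2
    refine lowI_anti ?_ this
    have hjk : j ≤ k := hj.2
    have : t * k = t * (k - j) + t * j := by
      rw [← Nat.mul_add, Nat.sub_add_cancel hjk]
    have htj : t * j ≤ j := by
      calc t * j ≤ 1 * j := Nat.mul_le_mul_right _ ht1
        _ = j := one_mul j
    omega
  have hsum : (∑ j ∈ Finset.Icc 1 k, c j * p ^ (k - j)) ∈ lowI K σ (t * k + 1) :=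
    Ideal.sum_mem _ hterm
  have hpk : p ^ k - h ^ k ∈ lowI K σ (t * k + 1) := pow_decomp hpt k
  have hzero : h ^ k = 0 := by
    have e1 : h ^ k = homogeneousComponent (t * k) (h ^ k) :=
      (homogeneousComponent_pow_self p).symm
    have e2 : homogeneousComponent (t * k) (p ^ k - h ^ k) = 0 :=
      homogeneousComponent_eq_zero_of_lowI hpk
    have e3 : homogeneousComponent (t * k) (∑ j ∈ Finset.Icc 1 k, c j * p ^ (k - j)) = 0 :=
      homogeneousComponent_eq_zero_of_lowI hsum
    have e4 : homogeneousComponent (t * k)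
        (p ^ k + ∑ j ∈ Finset.Icc 1 k, c j * p ^ (k - j)) = 0 := by
      rw [heq]; simp
    rw [map_add] at e4
    have e5 : homogeneousComponent (t * k) (p ^ k) = h ^ k := by
      have hsub := map_sub (homogeneousComponent (t * k)) (p ^ k) (h ^ k)
      rw [e2] at hsub
      have heqc : homogeneousComponent (t * k) (p ^ k)
          = homogeneousComponent (t * k) (h ^ k) := by
        have := hsub.symm
        rwa [sub_eq_zero] at this
      rw [heqc, ← e1]
    rw [e5, e3, add_zero] at e4
    exact e4
  have : h = 0 := by
    have hk' : k ≠ 0 := by omega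
    exact pow_eq_zero_iff hk' |>.1 hzero
  exact hcne this

end Closure

section ClosureEq

lemma isIntegral_of_sq_mem_sq {R : Type*} [CommRing R] {I : Ideal R} {g : R}
    (h : g ^ 2 ∈ I ^ 2) : I.IsIntegralElemOver g := by
  refine ⟨2, by norm_num, fun j => if j = 2 then -(g ^ 2) else 0, ?_, ?_⟩
  · intro j h1 h2
    interval_cases j
    · simp
    · simpa using neg_mem h
  · have : Finset.Icc 1 2 = ({1, 2} : Finset ℕ) := by decide
    rw [this]
    simp

variable {K : Type*} [Field K] {n : ℕ} {m : Fin n → ℕ}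

lemma edge_le_M2 : edgeIdealSQ K n m ≤ M2 K (Σ i : Fin n, Fin (m i)) := by
  rw [edgeIdealSQ, Ideal.span_le]
  rintro g (⟨i, i', h, h', _, rfl⟩ | ⟨i, h, rfl⟩)
  · exact Ideal.subset_span ⟨_, _, rfl⟩
  · exact Ideal.subset_span ⟨⟨i, h⟩, ⟨i, h⟩, by rw [sq]⟩

lemma sq_mem_edge (u : Σ i : Fin n, Fin (m i)) :
    (X u : MvPolynomial (Σ i : Fin n, Fin (m i)) K) ^ 2 ∈ edgeIdealSQ K n m := by
  refine Ideal.subset_span (Or.inr ⟨u.1, u.2, ?_⟩)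
  rfl

lemma intClosure_edge_eq_M2 :
    (edgeIdealSQ K n m).intClosure = M2 K (Σ i : Fin n, Fin (m i)) := by
  apply le_antisymm
  · rw [Ideal.intClosure, Ideal.span_le]
    intro g hg
    exact lowI_le_M2 (integral_mem_lowI (le_trans edge_le_M2 M2_le_lowI) hg)
  · rw [M2, Ideal.span_le]
    rintro g ⟨u, v, rfl⟩
    refine Ideal.subset_span (isIntegral_of_sq_mem_sq ?_)
    have : (X u * X v : MvPolynomial (Σ i : Fin n, Fin (m i)) K) ^ 2
        = (X u ^ 2) * (X v ^ 2) := by ring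
    rw [this, sq (edgeIdealSQ K n m)]
    exact Ideal.mul_mem_mul (sq_mem_edge u) (sq_mem_edge v)

end ClosureEq

section Pairs

lemma finsupp_degree_add {σ : Type*} (a b : σ →₀ ℕ) :
    Finsupp.degree (a + b) = Finsupp.degree a + Finsupp.degree b := by
  simp [Finsupp.degree_eq_weight_one, map_add]

lemma finsupp_eq_of_le_of_degree_le {σ : Type*} {a b : σ →₀ ℕ} (h : a ≤ b)
    (hd : Finsupp.degree b ≤ Finsupp.degree a) : a = b := by
  have hb : a + (b - a) = b := add_tsub_cancel_of_le h
  have : Finsupp.degree a + Finsupp.degree (b - a) = Finsupp.degree b := by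
    rw [← finsupp_degree_add, hb]
  have h0 : Finsupp.degree (b - a) = 0 := by omega
  have : b - a = 0 := (Finsupp.degree_eq_zero_iff _).1 h0
  rw [← hb, this, add_zero]

lemma sorted_pair_eq {α : Type*} [LinearOrder α] {x y x' y' : α}
    (hxy : x ≤ y) (hxy' : x' ≤ y')
    (h : (Finsupp.single x 1 + Finsupp.single y 1 : α →₀ ℕ)
      = Finsupp.single x' 1 + Finsupp.single y' 1) :
    x = x' ∧ y = y' := by
  classical
  have hw : ∀ w, ((if x = w then 1 else 0) + (if y = w then 1 else 0) : ℕ)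
      = (if x' = w then 1 else 0) + (if y' = w then 1 else 0) := by
    intro w
    have := DFunLike.congr_fun h w
    simpa [Finsupp.single_apply] using this
  by_cases hx : x = x'
  · subst hx
    refine ⟨rfl, ?_⟩
    have h2 := hw y
    by_contra hne
    rw [if_pos rfl, if_neg (fun hh : y' = y => hne hh.symm)] at h2
    omega
  · exfalso
    have h3 := hw x'
    have hyx' : y = x' := by
      by_contra hne
      rw [if_neg hx, if_neg hne, if_pos rfl] at h3
      omega
    have h1 := hw x
    have hy'x : y' = x := by
      by_contra hne
      rw [if_pos rfl, if_neg (fun hh : x' = x => hx hh.symm), if_neg hne] at h1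
      omega
    have : x = x' := le_antisymm (hyx' ▸ hxy) (hy'x ▸ hxy')
    exact hx this
end Pairs

section Main
open Finsupp

theorem M2_linear_quotients (K : Type*) [Field K] (σ : Type*) [Fintype σ] [DecidableEq σ] :
    ∃ (q : ℕ) (f : Fin q → MvPolynomial σ K),
      (∀ j, ∃ a : σ →₀ ℕ, f j = monomial a (1 : K)) ∧
      M2 K σ = Ideal.span (Set.range f) ∧
      (∀ j : Fin q, f j ∉ Ideal.span (f '' {j' | j' ≠ j})) ∧
      (∀ j j' : Fin q, j ≤ j' → (f j).totalDegree ≤ (f j').totalDegree) ∧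
      (∀ j : Fin q, 0 < j.1 →
        ∃ V : Set σ,
          (Ideal.span (f '' {j' | j'.1 < j.1})).colon (Ideal.span {f j}) =
            Ideal.span (X '' V)) := by
  classical
  set N := Fintype.card σ with hN
  set e : σ ≃ Fin N := Fintype.equivFin σ with he
  set P := {p : Lex (Fin N × Fin N) // (ofLex p).2 ≤ (ofLex p).1} with hP
  set q := Fintype.card P with hq
  let π : Fin q ≃o P := monoEquivOfFin P rfl
  let A : Fin q → Fin N := fun j => (ofLex (π j).val).2
  let B : Fin q → Fin N := fun j => (ofLex (π j).val).1
  have hAB : ∀ j, A j ≤ B j := fun j => (π j).2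
  let u : Fin q → σ := fun j => e.symm (A j)
  let v : Fin q → σ := fun j => e.symm (B j)
  let s : Fin q → (σ →₀ ℕ) := fun j => Finsupp.single (u j) 1 + Finsupp.single (v j) 1
  let f : Fin q → MvPolynomial σ K := fun j => monomial (s j) 1
  have hfX : ∀ j, f j = X (u j) * X (v j) := fun j => (X_mul_X_eq_monomial _ _).symm
  -- every pair of variables is some f j
  have hsurj : ∀ u0 v0 : σ, ∃ j : Fin q, (X u0* X v0 : MvPolynomial σ K) = f j := by
    intro u0 v0
    set a : Fin N := min (e u0) (e v0)
    set b : Fin N := max (e u0) (e v0)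
    have hab : a ≤ b := min_le_max
    let p0 : P := ⟨toLex (b, a), hab⟩
    refine ⟨π.symm p0, ?_⟩
    have hA : A (π.symm p0) = a := by
      simp only [A, OrderIso.apply_symm_apply]
      rfl
    have hB : B (π.symm p0) = b := by
      simp only [B, OrderIso.apply_symm_apply]
      rfl
    rw [hfX]
    show (X u0 * X v0 : MvPolynomial σ K) = X (e.symm (A (π.symm p0))) * X (e.symm (B (π.symm p0)))
    rw [hA, hB]
    rcases le_total (e u0) (e v0) with h | h
    · have ha : a = e u0 := min_eq_left h
      have hb : b = e v0 := max_eq_right h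
      rw [ha, hb, Equiv.symm_apply_apply, Equiv.symm_apply_apply]
    · have ha : a = e v0 := min_eq_right h
      have hb : b = e u0 := max_eq_left h
      rw [ha, hb, Equiv.symm_apply_apply, Equiv.symm_apply_apply, mul_comm]
  -- injectivity of s on sorted pairs
  have hsinj : Function.Injective s := by
    intro j j' hs
    have hmap := congrArg (Finsupp.mapDomain e) hs
    rw [show s j = Finsupp.single (u j) 1 + Finsupp.single (v j) 1 from rfl,
      show s j' = Finsupp.single (u j') 1 + Finsupp.single (v j') 1 from rfl,
      Finsupp.mapDomain_add, Finsupp.mapDomain_add, Finsupp.mapDomain_single,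
      Finsupp.mapDomain_single, Finsupp.mapDomain_single, Finsupp.mapDomain_single,
      show e (u j) = A j from Equiv.apply_symm_apply e _,
      show e (v j) = B j from Equiv.apply_symm_apply e _,
      show e (u j') = A j' from Equiv.apply_symm_apply e _,
      show e (v j') = B j' from Equiv.apply_symm_apply e _] at hmap
    obtain ⟨hA, hB⟩ := sorted_pair_eq (hAB j) (hAB j') hmap
    have hval : (π j).val = (π j').val := by
      have h1 : ofLex (π j).val = ofLex (π j').val := Prod.ext hB hA
      exact ofLex.injective h1
    have : π j = π j' := Subtype.ext hval
    exact π.injective this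
  have hsval : ∀ (j0 : Fin q) (w : σ), s j0 w
      = (if A j0 = e w then 1 else 0) + (if B j0 = e w then 1 else 0) := by
    intro j0 w
    simp [s, u, v, Finsupp.single_apply, Equiv.symm_apply_eq]
  have hdeg2 : ∀ j0 : Fin q, Finsupp.degree (s j0) = 2 := fun j0 => degree_pair _ _
  refine ⟨q, f, fun j => ⟨s j, rfl⟩, ?_, ?_, ?_, ?_⟩
  · -- span equality
    apply le_antisymm
    · rw [M2, Ideal.span_le]
      rintro g ⟨u0, v0, rfl⟩
      obtain ⟨j, hj⟩ := hsurj u0 v0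
      rw [hj]
      exact Ideal.subset_span ⟨j, rfl⟩
    · rw [Ideal.span_le]
      rintro g ⟨j, rfl⟩
      exact Ideal.subset_span ⟨u j, v j, hfX j⟩
  · -- minimality
    intro j hj
    have himg : f '' {j' | j' ≠ j}
        = (fun d => monomial d (1 : K)) '' (s '' {j' | j' ≠ j}) := by
      rw [Set.image_image]
    rw [himg] at hj
    have hsupp : s j ∈ (f j).support := by
      simp [f, MvPolynomial.support_monomial]
    obtain ⟨si, hsi, hle⟩ := mem_ideal_span_monomial_image.1 hj _ hsupp
    obtain ⟨j', hj', rfl⟩ := hsi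
    have hdegle : Finsupp.degree (s j) ≤ Finsupp.degree (s j') := by
      rw [hdeg2, hdeg2]
    have : s j' = s j := finsupp_eq_of_le_of_degree_le hle hdegle
    exact hj' (hsinj this)
  · -- degrees
    intro j j' _
    have hd : ∀ j0 : Fin q, (f j0).totalDegree = 2 := by
      intro j0
      rw [show f j0 = monomial (s j0) 1 from rfl,
        totalDegree_monomial _ (one_ne_zero (α := K))]
      exact hdeg2 j0
    rw [hd, hd]
  · -- colon ideals
    intro j hj
    refine ⟨e.symm '' {c : Fin N | c < B j}, ?_⟩
    apply le_antisymm
    · intro p hp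
      rw [Ideal.mem_colon_span_singleton] at hp
      have hspan : Ideal.span (f '' {j' | j'.1 < j.1})
          = Ideal.span ((fun d => monomial d (1 : K)) '' (s '' {j' | j'.1 < j.1})) := by
        rw [Set.image_image]
      rw [hspan] at hp
      rw [mem_ideal_span_X_image]
      intro d hd
      have hmem : d + s j ∈ (p * f j).support := by
        rw [MvPolynomial.mem_support_iff,
          show f j = monomial (s j) 1 from rfl, coeff_mul_monomial, mul_one]
        exact MvPolynomial.mem_support_iff.1 hd
      obtain ⟨si, hsi, hle⟩ := mem_ideal_span_monomial_image.1 hp _ hmem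
      obtain ⟨j', hj', rfl⟩ := hsi
      have hlt : j' < j := hj'
      have hplt : π j' < π j := π.strictMono hlt
      have hlex : B j' < B j ∨ (B j' = B j ∧ A j' < A j) := by
        have h1 : (π j').val < (π j).val := hplt
        exact Prod.Lex.lt_iff.1 h1
      have hle' : ∀ w, s j' w ≤ d w + s j w := by
        intro w
        have := Finsupp.le_def.1 hle w
        simpa using this
      -- helper to finish: find coordinate c with c < B j and d (e.symm c) ≠ 0
      have finish : ∀ c : Fin N, c < B j → 1 ≤ d (e.symm c) →
          ∃ i ∈ e.symm '' {c : Fin N | c < B j}, d i ≠ 0 := by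
        intro c hc hd1
        exact ⟨e.symm c, ⟨c, hc, rfl⟩, by omega⟩
      rcases hlex with hb' | ⟨hbeq, halt⟩
      · by_cases hab' : A j' = B j'
        · -- square: s j' (u j') = 2
          refine finish (A j') (lt_of_le_of_lt (hAB j') hb') ?_
          have H := hle' (e.symm (A j'))
          rw [hsval j', hsval j, Equiv.apply_symm_apply] at H
          rw [if_pos rfl, if_pos hab'.symm] at H
          have hBne : ¬ B j = A j' := by
            intro hcon
            exact absurd (hcon ▸ (lt_of_le_of_lt (hAB j') hb')) (lt_irrefl _)
          rw [if_neg hBne] at H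
          by_cases hAe : A j = A j'
          · rw [if_pos hAe] at H; omega
          · rw [if_neg hAe] at H; omega
        · by_cases haa : A j' = A j
          · refine finish (B j') hb' ?_
            have H := hle' (e.symm (B j'))
            rw [hsval j', hsval j, Equiv.apply_symm_apply] at H
            have h1 : ¬ A j = B j' := by
              intro hcon
              exact hab' (le_antisymm (hAB j') (by rw [haa, hcon]))
            have h2 : ¬ B j = B j' := fun hcon => absurd (hcon ▸ hb') (lt_irrefl _)
            rw [if_neg (fun hh : A j' = B j' => hab' hh), if_pos rfl, if_neg h1,
              if_neg h2] at H
            omega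
          · refine finish (A j') (lt_of_le_of_lt (hAB j') hb') ?_
            have H := hle' (e.symm (A j'))
            rw [hsval j', hsval j, Equiv.apply_symm_apply] at H
            have h1 : ¬ A j = A j' := fun hh => haa hh.symm
            have h2 : ¬ B j = A j' := by
              intro hcon
              exact absurd (hcon ▸ (lt_of_le_of_lt (hAB j') hb')) (lt_irrefl _)
            have h3 : ¬ B j' = A j' := fun hh => hab' hh.symm
            rw [if_pos rfl, if_neg h3, if_neg h1, if_neg h2] at H
            omega
      · refine finish (A j') (lt_of_lt_of_le halt (hAB j)) ?_
        have H := hle' (e.symm (A j'))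
        rw [hsval j', hsval j, Equiv.apply_symm_apply] at H
        have h1 : ¬ A j = A j' := fun hcon => absurd (hcon ▸ halt) (lt_irrefl _)
        have h2 : ¬ B j = A j' := by
          intro hcon
          exact absurd (hcon ▸ (lt_of_lt_of_le halt (hAB j))) (lt_irrefl _)
        rw [if_pos rfl, if_neg h1, if_neg h2] at H
        by_cases hbb : B j' = A j'
        · rw [if_pos hbb] at H; omega
        · rw [if_neg hbb] at H; omega
    · rw [Ideal.span_le]
      rintro g ⟨xw, ⟨c, hc, rfl⟩, rfl⟩
      rw [SetLike.mem_coe, Ideal.mem_colon_span_singleton]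
      have hab2 : min (A j) c ≤ max (A j) c := min_le_max
      set p2 : P := ⟨toLex (max (A j) c, min (A j) c), hab2⟩ with hp2
      have hclt : c < B j := hc
      have hplt : p2 < π j := by
        have hgoal : max (A j) c < B j ∨ (max (A j) c = B j ∧ min (A j) c < A j) := by
          rcases lt_or_ge (max (A j) c) (B j) with h | h
          · exact Or.inl h
          · have hmaxle : max (A j) c ≤ B j := max_le (hAB j) hclt.le
            have hmax : max (A j) c = B j := le_antisymm hmaxle h
            refine Or.inr ⟨hmax, ?_⟩
            have hAeq : A j = B j := by
              rcases max_choice (A j) c with h1 | h1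
              · rw [← h1, hmax]
              · exact absurd (h1 ▸ hmax)
                  (fun hcon => absurd (hcon ▸ hclt) (lt_irrefl _))
            have hmin : min (A j) c = c := min_eq_right (by rw [hAeq]; exact hclt.le)
            rw [hmin, hAeq]
            exact hclt
        show toLex (max (A j) c, min (A j) c) < (π j).val
        have h2 : (π j).val = toLex (B j, A j) := rfl
        rw [h2, Prod.Lex.lt_iff]
        exact hgoal
      set j2 := π.symm p2 with hj2
      have hj2lt : j2 < j := by
        have : π j2 = p2 := π.apply_symm_apply p2
        have := π.symm.strictMono hplt
        rwa [OrderIso.symm_apply_apply] at this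
      have hA2 : A j2 = min (A j) c := by
        simp only [A, hj2, OrderIso.apply_symm_apply]
        rfl
      have hB2 : B j2 = max (A j) c := by
        simp only [B, hj2, OrderIso.apply_symm_apply]
        rfl
      have hkey : X (e.symm c) * f j = f j2 * X (v j) := by
        rw [hfX, hfX]
        show (X (e.symm c) : MvPolynomial σ K) * (X (e.symm (A j)) * X (e.symm (B j)))
          = (X (e.symm (A j2)) * X (e.symm (B j2))) * X (e.symm (B j))
        rw [hA2, hB2]
        rcases le_total (A j) c with h | h
        · rw [min_eq_left h, max_eq_right h]; ring
        · rw [min_eq_right h, max_eq_left h]; ring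
      rw [hkey]
      refine Ideal.mul_mem_right _ _ (Ideal.subset_span ?_)
      exact ⟨j2, hj2lt, rfl⟩

end Main

/-- The integral closure of the edge ideal of a strong quasi-`n`-partite
graph has linear quotients: there is an ordering `f₁, …, f_q` of its minimal monomial
generators, with nondecreasing degrees, such that each colon ideal
`(f₁, …, f_{j-1}) : (f_j)` is generated by a subset of the variables. -/
theorem stmt7 {K : Type*} [Field K] (n : ℕ) (hn : 1 ≤ n) (m : Fin n → ℕ)
    (hm : ∀ i, 1 ≤ m i) :
    ∃ (q : ℕ) (f : Fin q → MvPolynomial (Σ i : Fin n, Fin (m i)) K),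
      (∀ j, ∃ a : (Σ i : Fin n, Fin (m i)) →₀ ℕ, f j = monomial a (1 : K)) ∧
      (edgeIdealSQ K n m).intClosure = Ideal.span (Set.range f) ∧
      (∀ j : Fin q, f j ∉ Ideal.span (f '' {j' | j' ≠ j})) ∧
      (∀ j j' : Fin q, j ≤ j' → (f j).totalDegree ≤ (f j').totalDegree) ∧
      (∀ j : Fin q, 0 < j.1 →
        ∃ V : Set (Σ i : Fin n, Fin (m i)),
          (Ideal.span (f '' {j' | j'.1 < j.1})).colon (Ideal.span {f j}) =
            Ideal.span (X '' V)) := by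
  classical
  obtain ⟨q, f, h1, h2, h3, h4, h5⟩ := M2_linear_quotients K (Σ i : Fin n, Fin (m i))
  exact ⟨q, f, h1, by rw [intClosure_edge_eq_M2, h2], h3, h4, h5⟩
end

section
/- Let G be a strong quasi-n-partite graph and I(G) ⊂ T its edge ideal. Then the Cohen–Macaulay type of the zero-dimensional ring T/I(G)̄ equals m_1 + … + m_n; concretely, the socle of T/I(G)̄, i.e., the annihilator of the maximal graded ideal (x_{11},…,x_{nm_n}) in T/I(G)̄, is a K-vector space of dimension m_1 + … + m_n. -/
open MvPolynomial

/-- The socle of `T/I` with respect to the ideal `J`: the annihilator of `J` in `T/I`,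
viewed as a `K`-subspace. -/
def socle {K : Type*} [Field K] {σ : Type*} (I J : Ideal (MvPolynomial σ K)) :
    Submodule K (MvPolynomial σ K ⧸ I) where
  carrier := {x | ∀ f ∈ J, Ideal.Quotient.mk I f * x = 0}
  add_mem' := by
    intro a b ha hb f hf
    rw [mul_add, ha f hf, hb f hf, add_zero]
  zero_mem' := by
    intro f hf
    rw [mul_zero]
  smul_mem' := by
    intro c x hx f hf
    rw [mul_smul_comm, hx f hf, smul_zero]

set_option synthInstance.maxHeartbeats 1000000
set_option maxHeartbeats 1000000
set_option linter.unusedSectionVars false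

namespace Stmt15Aux


variable {K : Type*} [Field K] {σ : Type*}

/-- degree of a monomial exponent vector -/
def mdeg (s : σ →₀ ℕ) : ℕ := s.sum fun _ e => e

lemma mdeg_add (a b : σ →₀ ℕ) : mdeg (a + b) = mdeg a + mdeg b := by
  classical
  exact Finsupp.sum_add_index' (fun _ => rfl) (fun _ _ _ => rfl)

lemma mdeg_single (a : σ) (k : ℕ) : mdeg (Finsupp.single a k) = k := by
  classical
  exact Finsupp.sum_single_index rfl

lemma mdeg_eq_zero {s : σ →₀ ℕ} (h : mdeg s = 0) : s = 0 := by
  classical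
  ext a
  by_contra ha
  have hmem : a ∈ s.support := Finsupp.mem_support_iff.2 ha
  have := Finset.sum_eq_zero_iff.mp (h : ∑ x ∈ s.support, s x = 0) a hmem
  exact ha this

lemma exists_single_le {s : σ →₀ ℕ} (h : 1 ≤ mdeg s) :
    ∃ (a : σ) (t : σ →₀ ℕ), s = Finsupp.single a 1 + t := by
  classical
  have hs : s ≠ 0 := by
    intro h0; rw [h0] at h; simp [mdeg] at h
  obtain ⟨a, ha⟩ := Finsupp.ne_iff.mp hs
  simp only [Finsupp.coe_zero, Pi.zero_apply] at ha
  refine ⟨a, s - Finsupp.single a 1, ?_⟩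
  ext b
  simp only [Finsupp.add_apply, Finsupp.tsub_apply, Finsupp.single_apply]
  by_cases hb : a = b
  · subst hb; rw [if_pos rfl]; omega
  · simp [hb]

/-- all coefficients in degree `< d` vanish -/
def LowZero (d : ℕ) (f : MvPolynomial σ K) : Prop :=
  ∀ s : σ →₀ ℕ, mdeg s < d → coeff s f = 0

lemma LowZero.add {d : ℕ} {f g : MvPolynomial σ K} (hf : LowZero d f) (hg : LowZero d g) :
    LowZero d (f + g) := fun s hs => by rw [coeff_add, hf s hs, hg s hs, add_zero]

lemma LowZero.mul {a b : ℕ} {f g : MvPolynomial σ K} (hf : LowZero a f) (hg : LowZero b g) :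
    LowZero (a + b) (f * g) := by
  intro s hs
  classical
  rw [coeff_mul]
  refine Finset.sum_eq_zero fun x hx => ?_
  have hx' : x.1 + x.2 = s := Finset.HasAntidiagonal.mem_antidiagonal.mp hx
  have hdeg : mdeg x.1 + mdeg x.2 = mdeg s := by rw [← mdeg_add, hx']
  rcases lt_or_ge (mdeg x.1) a with h1 | h1
  · rw [hf x.1 h1, zero_mul]
  · have h2 : mdeg x.2 < b := by omega
    rw [hg x.2 h2, mul_zero]

lemma lowZero_of_mem_span_X {f : MvPolynomial σ K}
    (h : f ∈ Ideal.span (Set.range (X : σ → MvPolynomial σ K))) : LowZero 1 f := by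
  rw [← Set.image_univ, mem_ideal_span_X_image] at h
  intro s hs
  have hs0 : s = 0 := mdeg_eq_zero (by omega)
  subst hs0
  by_contra hc
  obtain ⟨i, -, hi⟩ := h 0 (mem_support_iff.2 hc)
  exact hi rfl

lemma lowZero_of_mem_pow {d : ℕ} {f : MvPolynomial σ K}
    (h : f ∈ Ideal.span (Set.range (X : σ → MvPolynomial σ K)) ^ d) : LowZero d f := by
  induction d generalizing f with
  | zero => intro s hs; omega
  | succ d ih =>
    rw [pow_succ] at h
    refine Submodule.mul_induction_on h (fun g hg p hp => ?_) (fun x y hx hy => hx.add hy)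
    exact (ih hg).mul (lowZero_of_mem_span_X hp)

lemma mem_pow_two_of_lowZero {f : MvPolynomial σ K} (hf : LowZero 2 f) :
    f ∈ Ideal.span (Set.range (X : σ → MvPolynomial σ K)) ^ 2 := by
  classical
  set M : Ideal (MvPolynomial σ K) := Ideal.span (Set.range (X : σ → MvPolynomial σ K)) with hM
  have key : f ∈ Ideal.span ((fun s => monomial s (1 : K)) ''
      {s : σ →₀ ℕ | ∃ a b : σ, s = Finsupp.single a 1 + Finsupp.single b 1}) := by
    rw [mem_ideal_span_monomial_image]
    intro xi hxi
    have hd : 2 ≤ mdeg xi := by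
      by_contra hc
      exact (mem_support_iff.mp hxi) (hf xi (by omega))
    obtain ⟨a, t, hat⟩ := exists_single_le (s := xi) (by omega)
    have ht : 1 ≤ mdeg t := by
      have := mdeg_add (Finsupp.single a 1) t
      rw [← hat, mdeg_single] at this
      omega
    obtain ⟨b, u, hbu⟩ := exists_single_le ht
    refine ⟨Finsupp.single a 1 + Finsupp.single b 1, ⟨a, b, rfl⟩, ?_⟩
    rw [hat, hbu, ← add_assoc]
    exact le_add_right le_rfl
  refine Ideal.span_le.mpr ?_ key
  rintro g ⟨s, ⟨a, b, rfl⟩, rfl⟩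
  have hXX : (monomial (Finsupp.single a 1 + Finsupp.single b 1) (1 : K)) = X a * X b := by
    rw [X, X, monomial_mul, one_mul]
  show (monomial (Finsupp.single a 1 + Finsupp.single b 1)) (1:K) ∈ M ^ 2
  rw [hXX, pow_two]
  exact Ideal.mul_mem_mul (Ideal.subset_span ⟨a, rfl⟩) (Ideal.subset_span ⟨b, rfl⟩)



variable {K : Type*} [Field K] {σ : Type*} [DecidableEq σ]

noncomputable def pi (a : σ) : MvPolynomial σ K →ₐ[K] Polynomial K :=
  aeval (fun b => if b = a then Polynomial.X else 0)

lemma coeff_pi (a : σ) (f : MvPolynomial σ K) (e : ℕ) :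
    (pi a f).coeff e = coeff (Finsupp.single a e) f := by
  classical
  conv_lhs => rw [f.as_sum]
  rw [map_sum, Polynomial.finset_sum_coeff]
  have hterm : ∀ s ∈ f.support,
      ((pi a (monomial s (coeff s f))).coeff e)
        = if s = Finsupp.single a e then coeff s f else 0 := by
    intro s _
    rw [pi, aeval_monomial]
    by_cases hsup : ∀ b ∈ s.support, b = a
    · -- s = single a (s a)
      have hs : s = Finsupp.single a (s a) := by
        ext b
        rcases eq_or_ne b a with rfl | hb
        · simp
        · rw [Finsupp.single_apply, if_neg (by exact fun h => hb h.symm)]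
          by_contra hc
          exact hb (hsup b (Finsupp.mem_support_iff.2 hc))
      rw [hs, Finsupp.prod_single_index (by simp)]
      rw [if_pos rfl]
      rcases eq_or_ne (s a) e with he | he
      · rw [he, if_pos rfl]
        simp [algebraMap_eq, Polynomial.coeff_C_mul, Polynomial.coeff_X_pow]
      · rw [if_neg (by
          intro hc
          exact he (by
            have := congrArg (fun t : σ →₀ ℕ => t a) hc
            simpa using this))]
        rw [Polynomial.algebraMap_eq, Polynomial.coeff_C_mul, Polynomial.coeff_X_pow,
          if_neg (fun h => he h.symm), mul_zero]
    · push_neg at hsup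
      obtain ⟨b, hb, hba⟩ := hsup
      have hprod : (s.prod fun n k => (if n = a then (Polynomial.X : Polynomial K) else 0) ^ k) = 0 := by
        rw [Finsupp.prod]
        refine Finset.prod_eq_zero hb ?_
        rw [if_neg hba]
        exact zero_pow (Finsupp.mem_support_iff.1 hb)
      rw [hprod, mul_zero]
      rw [if_neg (by
        intro hc
        apply hba
        have := Finsupp.mem_support_iff.1 hb
        rw [hc, Finsupp.single_apply] at this
        by_contra h
        exact this (if_neg (fun hh => h hh.symm)))]
      simp
  rw [Finset.sum_congr rfl hterm, Finset.sum_ite_eq' f.support (Finsupp.single a e) (fun s => coeff s f)]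
  split
  · rfl
  · next h => exact (notMem_support_iff.1 h).symm

lemma le_trailingDegree_of_low {p : Polynomial K} {N : ℕ} (h : ∀ e < N, p.coeff e = 0) :
    (N : ℕ∞) ≤ p.trailingDegree := by
  by_contra hlt
  push_neg at hlt
  have hp : p ≠ 0 := by
    intro h0; rw [h0, Polynomial.trailingDegree_zero] at hlt
    exact (not_top_lt) hlt
  rw [Polynomial.trailingDegree_eq_natTrailingDegree hp, Nat.cast_lt] at hlt
  exact Polynomial.trailingCoeff_nonzero_iff_nonzero.2 hp (h _ hlt)

lemma trailingDegree_pow (p : Polynomial K) (k : ℕ) :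
    (p ^ k).trailingDegree = k • p.trailingDegree := by
  induction k with
  | zero => simp [Polynomial.trailingDegree_one]
  | succ k ih => rw [pow_succ, Polynomial.trailingDegree_mul, ih, succ_nsmul]

lemma mdeg_zero : mdeg (0 : σ →₀ ℕ) = 0 := by simp [mdeg]

lemma integral_lowZero [DecidableEq σ] {I : Ideal (MvPolynomial σ K)}
    (hI : I ≤ Ideal.span (Set.range (X : σ → MvPolynomial σ K)) ^ 2)
    {f : MvPolynomial σ K} (hf : I.IsIntegralElemOver f) : LowZero 2 f := by
  set M : Ideal (MvPolynomial σ K) := Ideal.span (Set.range X) with hM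
  obtain ⟨k, hk, c, hc, heq⟩ := hf
  have hcP : ∀ j, 1 ≤ j → j ≤ k → LowZero (2 * j) (c j) := by
    intro j h1 h2
    refine lowZero_of_mem_pow (d := 2 * j) ?_
    have : I ^ j ≤ M ^ (2 * j) := by
      calc I ^ j ≤ (M ^ 2) ^ j := Ideal.pow_right_mono hI j
        _ = M ^ (2 * j) := by rw [← pow_mul]
    exact this (hc j h1 h2)
  -- constant coefficient is zero
  have h0 : constantCoeff f = 0 := by
    have h := congrArg constantCoeff heq
    simp only [map_add, map_pow, map_sum, map_mul, map_zero] at h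
    have hz : ∀ j ∈ Finset.Icc 1 k, constantCoeff (c j) * constantCoeff f ^ (k - j) = 0 := by
      intro j hj
      obtain ⟨h1, h2⟩ := Finset.mem_Icc.mp hj
      have : coeff 0 (c j) = 0 := hcP j h1 h2 0 (by rw [mdeg_zero]; omega)
      rw [show constantCoeff (c j) = coeff 0 (c j) from rfl, this, zero_mul]
    rw [Finset.sum_eq_zero hz, add_zero] at h
    exact pow_eq_zero_iff (by omega) |>.mp h
  -- linear coefficients are zero
  have h1 : ∀ a : σ, coeff (Finsupp.single a 1) f = 0 := by
    intro a
    by_contra hne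
    set p : Polynomial K := pi a f with hp
    have hp1 : p.coeff 1 ≠ 0 := by rwa [hp, coeff_pi]
    have hp0 : p.coeff 0 = 0 := by
      rw [hp, coeff_pi, Finsupp.single_zero]
      exact h0
    have hpne : p ≠ 0 := fun h => hp1 (by rw [h, Polynomial.coeff_zero])
    have htdp : p.trailingDegree = 1 := by
      refine le_antisymm (Polynomial.trailingDegree_le_of_ne_zero hp1) ?_
      exact le_trailingDegree_of_low (fun e he => by interval_cases e; exact hp0)
    have htdpow : ∀ l : ℕ, (p ^ l).trailingDegree = l := by
      intro l
      rw [trailingDegree_pow, htdp, nsmul_eq_mul, mul_one]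
    -- apply pi to the equation
    have hpe := congrArg (pi a) heq
    simp only [map_add, map_pow, map_sum, map_mul, map_zero] at hpe
    have hke := congrArg (fun q : Polynomial K => q.coeff k) hpe
    simp only [Polynomial.coeff_add, Polynomial.finset_sum_coeff, Polynomial.coeff_zero] at hke
    have hterm : ∀ j ∈ Finset.Icc 1 k, (pi a (c j) * (pi a f) ^ (k - j)).coeff k = 0 := by
      intro j hj
      obtain ⟨hj1, hj2⟩ := Finset.mem_Icc.mp hj
      refine Polynomial.coeff_eq_zero_of_lt_trailingDegree ?_
      have htq : ((2 * j : ℕ) : ℕ∞) ≤ (pi a (c j)).trailingDegree := by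
        refine le_trailingDegree_of_low (fun e he => ?_)
        rw [coeff_pi]
        exact hcP j hj1 hj2 _ (by rw [mdeg_single]; omega)
      calc (k : ℕ∞) < ((2 * j + (k - j) : ℕ) : ℕ∞) := by
            rw [Nat.cast_lt]; omega
        _ = ((2 * j : ℕ) : ℕ∞) + ((k - j : ℕ) : ℕ∞) := by rw [Nat.cast_add]
        _ ≤ (pi a (c j)).trailingDegree + ((pi a f) ^ (k - j)).trailingDegree := by
            refine add_le_add htq ?_
            rw [← hp, htdpow]
        _ = (pi a (c j) * (pi a f) ^ (k - j)).trailingDegree :=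
            (Polynomial.trailingDegree_mul).symm
    rw [Finset.sum_eq_zero hterm, add_zero] at hke
    have hkne : ((pi a f) ^ k).coeff k ≠ 0 := by
      have hne0 : (p : Polynomial K) ^ k ≠ 0 := pow_ne_zero _ hpne
      have : ((p : Polynomial K) ^ k).natTrailingDegree = k :=
        Polynomial.natTrailingDegree_eq_of_trailingDegree_eq_some (htdpow k)
      have := Polynomial.trailingCoeff_nonzero_iff_nonzero.2 hne0
      rwa [Polynomial.trailingCoeff, ‹((p : Polynomial K) ^ k).natTrailingDegree = k›] at this
    exact hkne hke
  intro s hs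
  rcases (by omega : mdeg s = 0 ∨ mdeg s = 1) with h | h
  · rw [mdeg_eq_zero h]
    exact h0
  · obtain ⟨a, t, rfl⟩ := exists_single_le (s := s) (by omega)
    have : mdeg t = 0 := by
      have := mdeg_add (Finsupp.single a 1) t
      rw [mdeg_single] at this
      omega
    rw [mdeg_eq_zero this, add_zero]
    exact h1 a

lemma intClosure_eq [DecidableEq σ] {I : Ideal (MvPolynomial σ K)}
    (hI : I ≤ Ideal.span (Set.range (X : σ → MvPolynomial σ K)) ^ 2)
    (hsq : ∀ a b : σ, (X a * X b) ^ 2 ∈ I ^ 2) :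
    I.intClosure = Ideal.span (Set.range (X : σ → MvPolynomial σ K)) ^ 2 := by
  set M : Ideal (MvPolynomial σ K) := Ideal.span (Set.range X) with hM
  refine le_antisymm ?_ ?_
  · rw [Ideal.intClosure, Ideal.span_le]
    intro f hf
    exact mem_pow_two_of_lowZero (integral_lowZero hI hf)
  · rw [pow_two, hM, Ideal.span_mul_span', Ideal.span_le]
    rintro g ⟨x, ⟨a, rfl⟩, y, ⟨b, rfl⟩, rfl⟩
    refine Ideal.subset_span ?_
    refine ⟨2, by omega, fun j => if j = 2 then -((X a * X b) ^ 2) else 0, ?_, ?_⟩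
    · intro j h1 h2
      interval_cases j
      · simp
      · simp only [if_pos rfl]
        exact neg_mem (hsq a b)
    · rw [show Finset.Icc 1 2 = {1, 2} from rfl]
      rw [Finset.sum_insert (by decide), Finset.sum_singleton]
      norm_num

variable [Fintype σ] [DecidableEq σ]

lemma coeff_linear_sum (g : σ → K) (s : σ →₀ ℕ) :
    coeff s (∑ a : σ, C (g a) * X a) =
      ∑ a : σ, if a ∈ Finset.univ ∧ Finsupp.single a 1 = s then g a else 0 := by
  rw [MvPolynomial.coeff_sum]
  refine Finset.sum_congr rfl fun a _ => ?_
  rw [coeff_C_mul, coeff_X']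
  by_cases h : Finsupp.single a 1 = s
  · rw [if_pos h, if_pos ⟨Finset.mem_univ a, h⟩, mul_one]
  · rw [if_neg h, if_neg (fun hc => h hc.2), mul_zero]

lemma coeff_linear_sum_zero (g : σ → K) :
    coeff 0 (∑ a : σ, C (g a) * X a) = 0 := by
  rw [coeff_linear_sum]
  refine Finset.sum_eq_zero fun a _ => ?_
  rw [if_neg (fun hc => one_ne_zero (Finsupp.single_eq_zero.1 hc.2))]

lemma coeff_linear_sum_single (g : σ → K) (b : σ) :
    coeff (Finsupp.single b 1) (∑ a : σ, C (g a) * X a) = g b := by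
  rw [coeff_linear_sum]
  have : ∀ a : σ, (if a ∈ Finset.univ ∧ Finsupp.single a 1 = Finsupp.single b 1 then g a else 0)
      = if a = b then g a else 0 := by
    intro a
    by_cases h : a = b
    · rw [if_pos (by rw [h]; exact ⟨Finset.mem_univ b, rfl⟩), if_pos h]
    · rw [if_neg (fun hc => h ((Finsupp.single_left_inj one_ne_zero).1 hc.2)), if_neg h]
  rw [Finset.sum_congr rfl fun a _ => this a, Finset.sum_ite_eq' Finset.univ b g,
    if_pos (Finset.mem_univ b)]

lemma mk_linear_sum (g : σ → K) (I : Ideal (MvPolynomial σ K)) :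
    Ideal.Quotient.mk I (∑ a : σ, C (g a) * X a)
      = ∑ a : σ, g a • Ideal.Quotient.mk I (X a) := by
  rw [map_sum]
  refine Finset.sum_congr rfl fun a _ => ?_
  rw [← smul_eq_C_mul, ← Ideal.Quotient.mkₐ_eq_mk (R₁ := K), map_smul]

lemma socle_eq [Nonempty σ] :
    socle ((Ideal.span (Set.range (X : σ → MvPolynomial σ K))) ^ 2)
        (Ideal.span (Set.range (X : σ → MvPolynomial σ K)))
      = Submodule.span K (Set.range fun a : σ =>
          Ideal.Quotient.mk ((Ideal.span (Set.range (X : σ → MvPolynomial σ K))) ^ 2) (X a)) := by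
  set M : Ideal (MvPolynomial σ K) := Ideal.span (Set.range X) with hM
  refine le_antisymm ?_ ?_
  · intro x hx
    obtain ⟨f, rfl⟩ := Ideal.Quotient.mk_surjective x
    have a0 : σ := Classical.arbitrary σ
    have hXa0 : X a0 * f ∈ M ^ 2 := by
      have := hx (X a0) (Ideal.subset_span ⟨a0, rfl⟩)
      rwa [← map_mul, Ideal.Quotient.eq_zero_iff_mem] at this
    have h0 : coeff 0 f = 0 := by
      have hL := lowZero_of_mem_pow hXa0 (Finsupp.single a0 1 + 0)
        (by rw [mdeg_add, mdeg_single, mdeg_zero]; omega)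
      rwa [coeff_X_mul] at hL
    set g : MvPolynomial σ K := ∑ a : σ, C (coeff (Finsupp.single a 1) f) * X a with hg
    have hfg : f - g ∈ M ^ 2 := by
      refine mem_pow_two_of_lowZero fun s hs => ?_
      rw [coeff_sub]
      rcases (by omega : mdeg s = 0 ∨ mdeg s = 1) with h | h
      · rw [mdeg_eq_zero h, h0, hg, coeff_linear_sum_zero, sub_zero]
      · obtain ⟨b, t, rfl⟩ := exists_single_le (s := s) (by omega)
        have ht : mdeg t = 0 := by
          have := mdeg_add (Finsupp.single b 1) t
          rw [mdeg_single] at this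
          omega
        rw [mdeg_eq_zero ht, add_zero, hg, coeff_linear_sum_single, sub_self]
    have hmk : Ideal.Quotient.mk (M ^ 2) f = Ideal.Quotient.mk (M ^ 2) g :=
      Ideal.Quotient.eq.mpr hfg
    rw [hmk, hg, mk_linear_sum]
    exact Submodule.sum_mem _ fun a _ =>
      Submodule.smul_mem _ _ (Submodule.subset_span ⟨a, rfl⟩)
  · rw [Submodule.span_le]
    rintro _ ⟨a, rfl⟩
    intro f hf
    rw [← map_mul, Ideal.Quotient.eq_zero_iff_mem, pow_two]
    exact Ideal.mul_mem_mul hf (Ideal.subset_span ⟨a, rfl⟩)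

lemma lin_indep :
    LinearIndependent K (fun a : σ =>
      Ideal.Quotient.mk ((Ideal.span (Set.range (X : σ → MvPolynomial σ K))) ^ 2) (X a)) := by
  set M : Ideal (MvPolynomial σ K) := Ideal.span (Set.range X) with hM
  rw [Fintype.linearIndependent_iff]
  intro g hg a
  have hmem : (∑ b : σ, C (g b) * X b) ∈ M ^ 2 := by
    rw [← Ideal.Quotient.eq_zero_iff_mem, mk_linear_sum]
    exact hg
  have := lowZero_of_mem_pow hmem (Finsupp.single a 1) (by rw [mdeg_single]; omega)
  rwa [coeff_linear_sum_single] at this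


end Stmt15Aux

/-- The Cohen–Macaulay type of the zero-dimensional ring `T / I(G)̄`
equals `m₁ + ⋯ + mₙ`: the socle of `T / I(G)̄`, the annihilator of the maximal graded
ideal `(x_{11}, …, x_{nm_n})`, is a `K`-vector space of dimension `m₁ + ⋯ + mₙ`. -/
theorem stmt15 {K : Type*} [Field K] (n : ℕ) (hn : 1 ≤ n) (m : Fin n → ℕ)
    (hm : ∀ i, 1 ≤ m i) :
    Module.finrank K
      (socle ((edgeIdealSQ K n m).intClosure)
        (Ideal.span (Set.range (X : (Σ i : Fin n, Fin (m i)) →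
          MvPolynomial (Σ i : Fin n, Fin (m i)) K)))) = ∑ i, m i := by
  classical
  haveI hne : Nonempty (Σ i : Fin n, Fin (m i)) := ⟨⟨⟨0, hn⟩, ⟨0, hm ⟨0, hn⟩⟩⟩⟩
  have hIle : edgeIdealSQ K n m ≤
      Ideal.span (Set.range (X : (Σ i : Fin n, Fin (m i)) →
        MvPolynomial (Σ i : Fin n, Fin (m i)) K)) ^ 2 := by
    rw [edgeIdealSQ, Ideal.span_le]
    rintro f (⟨i, i', h, h', hii, rfl⟩ | ⟨i, h, rfl⟩)
    · rw [pow_two]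
      exact Ideal.mul_mem_mul (Ideal.subset_span ⟨⟨i, h⟩, rfl⟩)
        (Ideal.subset_span ⟨⟨i', h'⟩, rfl⟩)
    · rw [pow_two (Ideal.span _), pow_two]
      exact Ideal.mul_mem_mul (Ideal.subset_span ⟨⟨i, h⟩, rfl⟩)
        (Ideal.subset_span ⟨⟨i, h⟩, rfl⟩)
  have hsq : ∀ a b : Σ i : Fin n, Fin (m i),
      ((X a : MvPolynomial (Σ i : Fin n, Fin (m i)) K) * X b) ^ 2
        ∈ (edgeIdealSQ K n m) ^ 2 := by
    rintro ⟨i, h⟩ ⟨i', h'⟩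
    rw [mul_pow, pow_two (edgeIdealSQ K n m)]
    exact Ideal.mul_mem_mul (Ideal.subset_span (Or.inr ⟨i, h, rfl⟩))
      (Ideal.subset_span (Or.inr ⟨i', h', rfl⟩))
  have hicl : (edgeIdealSQ K n m).intClosure =
      Ideal.span (Set.range (X : (Σ i : Fin n, Fin (m i)) →
        MvPolynomial (Σ i : Fin n, Fin (m i)) K)) ^ 2 :=
    Stmt15Aux.intClosure_eq hIle hsq
  rw [hicl, Stmt15Aux.socle_eq, finrank_span_eq_card Stmt15Aux.lin_indep]
  simp [Fintype.card_sigma, Fintype.card_fin]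
end

section
/- Let G be a strong quasi-n-partite graph with edge ideal I(G) ⊂ T, and let I_c(G) be its ideal of vertex covers. Then the big height of the integral closure of I_c(G) is 1, i.e., every associated prime of T/I_c(G)̄ has height 1. -/
open MvPolynomial

/-- The ideal of vertex covers of the edge ideal of the strong quasi-`n`-partite graph:
generated by the squarefree monomials `∏_{v ∈ C} x_v` for which `(x_v : v ∈ C)` is a
minimal prime of `I(G)`. -/
noncomputable def coverIdealSQ (K : Type*) [Field K] (n : ℕ) (m : Fin n → ℕ) :
    Ideal (MvPolynomial (Σ i : Fin n, Fin (m i)) K) :=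
  Ideal.span
    {f | ∃ C : Finset (Σ i : Fin n, Fin (m i)),
      Ideal.span ((fun v => (X v : MvPolynomial (Σ i : Fin n, Fin (m i)) K)) '' ↑C) ∈
        (edgeIdealSQ K n m).minimalPrimes ∧
      f = ∏ v ∈ C, X v}

section AuxLemmas

open MvPolynomial

theorem auxPrimeX {K : Type*} [Field K] {σ : Type*} (v : σ) :
    Prime (X v : MvPolynomial σ K) := by
  classical
  let e := ((renameEquiv K (Equiv.optionSubtypeNe v).symm).trans
      (optionEquivLeft K {w : σ // w ≠ v})).toRingEquiv
  have h : e (X v) = Polynomial.X := by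
    simp only [e, AlgEquiv.toRingEquiv_eq_coe, AlgEquiv.coe_ringEquiv, AlgEquiv.trans_apply,
      renameEquiv_apply, rename_X, Equiv.optionSubtypeNe_symm_self, optionEquivLeft_X_none]
  rw [← MulEquiv.prime_iff e]
  exact h ▸ Polynomial.prime_X

theorem auxXndvd {K : Type*} [Field K] {σ : Type*} {v w : σ} (h : v ≠ w) :
    ¬ (X v : MvPolynomial σ K) ∣ X w := by
  classical
  rintro ⟨g, hg⟩
  have h2 := congrArg (eval (fun u => if u = v then 0 else 1)) hg
  rw [eval_mul, eval_X, eval_X, if_pos rfl, if_neg (Ne.symm h), zero_mul] at h2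
  exact one_ne_zero h2

theorem auxProdXdvd {K : Type*} [Field K] {σ : Type*} [DecidableEq σ] (s : Finset σ)
    (b : MvPolynomial σ K) (hb : ∀ v ∈ s, X v ∣ b) : (∏ v ∈ s, X v) ∣ b := by
  classical
  induction s using Finset.induction_on generalizing b with
  | empty => simp
  | insert v s hv ih =>
    obtain ⟨c, rfl⟩ := hb v (Finset.mem_insert_self v s)
    rw [Finset.prod_insert hv]
    refine mul_dvd_mul_left _ (ih c fun w hw => ?_)
    have := hb w (Finset.mem_insert_of_mem hw)
    rcases (auxPrimeX w).dvd_or_dvd this with h | h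
    · exact absurd h (auxXndvd (by rintro rfl; exact hv hw))
    · exact h

theorem auxLtSpanX {K : Type*} [Field K] {σ : Type*} (v : σ) (r : Ideal (MvPolynomial σ K))
    (hr : r.IsPrime) (hlt : r < Ideal.span {(X v : MvPolynomial σ K)}) : r = ⊥ := by
  by_contra h
  obtain ⟨f, hfr, hf0⟩ := Submodule.ne_bot_iff r |>.mp h
  have hXv : (X v : MvPolynomial σ K) ∉ r := by
    intro hmem
    exact hlt.ne (le_antisymm hlt.le ((Ideal.span_singleton_le_iff_mem r).mpr hmem))
  have hfin := FiniteMultiplicity.of_prime_left (auxPrimeX (K := K) v) hf0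
  obtain ⟨c, hc, hcd⟩ := hfin.exists_eq_pow_mul_and_not_dvd
  have hcr : c ∈ r := by
    rcases hr.mem_or_mem (hc ▸ hfr) with h1 | h1
    · exact absurd (hr.mem_of_pow_mem _ h1) hXv
    · exact h1
  exact hcd (Ideal.mem_span_singleton.mp (hlt.le hcr))

theorem auxHeight {R : Type*} [CommRing R] [IsDomain R]
    (q : R) (hq : Prime q)
    (hbot : ∀ r : Ideal R, r.IsPrime → r < Ideal.span {q} → r = ⊥)
    (hp : (Ideal.span {q}).IsPrime) :
    Order.height (⟨Ideal.span {q}, hp⟩ : PrimeSpectrum R) = 1 := by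
  have hne : Ideal.span {q} ≠ ⊥ := by
    simp [Ideal.span_singleton_eq_bot, hq.ne_zero]
  have hbotlt : (⊥ : PrimeSpectrum R) < ⟨Ideal.span {q}, hp⟩ := by
    refine lt_of_le_of_ne bot_le ?_
    intro h
    exact hne (congrArg PrimeSpectrum.asIdeal h).symm
  rw [Order.height_eq_iSup_lt_height]
  apply le_antisymm
  · refine iSup₂_le fun y hy => ?_
    have hy0 : y = ⊥ := by
      have := hbot y.asIdeal y.isPrime hy
      exact PrimeSpectrum.ext this
    rw [hy0, Order.height_eq_zero.mpr isMin_bot, zero_add]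
  · have h1 : (1 : ℕ∞) = Order.height (⊥ : PrimeSpectrum R) + 1 := by
      rw [Order.height_eq_zero.mpr isMin_bot, zero_add]
    refine h1.le.trans (le_iSup₂ (f := fun y (_ : y < _) => Order.height y + 1) ⊥ hbotlt)

theorem auxSpanKer {K : Type*} [Field K] {σ : Type*} :
    Ideal.span (X '' (Set.univ : Set σ) : Set (MvPolynomial σ K)) =
      RingHom.ker (constantCoeff : MvPolynomial σ K →+* K) := by
  ext f
  rw [mem_ideal_span_X_image, RingHom.mem_ker, constantCoeff_eq, ← notMem_support_iff]
  constructor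
  · intro h h0
    obtain ⟨i, -, hi⟩ := h 0 h0
    exact hi rfl
  · intro h0 mo hmo
    by_contra hc
    push_neg at hc
    have : mo = 0 := Finsupp.ext fun i => by simpa using hc i (Set.mem_univ i)
    exact h0 (this ▸ hmo)

theorem auxSpanPrime {K : Type*} [Field K] {σ : Type*} :
    (Ideal.span (X '' (Set.univ : Set σ) : Set (MvPolynomial σ K))).IsPrime := by
  rw [auxSpanKer]
  exact RingHom.ker_isPrime _

theorem auxIntClosure {R : Type*} [CommRing R] [IsDomain R] (hic : IsIntegrallyClosed R)
    (a : R) (ha : a ≠ 0) : (Ideal.span {a}).intClosure = Ideal.span {a} := by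
  apply le_antisymm
  · rw [Ideal.intClosure, Ideal.span_le]
    rintro f ⟨k, hk, c, hc, heq⟩
    set F := FractionRing R
    have hinj : Function.Injective (algebraMap R F) := IsFractionRing.injective R F
    have hA : algebraMap R F a ≠ 0 := fun h => ha (hinj (by simpa using h))
    set x : F := algebraMap R F f / algebraMap R F a with hx
    have hxa : x * algebraMap R F a = algebraMap R F f := div_mul_cancel₀ _ hA
    have hax : algebraMap R F a * x = algebraMap R F f := by rw [mul_comm]; exact hxa
    have hd : ∀ j, 1 ≤ j → j ≤ k → ∃ d : R, c j = d * a ^ j := by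
      intro j h1 h2
      have := hc j h1 h2
      rw [Ideal.span_singleton_pow, Ideal.mem_span_singleton] at this
      obtain ⟨d, hd⟩ := this
      exact ⟨d, by rw [hd, mul_comm]⟩
    choose d hdj using fun j (h : j ∈ Finset.Icc 1 k) =>
      hd j (Finset.mem_Icc.mp h).1 (Finset.mem_Icc.mp h).2
    have hint : IsIntegral R x := by
      refine ⟨Polynomial.X ^ k + ∑ j ∈ (Finset.Icc 1 k).attach,
        Polynomial.C (d j j.2) * Polynomial.X ^ (k - (j : ℕ)), ?_, ?_⟩
      · apply Polynomial.monic_X_pow_add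
        refine lt_of_le_of_lt (Polynomial.degree_sum_le _ _) ?_
        rw [Finset.sup_lt_iff (by exact_mod_cast WithBot.bot_lt_coe k)]
        intro j hj
        refine lt_of_le_of_lt (Polynomial.degree_C_mul_X_pow_le _ _) ?_
        exact_mod_cast Nat.sub_lt_of_pos_le (Finset.mem_Icc.mp j.2).1 (Finset.mem_Icc.mp j.2).2
      · have hmain : (algebraMap R F a) ^ k *
            (x ^ k + ∑ j ∈ (Finset.Icc 1 k).attach,
              algebraMap R F (d j j.2) * x ^ (k - (j : ℕ))) = 0 := by
          have h2 : (algebraMap R F a) ^ k * x ^ k +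
              ∑ j ∈ (Finset.Icc 1 k).attach,
                (algebraMap R F a) ^ k * (algebraMap R F (d j j.2) * x ^ (k - (j : ℕ))) =
              algebraMap R F (f ^ k + ∑ j ∈ Finset.Icc 1 k, c j * f ^ (k - j)) := by
            rw [map_add, map_pow, ← mul_pow, hax]
            congr 1
            rw [map_sum, ← Finset.sum_attach (Finset.Icc 1 k)
              (fun j => algebraMap R F (c j * f ^ (k - j)))]
            refine Finset.sum_congr rfl fun j hj => ?_
            have hjk : (j : ℕ) ≤ k := (Finset.mem_Icc.mp j.2).2
            have hke : (j : ℕ) + (k - (j : ℕ)) = k := Nat.add_sub_cancel' hjk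
            calc (algebraMap R F a) ^ k * (algebraMap R F (d j j.2) * x ^ (k - (j : ℕ)))
                = algebraMap R F (d j j.2) * ((algebraMap R F a) ^ (j : ℕ) *
                  ((algebraMap R F a) * x) ^ (k - (j : ℕ))) := by
                  rw [show (algebraMap R F a) ^ k = (algebraMap R F a) ^ ((j : ℕ) + (k - (j : ℕ)))
                    from by rw [hke], pow_add, mul_pow]; ring
              _ = algebraMap R F (c j * f ^ (k - (j : ℕ))) := by
                  rw [hax, ← map_pow, ← map_pow, ← map_mul, ← map_mul, ← mul_assoc,
                    ← hdj j j.2]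
          rw [mul_add, Finset.mul_sum, h2, heq, map_zero]
        have hAk : (algebraMap R F a) ^ k ≠ 0 := pow_ne_zero _ hA
        have := (mul_eq_zero.mp hmain).resolve_left hAk
        rw [Polynomial.eval₂_add, Polynomial.eval₂_X_pow, Polynomial.eval₂_finset_sum]
        simpa [Polynomial.eval₂_mul, Polynomial.eval₂_C, Polynomial.eval₂_X_pow] using this
    obtain ⟨g, hg⟩ := IsIntegrallyClosed.isIntegral_iff.mp hint
    rw [SetLike.mem_coe, Ideal.mem_span_singleton]
    refine ⟨g, hinj ?_⟩
    rw [map_mul, hg, mul_comm, hxa]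
  · rw [Ideal.span_le]
    rintro f rfl
    refine Ideal.subset_span ⟨1, one_pos, fun _ => -f, fun j h1 h2 => ?_, by simp⟩
    have : j = 1 := le_antisymm h2 h1
    subst this
    rw [pow_one]
    exact neg_mem (Ideal.mem_span_singleton_self _)

theorem auxAssoc {K : Type*} [Field K] {σ : Type*} [Fintype σ]
    (p : Ideal (MvPolynomial σ K))
    (hp : IsAssociatedPrime p (MvPolynomial σ K ⧸
      Ideal.span {∏ v : σ, (X v : MvPolynomial σ K)})) :
    ∃ v : σ, p = Ideal.span {(X v : MvPolynomial σ K)} := by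
  classical
  set R := MvPolynomial σ K
  set a : R := ∏ v : σ, X v with haa
  set I : Ideal R := Ideal.span {a} with hI
  obtain ⟨hprime, x, hx⟩ := isAssociatedPrime_iff.mp hp
  obtain ⟨b, rfl⟩ := Ideal.Quotient.mk_surjective x
  have key : ∀ r : R, r ∈ p ↔ a ∣ r * b := by
    intro r
    rw [hx, Submodule.mem_colon_singleton, Submodule.mem_bot, ← Ideal.Quotient.mk_eq_mk,
      ← Submodule.Quotient.mk_smul, smul_eq_mul, Ideal.Quotient.mk_eq_mk,
      Ideal.Quotient.eq_zero_iff_mem, hI, Ideal.mem_span_singleton]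
  have hnb : ¬ a ∣ b := by
    intro h
    exact hprime.ne_top (Ideal.eq_top_of_isUnit_mem _ ((key 1).mpr (by rwa [one_mul]))
      isUnit_one)
  have hap : a ∈ p := (key a).mpr (dvd_mul_right a b)
  obtain ⟨v, -, hXvp⟩ := (Ideal.IsPrime.prod_mem_iff (hp := hprime)).mp hap
  have hXvb : ¬ (X v : R) ∣ b := by
    intro hdvd
    refine hnb (auxProdXdvd Finset.univ b fun w _ => ?_)
    by_cases hw : w = v
    · exact hw ▸ hdvd
    · have hXwa : (X w : R) ∣ a := Finset.dvd_prod_of_mem _ (Finset.mem_univ w)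
      have h2 : (X w : R) ∣ X v * b := dvd_trans hXwa ((key (X v)).mp hXvp)
      exact ((auxPrimeX w).dvd_or_dvd h2).resolve_left (auxXndvd hw)
  refine ⟨v, le_antisymm ?_ ((Ideal.span_singleton_le_iff_mem p).mpr hXvp)⟩
  intro r hr
  rw [Ideal.mem_span_singleton]
  have h2 : (X v : R) ∣ r * b :=
    dvd_trans (Finset.dvd_prod_of_mem _ (Finset.mem_univ v)) ((key r).mp hr)
  exact ((auxPrimeX v).dvd_or_dvd h2).resolve_right hXvb

theorem auxXmemSq {K : Type*} [Field K] {n : ℕ} {m : Fin n → ℕ}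
    (v : Σ i : Fin n, Fin (m i)) :
    (X v : MvPolynomial (Σ i : Fin n, Fin (m i)) K) ^ 2 ∈ edgeIdealSQ K n m :=
  Ideal.subset_span (Or.inr ⟨v.1, v.2, by rw [Sigma.eta]⟩)

theorem auxXmemOfPrime {K : Type*} [Field K] {n : ℕ} {m : Fin n → ℕ}
    {q : Ideal (MvPolynomial (Σ i : Fin n, Fin (m i)) K)} (hq : q.IsPrime)
    (hle : edgeIdealSQ K n m ≤ q) (v : Σ i : Fin n, Fin (m i)) : X v ∈ q :=
  hq.mem_of_pow_mem 2 (hle (auxXmemSq v))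

theorem auxMinPrimes {K : Type*} [Field K] {n : ℕ} {m : Fin n → ℕ} :
    Ideal.span (X '' (Set.univ : Set (Σ i : Fin n, Fin (m i)))
        : Set (MvPolynomial (Σ i : Fin n, Fin (m i)) K)) ∈
      (edgeIdealSQ K n m).minimalPrimes := by
  constructor
  · refine ⟨auxSpanPrime, Ideal.span_le.mpr ?_⟩
    rintro f (⟨i, i', h, h', -, rfl⟩ | ⟨i, h, rfl⟩)
    · exact Ideal.mul_mem_right _ _ (Ideal.subset_span ⟨⟨i, h⟩, Set.mem_univ _, rfl⟩)
    · rw [sq]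
      exact Ideal.mul_mem_right _ _ (Ideal.subset_span ⟨⟨i, h⟩, Set.mem_univ _, rfl⟩)
  · rintro q ⟨hq, hle⟩ -
    refine Ideal.span_le.mpr ?_
    rintro f ⟨v, -, rfl⟩
    exact auxXmemOfPrime hq hle v

theorem auxCoverEq {K : Type*} [Field K] {n : ℕ} {m : Fin n → ℕ} :
    coverIdealSQ K n m =
      Ideal.span {∏ v : (Σ i : Fin n, Fin (m i)),
        (X v : MvPolynomial (Σ i : Fin n, Fin (m i)) K)} := by
  unfold coverIdealSQ
  congr 1
  ext f
  constructor
  · rintro ⟨C, hC, rfl⟩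
    have hCuniv : C = Finset.univ := by
      ext v
      simp only [Finset.mem_univ, iff_true]
      have hXv : (X v : MvPolynomial (Σ i : Fin n, Fin (m i)) K) ∈
          Ideal.span ((fun v => (X v : MvPolynomial (Σ i : Fin n, Fin (m i)) K)) '' ↑C) :=
        auxXmemOfPrime hC.1.1 hC.1.2 v
      rw [show ((fun v => (X v : MvPolynomial (Σ i : Fin n, Fin (m i)) K)) '' ↑C) =
        X '' ↑C from rfl, mem_ideal_span_X_image] at hXv
      obtain ⟨i, hi, hne⟩ := hXv (Finsupp.single v 1) (by simp [support_X])
      rwa [show i = v by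
        by_contra hne'
        exact hne (Finsupp.single_eq_of_ne' (Ne.symm hne'))] at hi
    rw [hCuniv]
    rfl
  · rintro rfl
    exact ⟨Finset.univ, by rw [show ((fun v => (X v : MvPolynomial (Σ i : Fin n, Fin (m i)) K))
      '' ↑(Finset.univ : Finset (Σ i : Fin n, Fin (m i)))) = X '' Set.univ by
        rw [Finset.coe_univ]]; exact auxMinPrimes, rfl⟩

end AuxLemmas

set_option maxHeartbeats 1000000 in
set_option synthInstance.maxHeartbeats 1000000 in
/-- The big height of the integral closure of the cover ideal `I_c(G)` of a
strong quasi-`n`-partite graph is `1`: every associated prime of `T / I_c(G)̄` has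
height `1` (and associated primes exist). -/
theorem stmt17 {K : Type*} [Field K] (n : ℕ) (hn : 1 ≤ n) (m : Fin n → ℕ)
    (hm : ∀ i, 1 ≤ m i) :
    (∃ p : Ideal (MvPolynomial (Σ i : Fin n, Fin (m i)) K),
      IsAssociatedPrime p (MvPolynomial (Σ i : Fin n, Fin (m i)) K ⧸
        (coverIdealSQ K n m).intClosure)) ∧
    (∀ (p : Ideal (MvPolynomial (Σ i : Fin n, Fin (m i)) K))
      (hp : IsAssociatedPrime p (MvPolynomial (Σ i : Fin n, Fin (m i)) K ⧸
        (coverIdealSQ K n m).intClosure)),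
      Order.height (⟨p, hp.1⟩ :
        PrimeSpectrum (MvPolynomial (Σ i : Fin n, Fin (m i)) K)) = 1) := by
  classical
  haveI hne : Nonempty (Σ i : Fin n, Fin (m i)) := ⟨⟨⟨0, hn⟩, ⟨0, hm _⟩⟩⟩
  letI : NormalizationMonoid (MvPolynomial (Σ i : Fin n, Fin (m i)) K) :=
    UniqueFactorizationMonoid.normalizationMonoid.toNormalizationMonoid
  letI : GCDMonoid (MvPolynomial (Σ i : Fin n, Fin (m i)) K) :=
    UniqueFactorizationMonoid.toGCDMonoid _
  haveI hic : IsIntegrallyClosed (MvPolynomial (Σ i : Fin n, Fin (m i)) K) := inferInstance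
  set a : MvPolynomial (Σ i : Fin n, Fin (m i)) K :=
    ∏ v : (Σ i : Fin n, Fin (m i)), X v with ha
  have ha0 : a ≠ 0 := Finset.prod_ne_zero_iff.mpr fun v _ => X_ne_zero v
  have hIc : (coverIdealSQ K n m).intClosure = Ideal.span {a} := by
    rw [auxCoverEq]
    exact auxIntClosure hic a ha0
  have hne_top : Ideal.span {a} ≠ ⊤ := by
    rw [Ne, Ideal.span_singleton_eq_top]
    intro hu
    obtain ⟨v⟩ := hne
    have hsplit := Finset.mul_prod_erase Finset.univ
      (fun v : (Σ i : Fin n, Fin (m i)) => (X v : MvPolynomial (Σ i : Fin n, Fin (m i)) K))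
      (Finset.mem_univ v)
    rw [ha, ← hsplit] at hu
    exact (auxPrimeX v).not_isUnit (isUnit_of_mul_isUnit_left hu)
  haveI : Nontrivial (MvPolynomial (Σ i : Fin n, Fin (m i)) K ⧸
      (coverIdealSQ K n m).intClosure) :=
    Ideal.Quotient.nontrivial_iff.mpr (by rw [hIc]; exact hne_top)
  constructor
  · exact associatedPrimes.nonempty _ _
  · intro p hp
    have hp' := hp
    rw [hIc] at hp'
    obtain ⟨v, hpv⟩ := auxAssoc p hp'
    subst hpv
    exact auxHeight (X v) (auxPrimeX v) (auxLtSpanX v) hp.1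
end
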